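/- arXiv:1705.10353 — 5 statements merged into one kernel-verified Lean document; each statement's English description precedes it below -/
import Mathlib

section
/- The number of circular area sequences of length n, i.e. sequences (a_1,...,a_n) of integers with 0 ≤ a_i ≤ n-1 for all i and a_i - 1 ≤ a_{i+1} for all i (indices mod n), equals (n+2)·C(2n-1, n-1) - 2^(2n-1). -/
namespace CircAux
open Finset
variable {L : ℕ}
def step (v : Fin L → Bool) (j : ℕ) : ℤ :=
  if h : j < L then (if v ⟨j, h⟩ then 1 else -1) else 1
def S (v : Fin L → Bool) (i : ℕ) : ℤ := ∑ j ∈ Finset.range i, step v j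
lemma S_succ (v : Fin L → Bool) (i : ℕ) : S v (i + 1) = S v i + step v i := by
  simp [S, Finset.sum_range_succ]
lemma step_abs (v : Fin L → Bool) (j : ℕ) : step v j = 1 ∨ step v j = -1 := by
  unfold step; split_ifs <;> simp
@[simp] lemma S_zero (v : Fin L → Bool) : S v 0 = 0 := by simp [S]
lemma ivt (v : Fin L → Bool) (t : ℤ) :
    ∀ d a, S v a ≤ t → t ≤ S v (a + d) → ∃ i, a ≤ i ∧ i ≤ a + d ∧ S v i = t := by
  intro d
  induction d with
  | zero => intro a h1 h2; exact ⟨a, le_refl _, by omega, le_antisymm h1 h2⟩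
  | succ d ih =>
    intro a h1 h2
    rcases eq_or_lt_of_le h1 with h | h
    · exact ⟨a, le_refl _, by omega, h⟩
    · have hs : S v (a + 1) ≤ t := by
        have := step_abs v a
        have := S_succ v a
        omega
      have he : a + 1 + d = a + (d+1) := by omega
      obtain ⟨i, hi1, hi2, hi3⟩ := ih (a + 1) hs (by rwa [he])
      exact ⟨i, by omega, by omega, hi3⟩
lemma ivt' (v : Fin L → Bool) (t : ℤ) (a b : ℕ) (hab : a ≤ b)
    (h1 : S v a ≤ t) (h2 : t ≤ S v b) : ∃ i, a ≤ i ∧ i ≤ b ∧ S v i = t := by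
  obtain ⟨d, rfl⟩ := Nat.exists_eq_add_of_le hab
  exact ivt v t d a h1 h2

def ones (v : Fin L → Bool) : ℕ := (univ.filter fun p => v p).card

lemma S_last (v : Fin L → Bool) : S v L = 2 * (ones v : ℤ) - L := by
  have h1 : S v L = ∑ p : Fin L, (if v p then (1:ℤ) else -1) := by
    rw [S, ← Fin.sum_univ_eq_sum_range]
    refine Finset.sum_congr rfl fun p _ => ?_
    simp [step, p.isLt]
  have h2 : ∀ p : Fin L, (if v p then (1:ℤ) else -1) = 2 * (if v p then 1 else 0) - 1 := by
    intro p; split_ifs <;> ring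
  rw [h1, Finset.sum_congr rfl fun p _ => h2 p, Finset.sum_sub_distrib, ← Finset.mul_sum,
    Finset.sum_boole]
  simp [ones]

-- max and min of the walk
def Mx (v : Fin L → Bool) : ℤ :=
  (((Finset.range (L+1)).image (S v)).max' (Finset.nonempty_range_add_one.image _))
def Mn (v : Fin L → Bool) : ℤ :=
  (((Finset.range (L+1)).image (S v)).min' (Finset.nonempty_range_add_one.image _))
lemma le_Mx (v : Fin L → Bool) {i : ℕ} (hi : i ≤ L) : S v i ≤ Mx v :=
  Finset.le_max' _ _ (Finset.mem_image.2 ⟨i, Finset.mem_range.2 (by omega), rfl⟩)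
lemma Mn_le (v : Fin L → Bool) {i : ℕ} (hi : i ≤ L) : Mn v ≤ S v i :=
  Finset.min'_le _ _ (Finset.mem_image.2 ⟨i, Finset.mem_range.2 (by omega), rfl⟩)
lemma exists_Mx (v : Fin L → Bool) : ∃ i, i ≤ L ∧ S v i = Mx v := by
  obtain ⟨i, hi, hSi⟩ := Finset.mem_image.1
    (Finset.max'_mem ((Finset.range (L+1)).image (S v)) (Finset.nonempty_range_add_one.image _))
  exact ⟨i, by simpa using Nat.lt_succ_iff.1 (Finset.mem_range.1 hi), hSi⟩
lemma exists_Mn (v : Fin L → Bool) : ∃ i, i ≤ L ∧ S v i = Mn v := by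
  obtain ⟨i, hi, hSi⟩ := Finset.mem_image.1
    (Finset.min'_mem ((Finset.range (L+1)).image (S v)) (Finset.nonempty_range_add_one.image _))
  exact ⟨i, by simpa using Nat.lt_succ_iff.1 (Finset.mem_range.1 hi), hSi⟩
lemma Mx_nonneg (v : Fin L → Bool) : 0 ≤ Mx v := by
  have := le_Mx v (Nat.zero_le L); simpa using this
lemma Mn_nonpos (v : Fin L → Bool) : Mn v ≤ 0 := by
  have := Mn_le v (Nat.zero_le L); simpa using this

lemma hit_iff (v : Fin L → Bool) (t : ℤ) (ht : 0 ≤ t) :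
    (∃ i, i ≤ L ∧ S v i = t) ↔ t ≤ Mx v := by
  constructor
  · rintro ⟨i, hi, rfl⟩; exact le_Mx v hi
  · intro h
    obtain ⟨i, hi, hSi⟩ := exists_Mx v
    obtain ⟨j, _, hj2, hj3⟩ := ivt' v t 0 i (Nat.zero_le i) (by simpa using ht) (by omega)
    exact ⟨j, by omega, hj3⟩

section Reflection
variable (t : ℤ)

/-- first hitting time of level `t` (junk 0 if never hit). -/
def tau (v : Fin L → Bool) : ℕ :=
  if h : (((Finset.range (L+1)).filter fun i => S v i = t)).Nonempty
  then (((Finset.range (L+1)).filter fun i => S v i = t)).min' h else 0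

variable {t}

lemma tau_spec {v : Fin L → Bool} (H : ∃ i, i ≤ L ∧ S v i = t) :
    S v (tau t v) = t ∧ tau t v ≤ L ∧ ∀ i < tau t v, S v i ≠ t := by
  obtain ⟨i0, hi0, hS0⟩ := H
  set s := ((Finset.range (L+1)).filter fun i => S v i = t) with hs
  have hne : s.Nonempty :=
    ⟨i0, Finset.mem_filter.2 ⟨Finset.mem_range.2 (by omega), hS0⟩⟩
  have h_eq : tau t v = s.min' hne := dif_pos hne
  have hmem := Finset.min'_mem s hne
  rw [Finset.mem_filter, Finset.mem_range] at hmem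
  rw [h_eq]
  refine ⟨hmem.2, by omega, fun i hi hit => ?_⟩
  have hge : s.min' hne ≤ i := Finset.min'_le s i (Finset.mem_filter.2 ⟨Finset.mem_range.2 (by omega), hit⟩)
  omega

lemma tau_unique {v : Fin L → Bool} {τ : ℕ} (h1 : S v τ = t) (h2 : τ ≤ L)
    (h3 : ∀ i < τ, S v i ≠ t) : tau t v = τ := by
  set s := ((Finset.range (L+1)).filter fun i => S v i = t) with hs
  have hne : s.Nonempty :=
    ⟨τ, Finset.mem_filter.2 ⟨Finset.mem_range.2 (by omega), h1⟩⟩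
  have h_eq : tau t v = s.min' hne := dif_pos hne
  have hmem := Finset.min'_mem s hne
  rw [Finset.mem_filter, Finset.mem_range] at hmem
  have hle : s.min' hne ≤ τ := Finset.min'_le s τ (Finset.mem_filter.2 ⟨Finset.mem_range.2 (by omega), h1⟩)
  rw [h_eq]
  rcases lt_or_eq_of_le hle with h | h
  · exact absurd hmem.2 (h3 _ h)
  · exact h

variable (t)

/-- reflect the word after the first hitting time of `t`. -/
def refl (v : Fin L → Bool) : Fin L → Bool :=
  fun p => if (p : ℕ) < tau t v then v p else !(v p)

variable {t}

lemma step_refl (v : Fin L → Bool) (j : ℕ) (hj : j < L) :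
    step (refl t v) j = if j < tau t v then step v j else - step v j := by
  simp only [step, refl, dif_pos hj]
  split_ifs <;> simp_all

lemma S_refl {v : Fin L → Bool} (H : ∃ i, i ≤ L ∧ S v i = t) :
    ∀ i, i ≤ L → S (refl t v) i = if i ≤ tau t v then S v i else 2*t - S v i := by
  obtain ⟨hτ1, hτ2, hτ3⟩ := tau_spec H
  intro i
  induction i with
  | zero => intro _; simp [Nat.zero_le]
  | succ i ih =>
    intro hi
    have hiL : i < L := by omega
    rw [S_succ, S_succ, ih (by omega), step_refl v i hiL]
    rcases Nat.lt_or_ge i (tau t v) with h | h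
    · rw [if_pos (Nat.le_of_lt h), if_pos h, if_pos (show i+1 ≤ tau t v by omega)]
    · rw [if_neg (show ¬ i < tau t v by omega), if_neg (show ¬ i + 1 ≤ tau t v by omega)]
      rcases Nat.eq_or_lt_of_le h with h2 | h2
      · rw [if_pos (show i ≤ tau t v by omega), ← h2, hτ1]; ring
      · rw [if_neg (show ¬ i ≤ tau t v by omega)]; ring

lemma ones_refl {v : Fin L → Bool} (H : ∃ i, i ≤ L ∧ S v i = t) :
    2 * (ones (refl t v) : ℤ) - L = 2*t - (2 * (ones v : ℤ) - L) := by
  obtain ⟨hτ1, hτ2, hτ3⟩ := tau_spec H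
  have h := S_refl H L (le_refl L)
  rw [S_last, S_last] at h
  split_ifs at h with hc
  · have he : tau t v = L := by omega
    rw [he] at hτ1
    rw [S_last] at hτ1
    omega
  · omega

lemma tau_refl {v : Fin L → Bool} (H : ∃ i, i ≤ L ∧ S v i = t) :
    tau t (refl t v) = tau t v := by
  obtain ⟨hτ1, hτ2, hτ3⟩ := tau_spec H
  refine tau_unique ?_ hτ2 ?_
  · rw [S_refl H _ hτ2, if_pos (le_refl _)]; exact hτ1
  · intro i hi
    rw [S_refl H _ (by omega), if_pos (by omega)]
    exact hτ3 i hi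

lemma refl_refl {v : Fin L → Bool} (H : ∃ i, i ≤ L ∧ S v i = t) :
    refl t (refl t v) = v := by
  funext p
  simp only [refl, tau_refl H]
  split_ifs <;> simp

lemma refl_hit {v : Fin L → Bool} (H : ∃ i, i ≤ L ∧ S v i = t) :
    ∃ i, i ≤ L ∧ S (refl t v) i = t := by
  obtain ⟨hτ1, hτ2, hτ3⟩ := tau_spec H
  exact ⟨tau t v, hτ2, by rw [S_refl H _ hτ2, if_pos (le_refl _)]; exact hτ1⟩

lemma reflect_card {k k' : ℕ} {t : ℤ} (ht : 1 ≤ t) (htk : 2*(k:ℤ) - L ≤ t)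
    (hk' : (k' : ℤ) = t + L - k) :
    (univ.filter fun v : Fin L → Bool => ones v = k ∧ t ≤ Mx v).card
      = (univ.filter fun v : Fin L → Bool => ones v = k').card := by
  have hmemA : ∀ v : Fin L → Bool, v ∈ (univ.filter fun v => ones v = k ∧ t ≤ Mx v) →
      ∃ i, i ≤ L ∧ S v i = t := by
    intro v hv
    rw [Finset.mem_filter] at hv
    exact (hit_iff v t (by omega)).2 hv.2.2
  have hmemB : ∀ v : Fin L → Bool, v ∈ (univ.filter fun v => ones v = k') →
      ∃ i, i ≤ L ∧ S v i = t := by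
    intro v hv
    rw [Finset.mem_filter] at hv
    have hlast : S v L = 2 * (k' : ℤ) - L := by rw [S_last, hv.2]
    obtain ⟨i, _, hi2, hi3⟩ := ivt' v t 0 L (Nat.zero_le L) (by rw [S_zero]; omega)
      (by rw [hlast]; omega)
    exact ⟨i, hi2, hi3⟩
  refine Finset.card_bij' (fun v _ => refl t v) (fun v _ => refl t v) ?_ ?_ ?_ ?_
  · intro v hv
    have H := hmemA v hv
    rw [Finset.mem_filter] at hv ⊢
    have h1 := ones_refl H
    refine ⟨Finset.mem_univ _, ?_⟩
    have : (ones (refl t v) : ℤ) = (k' : ℤ) := by rw [hk']; omega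
    exact_mod_cast this
  · intro v hv
    have H := hmemB v hv
    rw [Finset.mem_filter] at hv ⊢
    have h1 := ones_refl H
    refine ⟨Finset.mem_univ _, ?_, ?_⟩
    · have : (ones (refl t v) : ℤ) = (k : ℤ) := by rw [hv.2] at h1; omega
      exact_mod_cast this
    · obtain ⟨i, hi, hSi⟩ := refl_hit H
      exact (hit_iff _ t (by omega)).1 ⟨i, hi, hSi⟩
  · intro v hv; exact refl_refl (hmemA v hv)
  · intro v hv; exact refl_refl (hmemB v hv)

end Reflection

section Counts
variable {v : Fin L → Bool}

lemma rise_le (v : Fin L → Bool) (a : ℕ) :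
    ∀ d, S v (a + d) - S v a ≤ ((Finset.Ico a (a + d)).filter fun j => step v j = 1).card := by
  intro d
  induction d with
  | zero => simp
  | succ d ih =>
    have h1 : S v (a + (d+1)) = S v (a + d) + step v (a + d) := by
      rw [← Nat.add_assoc]; exact S_succ v (a+d)
    have h2 : Finset.Ico a (a + (d+1)) = insert (a+d) (Finset.Ico a (a + d)) := by
      rw [← Nat.add_assoc, Nat.Ico_succ_right_eq_insert_Ico (by omega)]
    rw [h1, h2, Finset.filter_insert]
    rcases step_abs v (a+d) with h | h
    · rw [if_pos h, Finset.card_insert_of_notMem (by simp)]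
      push_cast; omega
    · rw [if_neg (by omega)]
      omega

lemma fall_le (v : Fin L → Bool) (a : ℕ) :
    ∀ d, S v a - S v (a + d) ≤ ((Finset.Ico a (a + d)).filter fun j => step v j = -1).card := by
  intro d
  induction d with
  | zero => simp
  | succ d ih =>
    have h1 : S v (a + (d+1)) = S v (a + d) + step v (a + d) := by
      rw [← Nat.add_assoc]; exact S_succ v (a+d)
    have h2 : Finset.Ico a (a + (d+1)) = insert (a+d) (Finset.Ico a (a + d)) := by
      rw [← Nat.add_assoc, Nat.Ico_succ_right_eq_insert_Ico (by omega)]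
    rw [h1, h2, Finset.filter_insert]
    rcases step_abs v (a+d) with h | h
    · rw [if_neg (by omega)]; omega
    · rw [if_pos h, Finset.card_insert_of_notMem (by simp)]
      push_cast; omega

lemma count_ones_range (v : Fin L → Bool) :
    ((Finset.range L).filter fun j => step v j = 1).card = ones v := by
  rw [ones]
  refine Finset.card_bij (fun j hj => ⟨j, Finset.mem_range.1 (Finset.mem_filter.1 hj).1⟩)
    ?_ ?_ ?_
  · intro j hj
    have hst := (Finset.mem_filter.1 hj).2
    have hjL := Finset.mem_range.1 (Finset.mem_filter.1 hj).1
    rw [step, dif_pos hjL] at hst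
    simp only [Finset.mem_filter, Finset.mem_univ, true_and]
    split_ifs at hst with h
    exact h
  · intro a ha b hb h
    exact congrArg Fin.val h
  · intro p hp
    refine ⟨p.val, Finset.mem_filter.2 ⟨Finset.mem_range.2 p.isLt, ?_⟩, ?_⟩
    · rw [step, dif_pos p.isLt]
      have : v p := (Finset.mem_filter.1 hp).2
      simp [Fin.eta, this]
    · simp [Fin.eta]

lemma count_neg_range (v : Fin L → Bool) :
    ((Finset.range L).filter fun j => step v j = -1).card = L - ones v := by
  have hpart := Finset.card_filter_add_card_filter_not
    (s := Finset.range L) (p := fun j => step v j = 1)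
  have hsame : (Finset.range L).filter (fun j => ¬ step v j = 1)
      = (Finset.range L).filter (fun j => step v j = -1) := by
    refine Finset.filter_congr fun j hj => ?_
    rcases step_abs v j with h | h <;> simp [h]
  rw [hsame] at hpart
  rw [count_ones_range] at hpart
  have : ones v ≤ L := by
    rw [ones]
    calc (univ.filter fun p : Fin L => v p).card ≤ (univ : Finset (Fin L)).card :=
      Finset.card_le_card (Finset.filter_subset _ _)
    _ = L := by simp
  simp at hpart
  omega

lemma rise_le_total (v : Fin L → Bool) {a b : ℕ} (hab : a ≤ b) (hb : b ≤ L) :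
    S v b - S v a ≤ (ones v : ℤ) := by
  obtain ⟨d, rfl⟩ := Nat.exists_eq_add_of_le hab
  calc S v (a+d) - S v a ≤ ((Finset.Ico a (a + d)).filter fun j => step v j = 1).card :=
        rise_le v a d
    _ ≤ (((Finset.range L).filter fun j => step v j = 1).card : ℤ) := by
        have : (Finset.Ico a (a+d)).filter (fun j => step v j = 1)
            ⊆ (Finset.range L).filter (fun j => step v j = 1) := by
          refine Finset.filter_subset_filter _ ?_
          intro x hx
          rw [Finset.mem_Ico] at hx
          rw [Finset.mem_range]
          omega
        exact_mod_cast Finset.card_le_card this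
    _ = (ones v : ℤ) := by rw [count_ones_range]

lemma fall_le_total (v : Fin L → Bool) {a b : ℕ} (hab : a ≤ b) (hb : b ≤ L) :
    S v a - S v b ≤ (L : ℤ) - (ones v : ℤ) := by
  obtain ⟨d, rfl⟩ := Nat.exists_eq_add_of_le hab
  have hle : ones v ≤ L := by
    rw [ones]
    calc (univ.filter fun p : Fin L => v p).card ≤ (univ : Finset (Fin L)).card :=
      Finset.card_le_card (Finset.filter_subset _ _)
    _ = L := by simp
  calc S v a - S v (a+d) ≤ ((Finset.Ico a (a + d)).filter fun j => step v j = -1).card :=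
        fall_le v a d
    _ ≤ (((Finset.range L).filter fun j => step v j = -1).card : ℤ) := by
        have : (Finset.Ico a (a+d)).filter (fun j => step v j = -1)
            ⊆ (Finset.range L).filter (fun j => step v j = -1) := by
          refine Finset.filter_subset_filter _ ?_
          intro x hx
          rw [Finset.mem_Ico] at hx
          rw [Finset.mem_range]
          omega
        exact_mod_cast Finset.card_le_card this
    _ ≤ (L : ℤ) - (ones v : ℤ) := by rw [count_neg_range]; push_cast [hle]; omega

lemma Mx_le_ones (v : Fin L → Bool) : Mx v ≤ (ones v : ℤ) := by
  obtain ⟨i, hi, hSi⟩ := exists_Mx v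
  have := rise_le_total v (Nat.zero_le i) hi
  rw [S_zero] at this
  omega

lemma neg_Mn_le (v : Fin L → Bool) : - Mn v ≤ (L : ℤ) - (ones v : ℤ) := by
  obtain ⟨i, hi, hSi⟩ := exists_Mn v
  have := fall_le_total v (Nat.zero_le i) hi
  rw [S_zero] at this
  omega

lemma Mx_sub_Mn_le (v : Fin L → Bool) {c : ℤ} (h1 : (ones v : ℤ) ≤ c)
    (h2 : (L : ℤ) - (ones v : ℤ) ≤ c) : Mx v - Mn v ≤ c := by
  obtain ⟨i, hi, hSi⟩ := exists_Mx v
  obtain ⟨j, hj, hSj⟩ := exists_Mn v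
  rcases Nat.le_total i j with h | h
  · have := fall_le_total v h hj
    omega
  · have := rise_le_total v h hi
    omega

lemma card_ones_eq_choose (L m : ℕ) :
    ((univ : Finset (Fin L → Bool)).filter fun v => ones v = m).card = L.choose m := by
  have h : ((univ : Finset (Fin L)).powersetCard m).card = L.choose m := by
    rw [Finset.card_powersetCard]; simp
  rw [← h]
  refine Finset.card_bij (fun v _ => univ.filter fun p => v p) ?_ ?_ ?_
  · intro v hv
    rw [Finset.mem_filter] at hv
    exact Finset.mem_powersetCard.2 ⟨Finset.subset_univ _, hv.2⟩
  · intro a ha b hb h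
    funext p
    have := Finset.ext_iff.1 h p
    simp only [Finset.mem_filter, Finset.mem_univ, true_and] at this
    by_cases hap : a p <;> by_cases hbp : b p <;> simp_all
  · intro s hs
    refine ⟨fun p => decide (p ∈ s), Finset.mem_filter.2 ⟨Finset.mem_univ _, ?_⟩, ?_⟩
    · rw [ones]
      rw [Finset.mem_powersetCard] at hs
      rw [← hs.2]
      congr 1
      ext p
      simp
    · ext p
      simp

end Counts

section Zeros
variable {L : ℕ}

/-- set of zero positions. -/
def zer (v : Fin L → Bool) : Finset (Fin L) := univ.filter fun p => ¬ v p

lemma ones_add_zer (v : Fin L → Bool) : ones v + (zer v).card = L := by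
  have hpart := Finset.card_filter_add_card_filter_not
    (s := (univ : Finset (Fin L))) (p := fun p => v p = true)
  simp only [Finset.card_univ, Fintype.card_fin] at hpart
  rw [ones, zer]
  simpa using hpart

/-- the `j`-th smallest zero position (junk 0 out of range). -/
def nth (v : Fin L → Bool) (j : ℕ) : ℕ :=
  ((((zer v).sort (· ≤ ·)).map Fin.val).getD j 0)

lemma nth_eq {v : Fin L → Bool} {m : ℕ} (h : (zer v).card = m) (j : Fin m) :
    nth v j = ((zer v).orderEmbOfFin h j : ℕ) := by
  rw [nth, Finset.orderEmbOfFin_apply]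
  have hlen : (((zer v).sort (· ≤ ·)).map Fin.val).length = m := by
    rw [List.length_map, Finset.length_sort, h]
  rw [List.getD_eq_getElem _ _ (by rw [hlen]; exact j.isLt)]
  simp

lemma card_filter_le_orderEmb {α : Type*} [LinearOrder α] (s : Finset α) {m : ℕ}
    (h : s.card = m) (j : Fin m) :
    (s.filter fun x => x ≤ s.orderEmbOfFin h j).card = (j : ℕ) + 1 := by
  classical
  have himg : s.filter (fun x => x ≤ s.orderEmbOfFin h j)
      = (Finset.Iic j).image (fun i => s.orderEmbOfFin h i) := by
    ext x
    simp only [Finset.mem_filter, Finset.mem_image, Finset.mem_Iic]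
    constructor
    · rintro ⟨hx, hle⟩
      have : x ∈ Set.range (s.orderEmbOfFin h) := by
        rw [Finset.range_orderEmbOfFin]; exact hx
      obtain ⟨i, rfl⟩ := this
      exact ⟨i, (OrderEmbedding.le_iff_le _).1 hle, rfl⟩
    · rintro ⟨i, hij, rfl⟩
      exact ⟨Finset.orderEmbOfFin_mem s h i, (OrderEmbedding.le_iff_le _).2 hij⟩
  rw [himg, Finset.card_image_of_injective _ (s.orderEmbOfFin h).injective, Fin.card_Iic]

/-- prefix-sum formula in terms of zero counts. -/
lemma S_eq_count (v : Fin L → Bool) :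
    ∀ i, i ≤ L → S v i = (i : ℤ) - 2 * ((zer v).filter fun p : Fin L => (p : ℕ) < i).card := by
  intro i
  induction i with
  | zero => intro _; simp
  | succ i ih =>
    intro hi
    have hiL : i < L := by omega
    have hset : ((zer v).filter fun p : Fin L => (p : ℕ) < i + 1)
        = if v ⟨i, hiL⟩ then ((zer v).filter fun p : Fin L => (p : ℕ) < i)
          else insert ⟨i, hiL⟩ ((zer v).filter fun p : Fin L => (p : ℕ) < i) := by
      split_ifs with hv
      · ext p
        simp only [Finset.mem_filter, zer, Finset.mem_univ, true_and]
        constructor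
        · rintro ⟨h1, h2⟩
          refine ⟨h1, ?_⟩
          rcases Nat.lt_or_ge (p : ℕ) i with hh | hh
          · exact hh
          · exfalso
            have : p = ⟨i, hiL⟩ := by
              apply Fin.ext; simp; omega
            rw [this] at h1; exact h1 hv
        · rintro ⟨h1, h2⟩; exact ⟨h1, by omega⟩
      · ext p
        simp only [Finset.mem_filter, Finset.mem_insert, zer, Finset.mem_univ, true_and]
        constructor
        · rintro ⟨h1, h2⟩
          rcases Nat.lt_or_ge (p : ℕ) i with hh | hh
          · exact Or.inr ⟨h1, hh⟩
          · left; apply Fin.ext; simp; omega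
        · rintro (rfl | ⟨h1, h2⟩)
          · exact ⟨hv, by simp⟩
          · exact ⟨h1, by omega⟩
    rw [S_succ, ih (by omega), hset]
    rcases Bool.eq_false_or_eq_true (v ⟨i, hiL⟩) with hv | hv
    · rw [if_pos (by simp [hv])]
      have hstep : step v i = 1 := by rw [step, dif_pos hiL, hv]; norm_num
      rw [hstep]
      push_cast
      ring
    · rw [if_neg (by simp [hv]), Finset.card_insert_of_notMem (by simp)]
      have hstep : step v i = -1 := by rw [step, dif_pos hiL, hv]; norm_num
      rw [hstep]
      push_cast
      ring

end Zeros

section Delta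
variable (n : ℕ) [NeZero n]

local notation "L" => 2*n - 1

def delta (v : Fin (2*n-1) → Bool) (j : ℕ) : ℤ :=
  if j = 0 then 0 else (nth v (j-1) : ℤ) - 2*(j-1) - 1

def Dmax (v : Fin (2*n-1) → Bool) : ℤ :=
  (((Finset.range n).image (delta n v)).max'
    ((Finset.nonempty_range_iff.2 (NeZero.ne n)).image _))

def Dmin (v : Fin (2*n-1) → Bool) : ℤ :=
  (((Finset.range n).image (delta n v)).min'
    ((Finset.nonempty_range_iff.2 (NeZero.ne n)).image _))

variable {n}

lemma hn_pos : 0 < n := Nat.pos_of_ne_zero (NeZero.ne n)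

lemma hzer {v : Fin (2*n-1) → Bool} (hv : ones v = n) : (zer v).card = n - 1 := by
  have h := ones_add_zer v
  have := hn_pos (n := n)
  omega

lemma delta_le_Dmax {v : Fin (2*n-1) → Bool} {j : ℕ} (hj : j < n) :
    delta n v j ≤ Dmax n v :=
  Finset.le_max' _ _ (Finset.mem_image.2 ⟨j, Finset.mem_range.2 hj, rfl⟩)

lemma Dmin_le_delta {v : Fin (2*n-1) → Bool} {j : ℕ} (hj : j < n) :
    Dmin n v ≤ delta n v j :=
  Finset.min'_le _ _ (Finset.mem_image.2 ⟨j, Finset.mem_range.2 hj, rfl⟩)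

lemma exists_Dmax (v : Fin (2*n-1) → Bool) : ∃ j, j < n ∧ delta n v j = Dmax n v := by
  obtain ⟨j, hj, hd⟩ := Finset.mem_image.1 (Finset.max'_mem ((Finset.range n).image (delta n v))
    ((Finset.nonempty_range_iff.2 (NeZero.ne n)).image _))
  exact ⟨j, Finset.mem_range.1 hj, hd⟩

lemma exists_Dmin (v : Fin (2*n-1) → Bool) : ∃ j, j < n ∧ delta n v j = Dmin n v := by
  obtain ⟨j, hj, hd⟩ := Finset.mem_image.1 (Finset.min'_mem ((Finset.range n).image (delta n v))
    ((Finset.nonempty_range_iff.2 (NeZero.ne n)).image _))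
  exact ⟨j, Finset.mem_range.1 hj, hd⟩

lemma nth_lt {v : Fin (2*n-1) → Bool} (hv : ones v = n) {j : ℕ} (hj : j < n - 1) :
    nth v j < L := by
  rw [nth_eq (hzer hv) ⟨j, hj⟩]
  exact ((zer v).orderEmbOfFin (hzer hv) ⟨j, hj⟩).isLt

lemma nth_strictMono {v : Fin (2*n-1) → Bool} (hv : ones v = n) {j j' : ℕ}
    (hjj : j < j') (hj' : j' < n - 1) : nth v j < nth v j' := by
  rw [nth_eq (hzer hv) ⟨j, by omega⟩, nth_eq (hzer hv) ⟨j', hj'⟩]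
  have := ((zer v).orderEmbOfFin (hzer hv)).strictMono
    (show (⟨j, by omega⟩ : Fin (n-1)) < ⟨j', hj'⟩ from hjj)
  exact this

lemma nth_mem_zer {v : Fin (2*n-1) → Bool} (hv : ones v = n) {j : ℕ} (hj : j < n - 1) :
    ∃ hlt : nth v j < L, v ⟨nth v j, hlt⟩ = false := by
  refine ⟨nth_lt hv hj, ?_⟩
  have hmem : (zer v).orderEmbOfFin (hzer hv) ⟨j, hj⟩ ∈ (univ.filter fun p => ¬ v p) :=
    Finset.orderEmbOfFin_mem (zer v) (hzer hv) ⟨j, hj⟩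
  rw [Finset.mem_filter] at hmem
  have heq : (⟨nth v j, nth_lt hv hj⟩ : Fin L) = (zer v).orderEmbOfFin (hzer hv) ⟨j, hj⟩ := by
    apply Fin.ext
    simp [nth_eq (hzer hv) ⟨j, hj⟩]
  rw [heq]
  simpa using hmem.2

lemma step_at_nth {v : Fin (2*n-1) → Bool} (hv : ones v = n) {j : ℕ} (hj : j < n - 1) :
    step v (nth v j) = -1 := by
  obtain ⟨hlt, hfalse⟩ := nth_mem_zer hv hj
  rw [step, dif_pos hlt, hfalse]
  norm_num

lemma delta_eq_S {v : Fin (2*n-1) → Bool} (hv : ones v = n) {j : ℕ} (hj : j < n - 1) :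
    delta n v (j+1) = S v (nth v j + 1) := by
  have hlt := nth_lt hv hj
  have hcount : ((zer v).filter fun p : Fin L => (p : ℕ) < nth v j + 1).card = j + 1 := by
    have heq : ((zer v).filter fun p : Fin L => (p : ℕ) < nth v j + 1)
        = ((zer v).filter fun p => p ≤ (zer v).orderEmbOfFin (hzer hv) ⟨j, hj⟩) := by
      refine Finset.filter_congr fun p _ => ?_
      have hne : nth v j = ((zer v).orderEmbOfFin (hzer hv) ⟨j, hj⟩ : ℕ) :=
        nth_eq (hzer hv) ⟨j, hj⟩
      rw [Fin.le_def]
      constructor <;> intro h <;> omega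
    rw [heq, card_filter_le_orderEmb]
  rw [S_eq_count v (nth v j + 1) (by omega), hcount, delta]
  simp only [Nat.add_sub_cancel, if_neg (Nat.succ_ne_zero j)]
  push_cast
  ring

lemma S_last_one {v : Fin (2*n-1) → Bool} (hv : ones v = n) : S v L = 1 := by
  rw [S_last, hv]
  have := hn_pos (n := n)
  push_cast [Nat.cast_sub (by omega : 1 ≤ 2*n)]
  ring

lemma Mx_ge_one {v : Fin (2*n-1) → Bool} (hv : ones v = n) : 1 ≤ Mx v := by
  have := le_Mx v (le_refl L)
  rw [S_last_one hv] at this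
  exact this

lemma Mx_eq_Dmax {v : Fin (2*n-1) → Bool} (hv : ones v = n) : Mx v = Dmax n v + 1 := by
  have h1 : Dmax n v ≤ Mx v - 1 := by
    obtain ⟨j, hj, hd⟩ := exists_Dmax (n := n) v
    rw [← hd]
    rcases Nat.eq_zero_or_pos j with rfl | hjpos
    · have h0 := Mx_ge_one hv
      have hd0 : delta n v 0 = 0 := by simp [delta]
      omega
    · have hj' : j - 1 < n - 1 := by omega
      have hjj : j = (j - 1) + 1 := by omega
      rw [hjj, delta_eq_S hv hj']
      have hstep := step_at_nth hv hj'
      have hSS := S_succ v (nth v (j-1))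
      have hle := le_Mx v (show nth v (j-1) ≤ L by have := nth_lt hv hj'; omega)
      omega
  have h2 : Mx v - 1 ≤ Dmax n v := by
    set A := (Finset.range (L+1)).filter (fun i => S v i = Mx v) with hA
    have hAne : A.Nonempty := by
      obtain ⟨i, hi, hSi⟩ := exists_Mx v
      exact ⟨i, Finset.mem_filter.2 ⟨Finset.mem_range.2 (by omega), hSi⟩⟩
    set i := A.max' hAne with hi
    have hiA := Finset.max'_mem A hAne
    rw [Finset.mem_filter, Finset.mem_range] at hiA
    rw [← hi] at hiA
    rcases Nat.lt_or_ge i L with hiL | hiL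
    · have hnotA : i + 1 ∉ A := fun hmem => by
        have := Finset.le_max' A (i+1) hmem
        omega
      have hSne : S v (i+1) ≠ Mx v := fun hc =>
        hnotA (Finset.mem_filter.2 ⟨Finset.mem_range.2 (by omega), hc⟩)
      have hSle : S v (i+1) ≤ Mx v := le_Mx v (by omega)
      have hstep := S_succ v i
      have habs := step_abs v i
      have hstepneg : step v i = -1 := by
        rcases habs with h | h
        · exfalso; omega
        · exact h
      have hvfalse : v ⟨i, hiL⟩ = false := by
        by_contra hc
        rw [step, dif_pos hiL] at hstepneg
        rw [Bool.not_eq_false] at hc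
        rw [hc] at hstepneg
        norm_num at hstepneg
      have hzmem : (⟨i, hiL⟩ : Fin L) ∈ zer v := by
        simp only [zer, Finset.mem_filter]
        simp [hvfalse]
      have : (⟨i, hiL⟩ : Fin L) ∈ Set.range ((zer v).orderEmbOfFin (hzer hv)) := by
        rw [Finset.range_orderEmbOfFin]; exact hzmem
      obtain ⟨jf, hjf⟩ := this
      have hnth : nth v jf = i := by
        rw [nth_eq (hzer hv) jf, hjf]
      have hdelta := delta_eq_S hv (show (jf : ℕ) < n - 1 from jf.isLt)
      rw [hnth] at hdelta
      have hfin : S v (i+1) = Mx v - 1 := by omega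
      rw [hfin] at hdelta
      have := delta_le_Dmax (v := v) (show (jf : ℕ) + 1 < n by have := jf.isLt; omega)
      omega
    · have hieq : i = L := by omega
      have : Mx v = 1 := by rw [← hiA.2, hieq, S_last_one hv]
      have hd0 : delta n v 0 = 0 := by simp [delta]
      have := delta_le_Dmax (v := v) (show 0 < n from hn_pos)
      omega
  omega

lemma Mn_eq_Dmin {v : Fin (2*n-1) → Bool} (hv : ones v = n) : Mn v = Dmin n v := by
  have h1 : Mn v ≤ Dmin n v := by
    obtain ⟨j, hj, hd⟩ := exists_Dmin (n := n) v
    rw [← hd]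
    rcases Nat.eq_zero_or_pos j with rfl | hjpos
    · have hd0 : delta n v 0 = 0 := by simp [delta]
      have hm := Mn_le v (Nat.zero_le L)
      rw [S_zero] at hm
      omega
    · have hj' : j - 1 < n - 1 := by omega
      have hjj : j = (j - 1) + 1 := by omega
      rw [hjj, delta_eq_S hv hj']
      exact Mn_le v (show nth v (j-1) + 1 ≤ L by have := nth_lt hv hj'; omega)
  have h2 : Dmin n v ≤ Mn v := by
    set A := (Finset.range (L+1)).filter (fun i => S v i = Mn v) with hA
    have hAne : A.Nonempty := by
      obtain ⟨i, hi, hSi⟩ := exists_Mn v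
      exact ⟨i, Finset.mem_filter.2 ⟨Finset.mem_range.2 (by omega), hSi⟩⟩
    set i := A.min' hAne with hi
    have hiA := Finset.min'_mem A hAne
    rw [Finset.mem_filter, Finset.mem_range] at hiA
    rw [← hi] at hiA
    rcases Nat.eq_zero_or_pos i with hi0 | hipos
    · have hmn : Mn v = 0 := by rw [← hiA.2, hi0]; simp
      have hd0 : delta n v 0 = 0 := by simp [delta]
      have := Dmin_le_delta (v := v) (show 0 < n from hn_pos)
      omega
    · have hii' : i = (i - 1) + 1 := by omega
      set i' := i - 1 with hi'def
      rw [hii'] at hiA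
      have hnotA : i' ∉ A := fun hmem => by
        have := Finset.min'_le A i' hmem
        omega
      have hSne : S v i' ≠ Mn v := fun hc =>
        hnotA (Finset.mem_filter.2 ⟨Finset.mem_range.2 (by omega), hc⟩)
      have hSge : Mn v ≤ S v i' := Mn_le v (by omega)
      have hstep := S_succ v i'
      have habs := step_abs v i'
      have hi'L : i' < L := by omega
      have hstepneg : step v i' = -1 := by
        rcases habs with h | h
        · exfalso; apply hSne; omega
        · exact h
      have hvfalse : v ⟨i', hi'L⟩ = false := by
        by_contra hc
        rw [step, dif_pos hi'L] at hstepneg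
        rw [Bool.not_eq_false] at hc
        rw [hc] at hstepneg
        norm_num at hstepneg
      have hzmem : (⟨i', hi'L⟩ : Fin L) ∈ zer v := by
        simp only [zer, Finset.mem_filter]
        simp [hvfalse]
      have : (⟨i', hi'L⟩ : Fin L) ∈ Set.range ((zer v).orderEmbOfFin (hzer hv)) := by
        rw [Finset.range_orderEmbOfFin]; exact hzmem
      obtain ⟨jf, hjf⟩ := this
      have hnth : nth v jf = i' := by
        rw [nth_eq (hzer hv) jf, hjf]
      have hdelta := delta_eq_S hv (show (jf : ℕ) < n - 1 from jf.isLt)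
      rw [hnth, hiA.2] at hdelta
      have := Dmin_le_delta (v := v) (show (jf : ℕ) + 1 < n by have := jf.isLt; omega)
      omega
  omega

end Delta

section Front
variable (n : ℕ) [NeZero n]
open Fin.NatCast

local notation "L" => 2*n - 1

/-- positions of zeros determined by a circular sequence. -/
def qq (a : Fin n → Fin n) (j : ℕ) : ℤ :=
  ((a ((j+1 : ℕ) : Fin n)) : ℤ) - ((a 0) : ℤ) + 2*j + 1

/-- the word associated to a circular sequence. -/
def Phi (a : Fin n → Fin n) : Fin L → Bool :=
  fun p => decide (∀ j < n - 1, ((p : ℕ) : ℤ) ≠ qq n a j)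

def Good : Finset (Fin n → Fin n) :=
  univ.filter (fun a => ∀ i : Fin n, (a i : ℤ) - 1 ≤ (a (i + 1) : ℤ))

variable {n}

lemma mem_good {a : Fin n → Fin n} :
    a ∈ Good n ↔ ∀ i : Fin n, (a i : ℤ) - 1 ≤ (a (i + 1) : ℤ) := by
  simp [Good]

lemma cast_succ_fin (j : ℕ) : ((j+1 : ℕ) : Fin n) = ((j : ℕ) : Fin n) + 1 := by
  push_cast
  ring

lemma good_step {a : Fin n → Fin n} (ha : a ∈ Good n) (j : ℕ) :
    ((a ((j : ℕ) : Fin n)) : ℤ) - 1 ≤ ((a ((j+1 : ℕ) : Fin n)) : ℤ) := by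
  rw [cast_succ_fin]
  exact (mem_good.1 ha) _

lemma qq_succ_ge {a : Fin n → Fin n} (ha : a ∈ Good n) (j : ℕ) :
    qq n a j + 1 ≤ qq n a (j+1) := by
  have h := good_step ha (j+1)
  rw [qq, qq]
  omega

lemma qq_zero_nonneg {a : Fin n → Fin n} (ha : a ∈ Good n) : 0 ≤ qq n a 0 := by
  have h := good_step ha 0
  rw [qq]
  norm_num at h ⊢
  omega

lemma qq_mono {a : Fin n → Fin n} (ha : a ∈ Good n) :
    ∀ d j, qq n a j + d ≤ qq n a (j + d) := by
  intro d
  induction d with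
  | zero => intro j; simp
  | succ d ih =>
    intro j
    have h1 := ih j
    have h2 := qq_succ_ge ha (j + d)
    push_cast
    rw [show j + (d+1) = (j + d) + 1 by omega]
    push_cast at h1
    omega

lemma qq_nonneg {a : Fin n → Fin n} (ha : a ∈ Good n) (j : ℕ) : (j : ℤ) ≤ qq n a j := by
  have h1 := qq_zero_nonneg ha
  have h2 := qq_mono ha j 0
  rw [Nat.zero_add] at h2
  omega

lemma qq_le {a : Fin n → Fin n} (ha : a ∈ Good n) {j : ℕ} (hj : j < n - 1) :
    qq n a j < (L : ℤ) := by
  have hn2 : 2 ≤ n := by omega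
  -- bound at the top index n-2
  have htop : qq n a (n-2) ≤ 2*(n:ℤ) - 2 := by
    have hwrap : ((a ((n-1 : ℕ) : Fin n)) : ℤ) - 1 ≤ ((a 0) : ℤ) := by
      have h := good_step ha (n-1)
      rw [show (n-1) + 1 = n by omega] at h
      rw [show ((n : ℕ) : Fin n) = 0 from Fin.natCast_self n] at h
      exact h
    rw [qq, show (n-2) + 1 = n - 1 by omega]
    omega
  have hmono := qq_mono ha ((n-2) - j) j
  rw [show j + ((n-2) - j) = n - 2 by omega] at hmono
  omega

lemma Phi_false_iff {a : Fin n → Fin n} (p : Fin L) :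
    Phi n a p = false ↔ ∃ j < n - 1, ((p : ℕ) : ℤ) = qq n a j := by
  rw [Phi]
  simp

lemma mem_zer_iff {v : Fin L → Bool} {p : Fin L} : p ∈ zer v ↔ v p = false := by
  simp [zer]

/-- the increasing enumeration of zeros of `Phi a`. -/
lemma zer_Phi_eq {a : Fin n → Fin n} (ha : a ∈ Good n) :
    ∃ f : Fin (n-1) → Fin L, StrictMono f ∧ (∀ jf : Fin (n-1), ((f jf : ℕ) : ℤ) = qq n a jf)
      ∧ zer (Phi n a) = Finset.image f univ := by
  have hbound : ∀ jf : Fin (n-1), (qq n a (jf : ℕ)).toNat < L := by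
    intro jf
    have h1 := qq_nonneg ha (jf : ℕ)
    have h2 := qq_le ha jf.isLt
    omega
  refine ⟨fun jf => ⟨(qq n a (jf : ℕ)).toNat, hbound jf⟩, ?_, ?_, ?_⟩
  · intro j j' hjj
    have h1 := qq_mono ha ((j' : ℕ) - (j : ℕ)) (j : ℕ)
    rw [show (j : ℕ) + ((j' : ℕ) - (j : ℕ)) = (j' : ℕ) by
      have := hjj; rw [Fin.lt_def] at this; omega] at h1
    have h2 := qq_nonneg ha (j : ℕ)
    rw [Fin.lt_def] at hjj ⊢
    simp only
    have : ((j' : ℕ) - (j : ℕ) : ℕ) ≥ 1 := by omega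
    have hc : (((j' : ℕ) - (j : ℕ) : ℕ) : ℤ) ≥ 1 := by exact_mod_cast this
    omega
  · intro jf
    have h1 := qq_nonneg ha (jf : ℕ)
    simp only
    omega
  · ext p
    rw [mem_zer_iff, Phi_false_iff, Finset.mem_image]
    constructor
    · rintro ⟨j, hj, hp⟩
      refine ⟨⟨j, hj⟩, Finset.mem_univ _, ?_⟩
      apply Fin.ext
      simp only
      have := qq_nonneg ha j
      omega
    · rintro ⟨jf, _, rfl⟩
      refine ⟨(jf : ℕ), jf.isLt, ?_⟩
      simp only
      have := qq_nonneg ha (jf : ℕ)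
      omega

lemma ones_Phi {a : Fin n → Fin n} (ha : a ∈ Good n) : ones (Phi n a) = n := by
  obtain ⟨f, hmono, hval, hzer⟩ := zer_Phi_eq ha
  have hcard : (zer (Phi n a)).card = n - 1 := by
    rw [hzer, Finset.card_image_of_injective _ hmono.injective]
    simp
  have := ones_add_zer (Phi n a)
  have := hn_pos (n := n)
  omega

/-- key: a good sequence in fiber of `v` is determined by `delta`. -/
lemma fiber_delta {a : Fin n → Fin n} {v : Fin L → Bool} (ha : a ∈ Good n)
    (hv : ones v = n) (hPhi : Phi n a = v) :
    ∀ i : Fin n, ((a i) : ℤ) = ((a 0) : ℤ) + delta n v (i : ℕ) := by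
  obtain ⟨f, hmono, hval, hzs⟩ := zer_Phi_eq ha
  rw [hPhi] at hzs
  have hf_eq : f = (zer v).orderEmbOfFin (hzer hv) := by
    refine Finset.orderEmbOfFin_unique (hzer hv) ?_ hmono
    intro x
    rw [hzs, Finset.mem_image]
    exact ⟨x, Finset.mem_univ _, rfl⟩
  have hnth : ∀ j (hj : j < n - 1), (nth v j : ℤ) = qq n a j := by
    intro j hj
    rw [nth_eq (hzer hv) ⟨j, hj⟩, ← hf_eq]
    exact hval ⟨j, hj⟩
  intro i
  rcases Nat.eq_zero_or_pos (i : ℕ) with h0 | hpos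
  · have : i = 0 := Fin.ext (by simp [h0])
    rw [this]
    simp [delta]
  · have hj : (i : ℕ) - 1 < n - 1 := by have := i.isLt; omega
    have hq := hnth ((i : ℕ) - 1) hj
    rw [delta, if_neg (by omega)]
    rw [hq, qq]
    have hcast : (((i : ℕ) - 1 + 1 : ℕ) : Fin n) = i := by
      rw [show (i : ℕ) - 1 + 1 = (i : ℕ) by omega]
      exact Fin.cast_val_eq_self i
    rw [hcast]
    push_cast [Nat.cast_sub (by omega : 1 ≤ (i : ℕ))]
    ring

lemma delta_zero (v : Fin L → Bool) : delta n v 0 = 0 := by simp [delta]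

lemma nth_nonneg (v : Fin L → Bool) (j : ℕ) : 0 ≤ (nth v j : ℤ) := Int.natCast_nonneg _

lemma delta_step {v : Fin L → Bool} (hv : ones v = n) {j : ℕ} (hj : j + 1 < n) :
    delta n v j - 1 ≤ delta n v (j+1) := by
  rcases Nat.eq_zero_or_pos j with rfl | hpos
  · rw [delta_zero, delta, if_neg (by omega)]
    simp only [Nat.add_sub_cancel]
    have := nth_nonneg v 0
    omega
  · rw [delta, if_neg (by omega), delta, if_neg (by omega)]
    simp only [Nat.add_sub_cancel]
    have hmono := nth_strictMono hv (show j - 1 < j by omega) (show j < n - 1 by omega)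
    have h1 : ((nth v (j-1) : ℕ) : ℤ) < ((nth v j : ℕ) : ℤ) := by exact_mod_cast hmono
    omega

lemma delta_wrap {v : Fin L → Bool} (hv : ones v = n) : delta n v (n-1) ≤ 1 := by
  rcases Nat.lt_or_ge n 2 with hn | hn
  · have h1 : n - 1 = 0 := by omega
    rw [h1, delta_zero]
    omega
  · rw [delta, if_neg (by omega)]
    have := nth_lt hv (show n - 1 - 1 < n - 1 by omega)
    omega

variable (n)

noncomputable def Kset (v : Fin L → Bool) : Finset ℤ :=
  Finset.Icc (-(Dmin n v)) ((n:ℤ) - 1 - Dmax n v)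

def build (v : Fin L → Bool) (k : ℤ) : Fin n → Fin n :=
  fun i => (((k + delta n v (i : ℕ)).toNat : ℕ) : Fin n)

variable {n}

lemma build_val {v : Fin L → Bool} {k : ℤ} (hk : k ∈ Kset n v) (i : Fin n) :
    ((build n v k i) : ℤ) = k + delta n v (i : ℕ) := by
  rw [Kset, Finset.mem_Icc] at hk
  have h1 := delta_le_Dmax (v := v) i.isLt
  have h2 := Dmin_le_delta (v := v) i.isLt
  have hlt : (k + delta n v (i : ℕ)).toNat < n := by omega
  rw [build]
  rw [Fin.val_cast_of_lt hlt]
  omega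

lemma build_good {v : Fin L → Bool} (hv : ones v = n) {k : ℤ} (hk : k ∈ Kset n v) :
    build n v k ∈ Good n := by
  rw [mem_good]
  intro i
  have hi1 : (i + 1 : Fin n) = (((i : ℕ) + 1 : ℕ) : Fin n) := by
    push_cast [Fin.cast_val_eq_self]
    ring
  rcases Nat.lt_or_ge ((i : ℕ) + 1) n with hlt | hge
  · have hval : ((i + 1 : Fin n) : ℕ) = (i : ℕ) + 1 := by
      rw [hi1, Fin.val_cast_of_lt hlt]
    rw [build_val hk, build_val hk, hval]
    have := delta_step hv hlt
    omega
  · have hin : (i : ℕ) = n - 1 := by have := i.isLt; omega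
    have hval : ((i + 1 : Fin n) : ℕ) = 0 := by
      rw [hi1, show (i : ℕ) + 1 = n by have := i.isLt; omega]
      simp [Fin.natCast_self]
    rw [build_val hk, build_val hk, hval, hin, delta_zero]
    have := delta_wrap hv
    omega

lemma nth_surj {v : Fin L → Bool} (hv : ones v = n) {p : Fin L} (hp : p ∈ zer v) :
    ∃ j, j < n - 1 ∧ nth v j = (p : ℕ) := by
  have : p ∈ Set.range ((zer v).orderEmbOfFin (hzer hv)) := by
    rw [Finset.range_orderEmbOfFin]; exact hp
  obtain ⟨jf, hjf⟩ := this
  refine ⟨(jf : ℕ), jf.isLt, ?_⟩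
  rw [nth_eq (hzer hv) jf, hjf]

lemma qq_build {v : Fin L → Bool} (hv : ones v = n) {k : ℤ} (hk : k ∈ Kset n v)
    {j : ℕ} (hj : j < n - 1) : qq n (build n v k) j = (nth v j : ℤ) := by
  rw [qq]
  have h0 : ((build n v k 0) : ℤ) = k := by
    have := build_val hk (0 : Fin n)
    rw [show ((0 : Fin n) : ℕ) = 0 from rfl, delta_zero] at this
    omega
  have hj1 : (((j + 1 : ℕ) : Fin n) : ℕ) = j + 1 := Fin.val_cast_of_lt (by omega)
  have hb := build_val hk ((j + 1 : ℕ) : Fin n)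
  rw [hj1] at hb
  rw [hb, h0, delta, if_neg (by omega)]
  simp only [Nat.add_sub_cancel]
  push_cast
  ring

lemma build_Phi {v : Fin L → Bool} (hv : ones v = n) {k : ℤ} (hk : k ∈ Kset n v) :
    Phi n (build n v k) = v := by
  funext p
  rcases Bool.eq_false_or_eq_true (v p) with hvp | hvp
  · rw [hvp]
    rcases Bool.eq_false_or_eq_true (Phi n (build n v k) p) with hP | hP
    · exact hP
    · exfalso
      rw [Phi_false_iff] at hP
      obtain ⟨j, hj, hp⟩ := hP
      rw [qq_build hv hk hj] at hp
      have hplt : (p : ℕ) = nth v j := by exact_mod_cast hp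
      obtain ⟨hlt, hfalse⟩ := nth_mem_zer hv hj
      have : p = ⟨nth v j, hlt⟩ := Fin.ext (by simp [hplt])
      rw [this, hfalse] at hvp
      exact Bool.false_ne_true hvp
  · rw [hvp]
    rw [Phi_false_iff]
    obtain ⟨j, hj, hnth⟩ := nth_surj hv (mem_zer_iff.2 hvp)
    refine ⟨j, hj, ?_⟩
    rw [qq_build hv hk hj, ← hnth]

lemma fiber_card {v : Fin L → Bool} (hv : ones v = n) :
    ((Good n).filter (fun a => Phi n a = v)).card = (Kset n v).card := by
  refine Finset.card_bij' (fun a _ => ((a 0 : ℕ) : ℤ)) (fun k hk => build n v k) ?_ ?_ ?_ ?_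
  · intro a ha
    rw [Finset.mem_filter] at ha
    have hd := fiber_delta ha.1 hv ha.2
    rw [Kset, Finset.mem_Icc]
    constructor
    · obtain ⟨j, hj, hdm⟩ := exists_Dmin (n := n) v
      have hji : ((( j : ℕ) : Fin n) : ℕ) = j := Fin.val_cast_of_lt hj
      have := hd ((j : ℕ) : Fin n)
      rw [hji, hdm] at this
      have hge : (0 : ℤ) ≤ ((a ((j : ℕ) : Fin n)) : ℕ) := Int.natCast_nonneg _
      clear hd
      omega
    · obtain ⟨j, hj, hdm⟩ := exists_Dmax (n := n) v
      have hji : ((( j : ℕ) : Fin n) : ℕ) = j := Fin.val_cast_of_lt hj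
      have := hd ((j : ℕ) : Fin n)
      rw [hji, hdm] at this
      have hle : ((a ((j : ℕ) : Fin n)) : ℕ) < n := (a _).isLt
      clear hd
      omega
  · intro k hk
    rw [Finset.mem_filter]
    exact ⟨build_good hv hk, build_Phi hv hk⟩
  · intro a ha
    rw [Finset.mem_filter] at ha
    have hd := fiber_delta ha.1 hv ha.2
    have hk : ((a 0 : ℕ) : ℤ) ∈ Kset n v := by
      rw [Kset, Finset.mem_Icc]
      constructor
      · obtain ⟨j, hj, hdm⟩ := exists_Dmin (n := n) v
        have hji : ((( j : ℕ) : Fin n) : ℕ) = j := Fin.val_cast_of_lt hj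
        have := hd ((j : ℕ) : Fin n)
        rw [hji, hdm] at this
        have hge : (0 : ℤ) ≤ ((a ((j : ℕ) : Fin n)) : ℕ) := Int.natCast_nonneg _
        clear hd
        omega
      · obtain ⟨j, hj, hdm⟩ := exists_Dmax (n := n) v
        have hji : ((( j : ℕ) : Fin n) : ℕ) = j := Fin.val_cast_of_lt hj
        have := hd ((j : ℕ) : Fin n)
        rw [hji, hdm] at this
        have hle : ((a ((j : ℕ) : Fin n)) : ℕ) < n := (a _).isLt
        clear hd
        omega
    funext i
    have h1 := build_val hk i
    have h2 := hd i
    have : ((build n v ((a 0 : ℕ) : ℤ) i) : ℤ) = ((a i : ℕ) : ℤ) := by rw [h1, hd i]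
    have hval : ((build n v ((a 0 : ℕ) : ℤ) i) : ℕ) = (a i : ℕ) := by exact_mod_cast this
    exact Fin.ext hval
  · intro k hk
    have := build_val hk (0 : Fin n)
    rw [show ((0 : Fin n) : ℕ) = 0 from rfl, delta_zero] at this
    omega

lemma fiber_card_int {v : Fin L → Bool} (hv : ones v = n) :
    ((((Good n).filter (fun a => Phi n a = v)).card : ℤ))
      = (n : ℤ) + 1 - (Mx v - Mn v) := by
  rw [fiber_card hv, Kset, Int.card_Icc]
  have hMx := Mx_eq_Dmax hv
  have hMn := Mn_eq_Dmin hv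
  have hbound : Mx v - Mn v ≤ (n : ℤ) := by
    refine Mx_sub_Mn_le v ?_ ?_
    · rw [hv]
    · rw [hv]
      have := hn_pos (n := n)
      omega
  have hge : Mx v - Mn v ≥ 1 := by
    have h1 := Mx_ge_one hv
    have h2 := Mn_nonpos v
    omega
  rw [Int.toNat_of_nonneg (by omega)]
  omega

end Front

section Assembly
variable (n : ℕ) [NeZero n]

local notation "L" => 2*n - 1

def Vset : Finset (Fin L → Bool) := univ.filter (fun v => ones v = n)

variable {n}

lemma mem_Vset {v : Fin L → Bool} : v ∈ Vset n ↔ ones v = n := by simp [Vset]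

lemma good_card_eq :
    (((Good n).card : ℤ)) = ∑ v ∈ Vset n, ((n:ℤ) + 1 - (Mx v - Mn v)) := by
  have h := Finset.card_eq_sum_card_fiberwise
    (f := Phi n) (s := Good n) (t := Vset n)
    (fun a ha => mem_Vset.2 (ones_Phi ha))
  rw [h]
  push_cast
  refine Finset.sum_congr rfl fun v hv => ?_
  exact fiber_card_int (mem_Vset.1 hv)

/-- flip all letters. -/
def flip (v : Fin L → Bool) : Fin L → Bool := fun p => !(v p)

lemma S_flip (v : Fin L → Bool) : ∀ i, i ≤ L → S (flip v) i = - S v i := by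
  intro i
  induction i with
  | zero => intro _; simp
  | succ i ih =>
    intro hi
    have hiL : i < L := by omega
    rw [S_succ, S_succ, ih (by omega)]
    have : step (flip v) i = - step v i := by
      rw [step, step, dif_pos hiL, dif_pos hiL, flip]
      rcases Bool.eq_false_or_eq_true (v ⟨i, hiL⟩) with h | h <;> rw [h] <;> norm_num
    rw [this]
    ring

lemma ones_flip (v : Fin L → Bool) : ones (flip v) = L - ones v := by
  have h := ones_add_zer v
  have : ones (flip v) = (zer v).card := by
    rw [ones, zer]
    congr 1
    ext p
    simp [flip]
  omega

lemma flip_flip (v : Fin L → Bool) : flip (flip v) = v := by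
  funext p; simp [flip]

lemma Mx_flip (v : Fin L → Bool) : Mx (flip v) = - Mn v := by
  apply le_antisymm
  · obtain ⟨i, hi, hS⟩ := exists_Mx (flip v)
    rw [S_flip v i hi] at hS
    have := Mn_le v hi
    omega
  · obtain ⟨i, hi, hS⟩ := exists_Mn v
    have h2 := le_Mx (flip v) hi
    rw [S_flip v i hi, hS] at h2
    exact h2

lemma count_Mx {t : ℕ} (ht : 1 ≤ t) :
    ((Vset n).filter (fun v => (t:ℤ) ≤ Mx v)).card = (2*n-1).choose (n - 1 + t) := by
  have hcast : ((2*n - 1 : ℕ) : ℤ) = 2*(n:ℤ) - 1 := by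
    have := hn_pos (n := n); push_cast [Nat.cast_sub (by omega : 1 ≤ 2*n)]; ring
  have h := @reflect_card (2*n-1) n (n - 1 + t) ((t:ℤ))
    (by exact_mod_cast ht)
    (by rw [hcast]; omega)
    (by rw [hcast]; push_cast [Nat.cast_sub (by have := hn_pos (n := n); omega : 1 ≤ n)]
        omega)
  rw [← card_ones_eq_choose, ← h]
  congr 1
  rw [Vset, Finset.filter_filter]

lemma count_Mn {t : ℕ} (ht : 1 ≤ t) :
    ((Vset n).filter (fun v => (t:ℤ) ≤ - Mn v)).card = (2*n-1).choose (n + t) := by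
  have hn1 := hn_pos (n := n)
  have hcast : ((2*n - 1 : ℕ) : ℤ) = 2*(n:ℤ) - 1 := by
    push_cast [Nat.cast_sub (by omega : 1 ≤ 2*n)]; ring
  -- first: bijection with words of `n-1` ones and large max, via flip
  have hflip : ((Vset n).filter (fun v => (t:ℤ) ≤ - Mn v)).card
      = ((univ.filter (fun v : Fin L → Bool => ones v = n - 1 ∧ (t:ℤ) ≤ Mx v))).card := by
    refine Finset.card_bij' (fun v _ => flip v) (fun v _ => flip v) ?_ ?_ ?_ ?_
    · intro v hv
      rw [Finset.mem_filter] at hv ⊢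
      obtain ⟨hv1, hv2⟩ := hv
      rw [mem_Vset] at hv1
      refine ⟨Finset.mem_univ _, ?_, ?_⟩
      · rw [ones_flip, hv1]; omega
      · rw [Mx_flip]; exact hv2
    · intro v hv
      rw [Finset.mem_filter] at hv ⊢
      obtain ⟨_, hv1, hv2⟩ := hv
      constructor
      · rw [mem_Vset, ones_flip, hv1]; omega
      · have : Mn (flip v) = - Mx v := by
          have := Mx_flip (flip v)
          rw [flip_flip] at this
          omega
        omega
    · intro v _; exact flip_flip v
    · intro v _; exact flip_flip v
  rw [hflip]
  have h := @reflect_card (2*n-1) (n - 1) (n + t) ((t:ℤ))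
    (by exact_mod_cast ht)
    (by rw [hcast]; push_cast [Nat.cast_sub (by omega : 1 ≤ n)]; omega)
    (by rw [hcast]; push_cast [Nat.cast_sub (by omega : 1 ≤ n)]; omega)
  rw [← card_ones_eq_choose, ← h]

lemma sum_indicator {M : ℤ} {m : ℕ} (h0 : 0 ≤ M) (hm : M ≤ (m:ℤ)) :
    ∑ t ∈ Finset.Icc 1 m, (if (t:ℤ) ≤ M then (1:ℤ) else 0) = M := by
  rw [Finset.sum_boole]
  have heq : (Finset.Icc 1 m).filter (fun t : ℕ => (t:ℤ) ≤ M) = Finset.Icc 1 M.toNat := by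
    ext t
    simp only [Finset.mem_filter, Finset.mem_Icc]
    omega
  rw [heq, Nat.card_Icc]
  omega

lemma layer_Mx :
    ∑ v ∈ Vset n, Mx v
      = ∑ t ∈ Finset.Icc 1 n, (((Vset n).filter (fun v => (t:ℤ) ≤ Mx v)).card : ℤ) := by
  have h1 : ∀ v ∈ Vset n, Mx v = ∑ t ∈ Finset.Icc 1 n, (if (t:ℤ) ≤ Mx v then (1:ℤ) else 0) := by
    intro v hv
    rw [mem_Vset] at hv
    rw [sum_indicator (by have := Mx_ge_one hv; omega) (by have := Mx_le_ones v; rw [hv] at this; exact this)]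
  rw [Finset.sum_congr rfl h1, Finset.sum_comm]
  refine Finset.sum_congr rfl fun t _ => ?_
  rw [Finset.sum_boole]

lemma layer_Mn :
    ∑ v ∈ Vset n, (- Mn v)
      = ∑ t ∈ Finset.Icc 1 (n-1), (((Vset n).filter (fun v => (t:ℤ) ≤ - Mn v)).card : ℤ) := by
  have hn1 := hn_pos (n := n)
  have hcast : ((2*n - 1 : ℕ) : ℤ) = 2*(n:ℤ) - 1 := by
    push_cast [Nat.cast_sub (by omega : 1 ≤ 2*n)]; ring
  have h1 : ∀ v ∈ Vset n, - Mn v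
      = ∑ t ∈ Finset.Icc 1 (n-1), (if (t:ℤ) ≤ - Mn v then (1:ℤ) else 0) := by
    intro v hv
    rw [mem_Vset] at hv
    have hb := neg_Mn_le v
    rw [hv, hcast] at hb
    refine (sum_indicator (by have := Mn_nonpos v; omega) ?_).symm
    push_cast [Nat.cast_sub (by omega : 1 ≤ n)]
    omega
  rw [Finset.sum_congr rfl h1, Finset.sum_comm]
  refine Finset.sum_congr rfl fun t _ => ?_
  rw [Finset.sum_boole]

lemma sum_shift (c m : ℕ) (f : ℕ → ℕ) :
    ∑ t ∈ Finset.Icc 1 m, f (c + t) = ∑ k ∈ Finset.Icc (c+1) (c+m), f k := by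
  refine Finset.sum_nbij' (fun t => c + t) (fun k => k - c) ?_ ?_ ?_ ?_ ?_ <;>
    intros a ha <;> simp_all [Finset.mem_Icc] <;> omega

lemma choose_sum_upper :
    ∑ k ∈ Finset.Icc n (2*n-1), (2*n-1).choose k = 2^(2*n-2) := by
  have hn1 := hn_pos (n := n)
  have h1 : ∑ k ∈ Finset.range (2*n), (2*n-1).choose k = 2^(2*n-1) := by
    have := Nat.sum_range_choose (2*n-1)
    rw [show 2*n - 1 + 1 = 2*n by omega] at this
    exact this
  have h2 : ∑ k ∈ Finset.range n, (2*n-1).choose k = 4^(n-1) := by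
    have := Nat.sum_range_choose_halfway (n-1)
    rw [show 2*(n-1) + 1 = 2*n - 1 by omega, show (n-1) + 1 = n by omega] at this
    exact this
  have hsplit : ∑ k ∈ Finset.Ico 0 n, (2*n-1).choose k
      + ∑ k ∈ Finset.Ico n (2*n), (2*n-1).choose k
      = ∑ k ∈ Finset.Ico 0 (2*n), (2*n-1).choose k :=
    Finset.sum_Ico_consecutive _ (by omega) (by omega)
  rw [← Nat.Ico_zero_eq_range] at h1 h2
  have hIcc : Finset.Icc n (2*n-1) = Finset.Ico n (2*n) := by
    rw [← Finset.Ico_add_one_right_eq_Icc]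
    congr 1
    omega
  rw [hIcc]
  have h4 : (4:ℕ)^(n-1) = 2^(2*n-2) := by
    rw [show (4:ℕ) = 2^2 by norm_num, ← pow_mul]
    congr 1
    omega
  have h5 : (2:ℕ)^(2*n-1) = 2^(2*n-2) + 2^(2*n-2) := by
    rw [show 2*n - 1 = (2*n-2) + 1 by omega, pow_succ]
    ring
  omega

lemma sumA : ∑ t ∈ Finset.Icc 1 n, (2*n-1).choose (n - 1 + t) = 2^(2*n-2) := by
  have hn1 := hn_pos (n := n)
  rw [sum_shift (n-1) n]
  rw [show (n-1) + 1 = n by omega, show (n-1) + n = 2*n-1 by omega]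
  exact choose_sum_upper

lemma sumB : ∑ t ∈ Finset.Icc 1 (n-1), (2*n-1).choose (n + t)
    = 2^(2*n-2) - (2*n-1).choose n := by
  have hn1 := hn_pos (n := n)
  rw [sum_shift n (n-1)]
  rw [show n + (n-1) = 2*n-1 by omega]
  have hsplit : Finset.Icc n (2*n-1) = insert n (Finset.Icc (n+1) (2*n-1)) := by
    ext k
    simp only [Finset.mem_Icc, Finset.mem_insert]
    omega
  have := choose_sum_upper (n := n)
  rw [hsplit, Finset.sum_insert (by simp)] at this
  omega

lemma card_Vset : (Vset n).card = (2*n-1).choose n := by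
  rw [Vset, card_ones_eq_choose]

lemma good_card_final :
    (((Good n).card : ℤ)) = ((n:ℤ) + 2) * (2*n-1).choose (n-1) - 2^(2*n-1) := by
  have hn1 := hn_pos (n := n)
  rw [good_card_eq]
  have hneg : ∑ v ∈ Vset n, (- Mn v) = - ∑ v ∈ Vset n, Mn v := by simp
  have hsplit : ∑ v ∈ Vset n, ((n:ℤ) + 1 - (Mx v - Mn v))
      = ((n:ℤ)+1) * (Vset n).card - (∑ v ∈ Vset n, Mx v) - (∑ v ∈ Vset n, (- Mn v)) := by
    rw [Finset.sum_sub_distrib, Finset.sum_const, Finset.sum_sub_distrib, hneg, nsmul_eq_mul]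
    ring
  rw [hsplit, layer_Mx, layer_Mn]
  have hA : ∑ t ∈ Finset.Icc 1 n, (((Vset n).filter (fun v => (t:ℤ) ≤ Mx v)).card : ℤ)
      = (2^(2*n-2) : ℕ) := by
    rw [← Nat.cast_sum]
    congr 1
    rw [← sumA]
    refine Finset.sum_congr rfl fun t ht => ?_
    rw [Finset.mem_Icc] at ht
    exact count_Mx ht.1
  have hB : ∑ t ∈ Finset.Icc 1 (n-1), (((Vset n).filter (fun v => (t:ℤ) ≤ - Mn v)).card : ℤ)
      = ((2^(2*n-2) - (2*n-1).choose n : ℕ)) := by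
    rw [← Nat.cast_sum]
    congr 1
    rw [← sumB]
    refine Finset.sum_congr rfl fun t ht => ?_
    rw [Finset.mem_Icc] at ht
    exact count_Mn ht.1
  have hchoose : (2*n-1).choose n = (2*n-1).choose (n-1) := by
    have := Nat.choose_symm (show n ≤ 2*n-1 by omega)
    rw [show 2*n-1-n = n-1 by omega] at this
    exact this.symm
  have hle : (2*n-1).choose n ≤ 2^(2*n-2) := by
    have hsum := choose_sum_upper (n := n)
    have hmem : n ∈ Finset.Icc n (2*n-1) := by simp [Finset.mem_Icc]; omega
    calc (2*n-1).choose n ≤ ∑ k ∈ Finset.Icc n (2*n-1), (2*n-1).choose k :=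
          Finset.single_le_sum (fun k _ => Nat.zero_le _) hmem
      _ = 2^(2*n-2) := hsum
  have hpow : ((2:ℤ))^(2*n-1) = 2^(2*n-2) + 2^(2*n-2) := by
    rw [show 2*n - 1 = (2*n-2) + 1 by omega, pow_succ]
    ring
  rw [hA, hB, card_Vset, Nat.cast_sub hle, hchoose]
  push_cast
  rw [hpow]
  ring

end Assembly
end CircAux

/-- The number of circular area sequences of length `n`, i.e. sequences
`(a 0, ..., a (n-1))` with values in `{0, ..., n-1}` (encoded as `Fin n`) satisfying
`a i - 1 ≤ a (i+1)` cyclically, equals `(n+2) * C(2n-1, n-1) - 2^(2n-1)`. -/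
theorem circular_area_sequence_count (n : ℕ) [NeZero n] :
    ((Finset.univ.filter (fun a : Fin n → Fin n =>
        ∀ i : Fin n, (a i : ℤ) - 1 ≤ (a (i + 1) : ℤ))).card : ℤ)
      = (n + 2) * Nat.choose (2 * n - 1) (n - 1) - 2 ^ (2 * n - 1) := by
  have h := CircAux.good_card_final (n := n)
  rw [CircAux.Good] at h
  exact h
end

section
/- For every area sequence a of a unit interval graph on n vertices and every sequence (v_1,...,v_n) of nonnegative integers with v_i ≤ a_i for all i, there exists a unique acyclic orientation of the graph Γ_a having exactly v_i ascending edges incident to vertex i among the edges {i→i+1, ..., i→i+a_i}. -/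
open Finset

/-- The edge set of the unit interval graph `Γ_a` on vertices `Fin n` (0-indexed):
edges `i → j` for `i < j ≤ i + a i`. -/
def uigEdges (n : ℕ) (a : Fin n → ℕ) : Finset (Fin n × Fin n) :=
  Finset.univ.filter (fun p => p.1 < p.2 ∧ (p.2 : ℕ) ≤ (p.1 : ℕ) + a p.1)

/-- The directed relation induced by an orientation of `Γ_a`, where the orientation is
encoded by the set `A` of its ascending edges (a subset of the edge set):
`u → w` if the edge `(u,w)` is oriented ascendingly, or the edge `(w,u)` is oriented
descendingly. -/
def orientRel (n : ℕ) (a : Fin n → ℕ) (A : Finset (Fin n × Fin n))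
    (u w : Fin n) : Prop :=
  (u, w) ∈ A ∨ ((w, u) ∈ uigEdges n a ∧ (w, u) ∉ A)

namespace UAO

variable {n : ℕ}

/-- Neighbour predicate: `j` is in row `i`. -/
def nbr (a : Fin n → ℕ) (i j : Fin n) : Bool :=
  decide ((i : ℕ) < (j : ℕ) ∧ (j : ℕ) ≤ (i : ℕ) + a i)

/-- Insert `x` into the list `l` so that exactly `v` of the elements satisfying `p`
come after `x`. -/
def insF (p : Fin n → Bool) (x : Fin n) (v : ℕ) : List (Fin n) → List (Fin n)
  | [] => [x]
  | y :: l => if List.countP p (y :: l) = v then x :: y :: l else y :: insF p x v l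

lemma insF_shape (p : Fin n → Bool) (x : Fin n) (v : ℕ) :
    ∀ l : List (Fin n), v ≤ l.countP p →
    ∃ l1 l2, l = l1 ++ l2 ∧ insF p x v l = l1 ++ x :: l2 ∧ l2.countP p = v := by
  intro l
  induction l with
  | nil =>
    intro h
    refine ⟨[], [], rfl, rfl, ?_⟩
    simp only [List.countP_nil] at h ⊢
    omega
  | cons y l ih =>
    intro h
    by_cases hc : List.countP p (y :: l) = v
    · exact ⟨[], y :: l, rfl, by simp [insF, hc], hc⟩
    · have h1 : v ≤ l.countP p := by
        have h4 : List.countP p (y :: l) ≤ l.countP p + 1 := by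
          rw [List.countP_cons]; split <;> omega
        omega
      obtain ⟨l1, l2, he, hi, hcnt⟩ := ih h1
      exact ⟨y :: l1, l2, by simp [he], by simp [insF, hc, hi], hcnt⟩

/-- Build the topological order: insert vertices `n-1, n-2, ..., 0` one at a time. -/
def build (a v : Fin n → ℕ) : ℕ → List (Fin n)
  | 0 => []
  | k+1 => if h : k < n then
      insF (nbr a ⟨n-1-k, by omega⟩) ⟨n-1-k, by omega⟩ (v ⟨n-1-k, by omega⟩) (build a v k)
    else build a v k

lemma build_inv (a v : Fin n → ℕ) (harea₁ : ∀ i : Fin n, (i : ℕ) + a i < n)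
    (hv : ∀ i, v i ≤ a i) :
    ∀ k, k ≤ n →
    (∀ x : Fin n, x ∈ build a v k ↔ n - k ≤ (x : ℕ)) ∧
    (build a v k).Nodup ∧
    (∀ l1 (x : Fin n) l2, build a v k = l1 ++ x :: l2 → l2.countP (nbr a x) = v x) := by
  intro k
  induction k with
  | zero =>
    intro _
    refine ⟨fun x => ?_, by simp [build], fun l1 x l2 h => by simp [build] at h⟩
    simp only [build, List.not_mem_nil, false_iff]
    have := x.isLt; omega
  | succ k ih =>
    intro hk1
    have hk : k < n := by omega
    obtain ⟨hmem, hnd, hcnt⟩ := ih (by omega)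
    set i : Fin n := ⟨n-1-k, by omega⟩ with hidef
    have hiv : (i : ℕ) = n - 1 - k := rfl
    -- the precondition: v i ≤ countP
    have hcard : ((build a v k).toFinset.filter (fun x => nbr a i x = true)).card
        = (build a v k).countP (nbr a i) := by
      rw [← List.toFinset_filter, List.toFinset_card_of_nodup (hnd.filter _),
        List.countP_eq_length_filter]
    have hsubIoc : Finset.Ioc (i : ℕ) ((i : ℕ) + a i) ⊆
        ((build a v k).toFinset.filter (fun x => nbr a i x = true)).image Fin.val := by
      intro x hx
      rw [Finset.mem_Ioc] at hx
      have hxn : x < n := lt_of_le_of_lt hx.2 (harea₁ i)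
      refine Finset.mem_image.mpr ⟨⟨x, hxn⟩, ?_, rfl⟩
      rw [Finset.mem_filter, List.mem_toFinset, hmem]
      refine ⟨by simp; omega, ?_⟩
      simp only [nbr, decide_eq_true_eq]
      exact hx
    have hpre : v i ≤ (build a v k).countP (nbr a i) := by
      have h1 : a i ≤ ((build a v k).toFinset.filter (fun x => nbr a i x = true)).card := by
        have h2 := Finset.card_le_card hsubIoc
        have h3 := Finset.card_image_le (s := (build a v k).toFinset.filter
          (fun x => nbr a i x = true)) (f := Fin.val)
        rw [Nat.card_Ioc] at h2
        omega
      rw [← hcard]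
      exact le_trans (hv i) h1
    obtain ⟨l1, l2, he, hiq, hc2⟩ := insF_shape (nbr a i) i (v i) _ hpre
    have hbuild : build a v (k+1) = l1 ++ i :: l2 := by
      rw [build, dif_pos hk]
      exact hiq
    have hinot : i ∉ build a v k := by
      rw [hmem]
      omega
    have hinot' : i ∉ l1 ++ l2 := he ▸ hinot
    refine ⟨?_, ?_, ?_⟩
    · intro x
      rw [hbuild]
      simp only [List.mem_append, List.mem_cons]
      have hx := x.isLt
      constructor
      · rintro (h | rfl | h)
        · have : x ∈ build a v k := by rw [he]; exact List.mem_append.mpr (Or.inl h)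
          rw [hmem] at this; omega
        · omega
        · have : x ∈ build a v k := by rw [he]; exact List.mem_append.mpr (Or.inr h)
          rw [hmem] at this; omega
      · intro h
        by_cases hxi : x = i
        · exact Or.inr (Or.inl hxi)
        · have hxi' : (x : ℕ) ≠ (i : ℕ) := fun hh => hxi (Fin.ext hh)
          have : x ∈ build a v k := by rw [hmem]; omega
          rw [he] at this
          rcases List.mem_append.mp this with h | h
          · exact Or.inl h
          · exact Or.inr (Or.inr h)
    · rw [hbuild, List.nodup_middle]
      exact List.nodup_cons.mpr ⟨hinot', he ▸ hnd⟩
    · intro t1 x t2 heq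
      rw [hbuild] at heq
      rcases List.append_eq_append_iff.mp heq with ⟨a', ha1, ha2⟩ | ⟨c', hc1, hc2'⟩
      · cases a' with
        | nil =>
          simp only [List.nil_append, List.cons.injEq] at ha2
          obtain ⟨rfl, rfl⟩ := ha2
          exact hc2
        | cons b a'' =>
          simp only [List.cons_append, List.cons.injEq] at ha2
          obtain ⟨rfl, hl2⟩ := ha2
          refine hcnt (l1 ++ a'') x t2 ?_
          rw [he, hl2, List.append_assoc]
      · cases c' with
        | nil =>
          simp only [List.nil_append, List.cons.injEq] at hc2'
          obtain ⟨rfl, rfl⟩ := hc2'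
          exact hc2
        | cons b c'' =>
          simp only [List.cons_append, List.cons.injEq] at hc2'
          obtain ⟨rfl, ht2⟩ := hc2'
          have hx_in : x ∈ build a v k := by
            rw [he, hc1]; simp
          have hxge : n - k ≤ (x : ℕ) := (hmem x).mp hx_in
          have hnbrxi : nbr a x i = false := by
            simp only [nbr, decide_eq_false_iff_not, not_and]
            intro hlt
            exfalso
            omega
          have hprev : (c'' ++ l2).countP (nbr a x) = v x := by
            refine hcnt t1 x (c'' ++ l2) ?_
            rw [he, hc1]
            simp [List.append_assoc]
          rw [ht2, List.countP_append, List.countP_cons, hnbrxi]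
          rw [List.countP_append] at hprev
          simpa using hprev

lemma mmono (a : Fin n → ℕ)
    (harea₂ : ∀ i j : Fin n, (i : ℕ) + 1 = (j : ℕ) → a i ≤ a j + 1) :
    ∀ (d : ℕ) (i j : Fin n), (j : ℕ) = (i : ℕ) + d → (i : ℕ) + a i ≤ (j : ℕ) + a j := by
  intro d
  induction d with
  | zero =>
    intro i j h
    have : i = j := Fin.ext (by omega)
    subst this; omega
  | succ d ih =>
    intro i j h
    have h1 : (i : ℕ) + 1 < n := by have := j.isLt; omega
    have h2 := harea₂ i ⟨(i : ℕ) + 1, h1⟩ rfl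
    have h3 := ih ⟨(i : ℕ) + 1, h1⟩ j (by simp; omega)
    simp at h3
    omega

lemma exists_good (a v : Fin n → ℕ) (harea₁ : ∀ i : Fin n, (i : ℕ) + a i < n)
    (hv : ∀ i, v i ≤ a i) :
    ∃ A : Finset (Fin n × Fin n), A ⊆ uigEdges n a ∧
      (∀ x : Fin n, ¬ Relation.TransGen (orientRel n a A) x x) ∧
      (∀ i : Fin n, (A.filter (fun p => p.1 = i)).card = v i) := by
  obtain ⟨hmem, hnd, hcnt⟩ := build_inv a v harea₁ hv n le_rfl
  set L := build a v n with hL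
  have hmemL : ∀ x : Fin n, x ∈ L := fun x => (hmem x).mpr (by omega)
  set r : Fin n → ℕ := fun x => List.idxOf x L with hr
  set A := (uigEdges n a).filter (fun p => r p.1 < r p.2) with hA
  have hstep : ∀ u w, orientRel n a A u w → r u < r w := by
    intro u w h
    rcases h with h | ⟨hE, hnA⟩
    · exact (Finset.mem_filter.mp h).2
    · have h1 : ¬ (r w < r u) := fun hh => hnA (Finset.mem_filter.mpr ⟨hE, hh⟩)
      have h2 : w ≠ u := ne_of_lt (Finset.mem_filter.mp hE).2.1
      have h3 : r u ≠ r w := fun hh =>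
        h2 ((List.idxOf_inj (hmemL w)).mp hh.symm)
      omega
  refine ⟨A, Finset.filter_subset _ _, ?_, ?_⟩
  · intro x hx
    have h2 := Relation.TransGen.mono hstep x x hx
    have ht : Transitive (fun u w : Fin n => r u < r w) := fun _ _ _ h1 h2 => lt_trans h1 h2
    haveI : IsTrans (Fin n) (fun u w : Fin n => r u < r w) := ⟨fun _ _ _ h1 h2 => ht h1 h2⟩
    rw [Relation.transGen_eq_self] at h2
    exact lt_irrefl _ h2
  · intro i
    obtain ⟨l1, l2, hdec⟩ := List.append_of_mem (hmemL i)
    have hnd2 : (i :: (l1 ++ l2)).Nodup := List.nodup_middle.mp (hdec ▸ hnd)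
    have hinotm : i ∉ l1 ∧ i ∉ l2 := by
      have h := (List.nodup_cons.mp hnd2).1
      rw [List.mem_append] at h
      push_neg at h
      exact h
    have hnd3 := (List.nodup_cons.mp hnd2).2
    rw [List.nodup_append'] at hnd3
    have hdisj : ∀ j ∈ l2, j ∉ l1 := fun j hj hj1 => hnd3.2.2 hj1 hj
    have hri : r i = l1.length := by
      show List.idxOf i L = _
      rw [hdec, List.idxOf_append_of_notMem hinotm.1, List.idxOf_cons_self]
      omega
    have hrl1 : ∀ j ∈ l1, r j < l1.length := by
      intro j hj
      show List.idxOf j L < _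
      rw [hdec, List.idxOf_append_of_mem hj]
      exact List.idxOf_lt_length_iff.mpr hj
    have hrl2 : ∀ j ∈ l2, l1.length < r j := by
      intro j hj
      show l1.length < List.idxOf j L
      rw [hdec, List.idxOf_append_of_notMem (hdisj j hj)]
      have hji : j ≠ i := fun hh => hinotm.2 (hh ▸ hj)
      rw [List.idxOf_cons_ne _ (by exact fun hh => hji hh.symm)]
      omega
    have himage : A.filter (fun p => p.1 = i)
        = (l2.toFinset.filter (fun j => nbr a i j = true)).image (fun j => (i, j)) := by
      ext ⟨p1, p2⟩
      simp only [hA, Finset.mem_filter, Finset.mem_image, List.mem_toFinset, uigEdges,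
        Finset.mem_univ, true_and]
      constructor
      · rintro ⟨⟨hE, hrp⟩, hp1⟩
        subst hp1
        have hp2mem : p2 ∈ L := hmemL p2
        rw [hdec] at hp2mem
        have hp2i : p2 ≠ p1 := by
          intro hh
          rw [hh] at hE
          exact lt_irrefl p1 hE.1
        have hp2l1 : p2 ∉ l1 := by
          intro hh
          have := hrl1 p2 hh
          omega
        have hp2l2 : p2 ∈ l2 := by
          rcases List.mem_append.mp hp2mem with h | h
          · exact absurd h hp2l1
          · rcases List.mem_cons.mp h with h | h
            · exact absurd h hp2i
            · exact h
        refine ⟨p2, ⟨hp2l2, ?_⟩, rfl⟩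
        simp only [nbr, decide_eq_true_eq]
        exact ⟨hE.1, hE.2⟩
      · rintro ⟨j, ⟨hj2, hnbrj⟩, hj3⟩
        obtain ⟨rfl, rfl⟩ : p1 = i ∧ p2 = j := by
          constructor <;> [exact (congrArg Prod.fst hj3).symm; exact (congrArg Prod.snd hj3).symm]
        simp only [nbr, decide_eq_true_eq] at hnbrj
        refine ⟨⟨⟨?_, hnbrj.2⟩, ?_⟩, rfl⟩
        · exact hnbrj.1
        · rw [hri]
          exact hrl2 p2 hj2
    rw [himage, Finset.card_image_of_injective _ (fun x y h => congrArg Prod.snd h)]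
    have hcf : ((l2.toFinset).filter (fun j => nbr a i j = true)).card
        = l2.countP (nbr a i) := by
      rw [← List.toFinset_filter, List.toFinset_card_of_nodup (hnd3.2.1.filter _),
        List.countP_eq_length_filter]
    rw [hcf]
    exact hcnt l1 i l2 hdec

lemma uniq_lemma (a v : Fin n → ℕ)
    (harea₂ : ∀ i j : Fin n, (i : ℕ) + 1 = (j : ℕ) → a i ≤ a j + 1)
    (A A' : Finset (Fin n × Fin n))
    (hsubA : A ⊆ uigEdges n a)
    (hacA : ∀ x : Fin n, ¬ Relation.TransGen (orientRel n a A) x x)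
    (hcA : ∀ i : Fin n, (A.filter (fun p => p.1 = i)).card = v i)
    (hsubA' : A' ⊆ uigEdges n a)
    (hacA' : ∀ x : Fin n, ¬ Relation.TransGen (orientRel n a A') x x)
    (hcA' : ∀ i : Fin n, (A'.filter (fun p => p.1 = i)).card = v i) : A = A' := by
  have hmono := mmono a harea₂
  have hedge : ∀ x y : Fin n, (x, y) ∈ uigEdges n a ↔
      ((x : ℕ) < (y : ℕ) ∧ (y : ℕ) ≤ (x : ℕ) + a x) := by
    intro x y
    constructor
    · intro h
      have h2 := (Finset.mem_filter.mp h).2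
      exact ⟨h2.1, h2.2⟩
    · intro h
      exact Finset.mem_filter.mpr ⟨Finset.mem_univ _, h.1, h.2⟩
  have mk3 : ∀ (B : Finset (Fin n × Fin n)) (x y z : Fin n),
      orientRel n a B x y → orientRel n a B y z → orientRel n a B z x →
      Relation.TransGen (orientRel n a B) x x := fun B x y z h1 h2 h3 =>
    Relation.TransGen.tail (Relation.TransGen.tail (Relation.TransGen.single h1) h2) h3
  have key : ∀ d : ℕ, ∀ i : Fin n, n ≤ (i : ℕ) + d →
      ∀ j : Fin n, ((i, j) ∈ A ↔ (i, j) ∈ A') := by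
    intro d
    induction d with
    | zero =>
      intro i h
      exact absurd h (by have := i.isLt; omega)
    | succ d ih =>
      intro i hi
      set S := (A.filter (fun p => p.1 = i)).image Prod.snd with hS
      set S' := (A'.filter (fun p => p.1 = i)).image Prod.snd with hS'
      have hSmem : ∀ j, j ∈ S ↔ (i, j) ∈ A := by
        intro j
        simp only [hS, Finset.mem_image, Finset.mem_filter]
        constructor
        · rintro ⟨⟨p1, p2⟩, ⟨hp, hp1⟩, hp2⟩
          simp only at hp1 hp2
          subst hp1; subst hp2
          exact hp
        · intro h; exact ⟨(i, j), ⟨h, rfl⟩, rfl⟩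
      have hS'mem : ∀ j, j ∈ S' ↔ (i, j) ∈ A' := by
        intro j
        simp only [hS', Finset.mem_image, Finset.mem_filter]
        constructor
        · rintro ⟨⟨p1, p2⟩, ⟨hp, hp1⟩, hp2⟩
          simp only at hp1 hp2
          subst hp1; subst hp2
          exact hp
        · intro h; exact ⟨(i, j), ⟨h, rfl⟩, rfl⟩
      have hScard : S.card = v i := by
        rw [hS, Finset.card_image_of_injOn, hcA i]
        intro p hp q hq hpq
        rw [Finset.mem_coe, Finset.mem_filter] at hp hq
        exact Prod.ext (α := Fin n) (β := Fin n) (hp.2.trans hq.2.symm) hpq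
      have hS'card : S'.card = v i := by
        rw [hS', Finset.card_image_of_injOn, hcA' i]
        intro p hp q hq hpq
        rw [Finset.mem_coe, Finset.mem_filter] at hp hq
        exact Prod.ext (α := Fin n) (β := Fin n) (hp.2.trans hq.2.symm) hpq
      suffices hSS : S = S' by intro j; rw [← hSmem j, ← hS'mem j, hSS]
      by_contra hne
      have hex : ∀ (T T' : Finset (Fin n)), T.card = T'.card → T ≠ T' →
          (T \ T').Nonempty := by
        intro T T' hc hne2
        rw [Finset.sdiff_nonempty]
        intro hsub
        exact hne2 (Finset.eq_of_subset_of_card_le hsub (le_of_eq hc.symm))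
      obtain ⟨j, hj⟩ := hex S S' (hScard.trans hS'card.symm) hne
      obtain ⟨k, hk⟩ := hex S' S (hS'card.trans hScard.symm) (Ne.symm hne)
      rw [Finset.mem_sdiff] at hj hk
      have hjA : (i, j) ∈ A := (hSmem j).mp hj.1
      have hjA' : (i, j) ∉ A' := fun h => hj.2 ((hS'mem j).mpr h)
      have hkA' : (i, k) ∈ A' := (hS'mem k).mp hk.1
      have hkA : (i, k) ∉ A := fun h => hk.2 ((hSmem k).mpr h)
      have hjE : (i, j) ∈ uigEdges n a := hsubA hjA
      have hkE : (i, k) ∈ uigEdges n a := hsubA' hkA'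
      obtain ⟨hij, hja⟩ := (hedge _ _).mp hjE
      obtain ⟨hik, hka⟩ := (hedge _ _).mp hkE
      have hrow : ∀ x y : Fin n, (i : ℕ) < (x : ℕ) → ((x, y) ∈ A ↔ (x, y) ∈ A') :=
        fun x y hx => ih x (by omega) y
      have hjk : j ≠ k := fun h => hk.2 (h ▸ hj.1)
      have hjk' : (j : ℕ) ≠ (k : ℕ) := fun h => hjk (Fin.ext h)
      rcases Nat.lt_or_ge (j : ℕ) (k : ℕ) with hlt | hge
      · have hjkE : (j, k) ∈ uigEdges n a := by
          refine (hedge j k).mpr ⟨hlt, ?_⟩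
          have := hmono ((j : ℕ) - (i : ℕ)) i j (by omega)
          omega
        by_cases hc : (j, k) ∈ A
        · exact absurd (mk3 A i j k (Or.inl hjA) (Or.inl hc) (Or.inr ⟨hkE, hkA⟩)) (hacA i)
        · have hc' : (j, k) ∉ A' := fun h => hc ((hrow j k hij).mpr h)
          exact absurd (mk3 A' i k j (Or.inl hkA') (Or.inr ⟨hjkE, hc'⟩)
            (Or.inr ⟨hjE, hjA'⟩)) (hacA' i)
      · have hkj : (k : ℕ) < (j : ℕ) := by omega
        have hkjE : (k, j) ∈ uigEdges n a := by
          refine (hedge k j).mpr ⟨hkj, ?_⟩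
          have := hmono ((k : ℕ) - (i : ℕ)) i k (by omega)
          omega
        by_cases hc : (k, j) ∈ A'
        · exact absurd (mk3 A' i k j (Or.inl hkA') (Or.inl hc) (Or.inr ⟨hjE, hjA'⟩)) (hacA' i)
        · have hc' : (k, j) ∉ A := fun h => hc ((hrow k j hik).mp h)
          exact absurd (mk3 A i j k (Or.inl hjA) (Or.inr ⟨hkjE, hc'⟩)
            (Or.inr ⟨hkE, hkA⟩)) (hacA i)
  ext p
  obtain ⟨x, y⟩ := p
  exact key n x (by omega) y

end UAO

/-- for every area sequence `a` and every `v` with `v i ≤ a i`, there is a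
unique acyclic orientation of `Γ_a` with exactly `v i` ascending edges in row `i`. -/
theorem unique_acyclic_orientation (n : ℕ) (a : Fin n → ℕ)
    (harea₁ : ∀ i : Fin n, (i : ℕ) + a i < n)
    (harea₂ : ∀ i j : Fin n, (i : ℕ) + 1 = (j : ℕ) → a i ≤ a j + 1)
    (v : Fin n → ℕ) (hv : ∀ i, v i ≤ a i) :
    ∃! A : Finset (Fin n × Fin n), A ⊆ uigEdges n a ∧
      (∀ x : Fin n, ¬ Relation.TransGen (orientRel n a A) x x) ∧
      (∀ i : Fin n, (A.filter (fun p => p.1 = i)).card = v i) := by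
  obtain ⟨A, h1, h2, h3⟩ := UAO.exists_good a v harea₁ hv
  exact ⟨A, ⟨h1, h2, h3⟩, fun A' hA' =>
    UAO.uniq_lemma a v harea₂ A' A hA'.1 hA'.2.1 hA'.2.2 h1 h2 h3⟩
end

section
/- Let a = (a_1,...,a_n) be the area sequence of a unit interval graph (row lengths of inner boxes of a Dyck path) and let b = (b_1,...,b_n) be the corresponding column area sequence (column lengths of the inner shape). Then b is a permutation of a, i.e. the multisets {a_1,...,a_n} and {b_1,...,b_n} coincide. -/
open Finset

/-- the column area sequence of a Dyck path is a permutation of its row area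
sequence.  Here the inner boxes of the Dyck diagram of the area sequence `a` (0-indexed)
are the cells `(i,j)` with `i < j ≤ i + a i`; row `i` contains `a i` of them and column
`j` contains `b j = #{i | i < j ≤ i + a i}` of them.  The two multisets coincide. -/
theorem row_column_area_sequences_multiset_eq (n : ℕ) (a : Fin n → ℕ)
    (harea₁ : ∀ i : Fin n, (i : ℕ) + a i < n)
    (harea₂ : ∀ i j : Fin n, (i : ℕ) + 1 = (j : ℕ) → a i ≤ a j + 1) :
    Multiset.map a Finset.univ.val
      = Multiset.map
          (fun j : Fin n =>
            (Finset.univ.filter (fun i : Fin n => i < j ∧ (j : ℕ) ≤ (i : ℕ) + a i)).card)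
          Finset.univ.val := by
  set b : Fin n → ℕ := fun j : Fin n =>
      (Finset.univ.filter (fun i : Fin n => i < j ∧ (j : ℕ) ≤ (i : ℕ) + a i)).card with hb
  -- monotonicity of i + a i
  have mono0 : ∀ d : ℕ, ∀ i j : Fin n, (j : ℕ) = (i : ℕ) + d →
      (i : ℕ) + a i ≤ (j : ℕ) + a j := by
    intro d
    induction d with
    | zero =>
      intro i j h
      have : i = j := Fin.ext (by omega)
      subst this; exact le_refl _
    | succ d ih =>
      intro i j h
      have hj' : (i : ℕ) + d < n := by have := j.isLt; omega
      have h1 := ih i ⟨(i : ℕ) + d, hj'⟩ rfl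
      have h2 := harea₂ ⟨(i : ℕ) + d, hj'⟩ j (by show (i : ℕ) + d + 1 = (j : ℕ); omega)
      simp only [Fin.val_mk] at h1 h2 ⊢
      omega
  have mono : ∀ i j : Fin n, (i : ℕ) ≤ (j : ℕ) →
      (i : ℕ) + a i ≤ (j : ℕ) + a j := by
    intro i j h
    exact mono0 ((j : ℕ) - (i : ℕ)) i j (by omega)
  -- forward: k ≤ a i → k ≤ b ⟨i + k⟩
  have fwd : ∀ (k : ℕ) (i : Fin n) (hk : k ≤ a i) (h : (i : ℕ) + k < n),
      k ≤ b ⟨(i : ℕ) + k, h⟩ := by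
    intro k i hk h
    rcases Nat.eq_zero_or_pos k with rfl | hkpos
    · exact Nat.zero_le _
    simp only [hb]
    calc k = (Finset.range k).card := (Finset.card_range k).symm
      _ ≤ _ := by
        apply Finset.card_le_card_of_injOn
          (f := fun m => (⟨(i : ℕ) + min m (k - 1), by
            have := harea₁ i; omega⟩ : Fin n))
        · intro m hm
          simp only [Finset.mem_coe, Finset.mem_range] at hm
          have hmin : min m (k - 1) = m := by omega
          simp only [Finset.mem_coe, Finset.mem_filter, Finset.mem_univ, true_and]
          refine ⟨?_, ?_⟩
          · rw [Fin.lt_def]; simp [hmin]; omega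
          · simp only [Fin.val_mk, hmin]
            have := mono i ⟨(i : ℕ) + m, by have := harea₁ i; omega⟩ (by simp)
            simp only [Fin.val_mk] at this
            omega
        · intro m₁ h₁ m₂ h₂ hfe
          simp only [Finset.mem_coe, Finset.mem_range] at h₁ h₂
          have := congrArg Fin.val hfe
          simp only [Fin.val_mk] at this
          omega
  -- b j ≤ j
  have bj_le : ∀ j : Fin n, b j ≤ (j : ℕ) := by
    intro j
    have : b j ≤ (Finset.range (j : ℕ)).card := Finset.card_le_card_of_injOn
      (f := Fin.val)
      (fun i hi => by
        simp only [Finset.mem_coe, Finset.mem_filter, Finset.mem_univ, true_and] at hi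
        simp only [Finset.mem_coe, Finset.mem_range]
        exact hi.1)
      (fun i _ i' _ hh => Fin.ext hh)
    simpa using this
  have rev : ∀ (k : ℕ) (j : Fin n), k ≤ b j → k ≤ (j : ℕ) ∧
      ∀ h : (j : ℕ) - k < n, k ≤ a ⟨(j : ℕ) - k, h⟩ := by
    intro k j hkb
    have hkj : k ≤ (j : ℕ) := le_trans hkb (bj_le j)
    refine ⟨hkj, fun h => ?_⟩
    by_contra hcon
    push_neg at hcon
    have hsub : b j ≤ (Finset.Ioo ((j : ℕ) - k) (j : ℕ)).card := by
      apply Finset.card_le_card_of_injOn (f := Fin.val)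
      · intro i hi
        simp only [Finset.mem_coe, Finset.mem_filter, Finset.mem_univ, true_and] at hi
        obtain ⟨hij, hja⟩ := hi
        simp only [Finset.mem_coe, Finset.mem_Ioo]
        refine ⟨?_, hij⟩
        by_contra hle
        push_neg at hle
        have := mono i ⟨(j : ℕ) - k, h⟩ (by simpa using hle)
        simp only [Fin.val_mk] at this
        omega
      · exact fun i _ i' _ hh => Fin.ext hh
    rw [Nat.card_Ioo] at hsub
    omega
  -- key: counts of ≥ k agree
  have key : ∀ k : ℕ,
      (Finset.univ.filter (fun i : Fin n => k ≤ a i)).card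
        = (Finset.univ.filter (fun j : Fin n => k ≤ b j)).card := by
    intro k
    refine Finset.card_bij (fun i hi => (⟨(i : ℕ) + k, ?_⟩ : Fin n)) ?_ ?_ ?_
    · simp only [Finset.mem_filter, Finset.mem_univ, true_and] at hi
      have := harea₁ i; omega
    · intro i hi
      simp only [Finset.mem_filter, Finset.mem_univ, true_and] at hi ⊢
      exact fwd k i hi _
    · intro i₁ h₁ i₂ h₂ heq
      have := congrArg Fin.val heq
      simp only [Fin.val_mk] at this
      exact Fin.ext (by omega)
    · intro j hj
      simp only [Finset.mem_filter, Finset.mem_univ, true_and] at hj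
      obtain ⟨hkj, ha⟩ := rev k j hj
      have hlt : (j : ℕ) - k < n := by have := j.isLt; omega
      refine ⟨⟨(j : ℕ) - k, hlt⟩, ?_, ?_⟩
      · simp only [Finset.mem_filter, Finset.mem_univ, true_and]
        exact ha hlt
      · exact Fin.ext (by simp; omega)
  -- counts of = v agree
  have keyv : ∀ v : ℕ,
      (Finset.univ.filter (fun i : Fin n => a i = v)).card
        = (Finset.univ.filter (fun j : Fin n => b j = v)).card := by
    intro v
    have split : ∀ c : Fin n → ℕ,
        (Finset.univ.filter (fun i : Fin n => v ≤ c i)).card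
          = (Finset.univ.filter (fun i : Fin n => c i = v)).card
            + (Finset.univ.filter (fun i : Fin n => v + 1 ≤ c i)).card := by
      intro c
      rw [← Finset.card_union_of_disjoint]
      · congr 1
        ext i
        simp only [Finset.mem_filter, Finset.mem_union, Finset.mem_univ, true_and]
        omega
      · rw [Finset.disjoint_left]
        intro x hx hx'
        simp only [Finset.mem_filter, Finset.mem_univ, true_and] at hx hx'
        omega
    have h1 := split a
    have h2 := split b
    have := key v
    have := key (v + 1)
    omega
  -- conclude multiset equality via counts
  ext v
  have lhs : Multiset.count v (Multiset.map a Finset.univ.val)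
      = (Finset.univ.filter (fun i : Fin n => a i = v)).card := by
    rw [Multiset.count_map]
    rw [show (Finset.univ.filter (fun i : Fin n => a i = v)).card
        = Multiset.card (Multiset.filter (fun i => a i = v) Finset.univ.val) from rfl]
    simp [eq_comm]
  have rhs : Multiset.count v (Multiset.map b Finset.univ.val)
      = (Finset.univ.filter (fun j : Fin n => b j = v)).card := by
    rw [Multiset.count_map]
    rw [show (Finset.univ.filter (fun j : Fin n => b j = v)).card
        = Multiset.card (Multiset.filter (fun j => b j = v) Finset.univ.val) from rfl]
    simp [eq_comm]
  rw [lhs, rhs, keyv v]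
end

section
/- For a unit interval graph Γ_a on n vertices with area sequence a, the generating function over acyclic orientations weighted by number of ascending edges satisfies: the sum over all acyclic orientations θ of q^{asc(θ)} equals the product over i from 1 to n of the q-integer [a_i + 1]_q. -/
open Finset Polynomial

open scoped Classical

lemma mem_uigEdges {n : ℕ} {a : Fin n → ℕ} {p : Fin n × Fin n} :
    p ∈ uigEdges n a ↔ p.1 < p.2 ∧ (p.2 : ℕ) ≤ (p.1 : ℕ) + a p.1 := by
  simp [uigEdges]

lemma add_a_mono {n : ℕ} {a : Fin n → ℕ}
    (harea₂ : ∀ i j : Fin n, (i : ℕ) + 1 = (j : ℕ) → a i ≤ a j + 1) :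
    ∀ d (i j : Fin n), (j : ℕ) = (i : ℕ) + d → (i : ℕ) + a i ≤ (j : ℕ) + a j := by
  intro d
  induction d with
  | zero =>
    intro i j h
    have : i = j := Fin.ext (by omega)
    subst this; omega
  | succ d ih =>
    intro i j h
    have hj := j.isLt
    have hlt : (i : ℕ) + d < n := by omega
    have h1 := ih i ⟨(i : ℕ) + d, hlt⟩ rfl
    have h2 := harea₂ ⟨(i : ℕ) + d, hlt⟩ j (by simp; omega)
    simp at h1 h2
    omega

section Step
variable {n : ℕ} (a : Fin (n + 1) → ℕ)

/-- embedding of edges of the truncated graph -/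
def er (p : Fin n × Fin n) : Fin (n + 1) × Fin (n + 1) := (p.1.succ, p.2.succ)

lemma er_inj : Function.Injective (er (n := n)) := by
  intro p q h
  simp [er, Prod.ext_iff, Fin.succ_inj] at h
  exact Prod.ext h.1 h.2

def aTail : Fin n → ℕ := fun i => a i.succ

lemma er_mem_uig {p : Fin n × Fin n} :
    er p ∈ uigEdges (n + 1) a ↔ p ∈ uigEdges n (aTail a) := by
  simp only [mem_uigEdges, er, aTail]
  constructor
  · rintro ⟨h1, h2⟩
    refine ⟨?_, ?_⟩
    · exact Fin.succ_lt_succ_iff.mp h1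
    · simp only [Fin.val_succ] at h2 ⊢; omega
  · rintro ⟨h1, h2⟩
    refine ⟨?_, ?_⟩
    · exact Fin.succ_lt_succ_iff.mpr h1
    · simp only [Fin.val_succ]; omega

/-- restriction of an ascending-edge set to the truncated graph -/
def res (A : Finset (Fin (n + 1) × Fin (n + 1))) : Finset (Fin n × Fin n) :=
  Finset.univ.filter (fun p => er p ∈ A)

lemma mem_res {A : Finset (Fin (n + 1) × Fin (n + 1))} {p : Fin n × Fin n} :
    p ∈ res A ↔ er p ∈ A := by simp [res]

lemma orientRel_res {A : Finset (Fin (n + 1) × Fin (n + 1))} {u w : Fin n} :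
    orientRel n (aTail a) (res A) u w ↔ orientRel (n + 1) a A u.succ w.succ := by
  simp only [orientRel, mem_res]
  constructor
  · rintro (h | ⟨h1, h2⟩)
    · exact Or.inl h
    · exact Or.inr ⟨(er_mem_uig a).2 h1, fun hc => h2 hc⟩
  · rintro (h | ⟨h1, h2⟩)
    · exact Or.inl h
    · exact Or.inr ⟨(er_mem_uig a).1 h1, fun hc => h2 hc⟩

lemma orientRel_down {A : Finset (Fin (n + 1) × Fin (n + 1))} {x y : Fin (n + 1)}
    (hx : x ≠ 0) (hy : y ≠ 0) (h : orientRel (n + 1) a A x y) :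
    orientRel n (aTail a) (res A) (x.pred hx) (y.pred hy) := by
  rw [orientRel_res, Fin.succ_pred, Fin.succ_pred]
  exact h

/-- the relation on nonzero vertices -/
def rnz (A : Finset (Fin (n + 1) × Fin (n + 1))) (x y : Fin (n + 1)) : Prop :=
  orientRel (n + 1) a A x y ∧ x ≠ 0 ∧ y ≠ 0

lemma rnz_acyclic {A : Finset (Fin (n + 1) × Fin (n + 1))}
    (hB : ∀ z, ¬ Relation.TransGen (orientRel n (aTail a) (res A)) z z) :
    ∀ x, ¬ Relation.TransGen (rnz a A) x x := by
  have key : ∀ x y, Relation.TransGen (rnz a A) x y →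
      ∀ (hx : x ≠ 0) (hy : y ≠ 0),
        Relation.TransGen (orientRel n (aTail a) (res A)) (x.pred hx) (y.pred hy) := by
    intro x y h
    induction h with
    | single h => intro hx hy; exact Relation.TransGen.single (orientRel_down a hx hy h.1)
    | tail _ h ih =>
      intro hx hz
      exact (ih hx h.2.1).tail (orientRel_down a h.2.1 hz h.1)
  intro x hx
  rcases Relation.TransGen.head'_iff.1 hx with ⟨y, hxy, _⟩
  have hx0 : x ≠ 0 := hxy.2.1
  exact hB _ (key x x hx hx0 hx0)


def inS (A : Finset (Fin (n + 1) × Fin (n + 1))) (j : Fin (n + 1)) : Prop :=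
  ((0 : Fin (n + 1)), j) ∈ A

def outS (A : Finset (Fin (n + 1) × Fin (n + 1))) (j : Fin (n + 1)) : Prop :=
  ((0 : Fin (n + 1)), j) ∈ uigEdges (n + 1) a ∧ ((0 : Fin (n + 1)), j) ∉ A

def bad (A : Finset (Fin (n + 1) × Fin (n + 1))) : Prop :=
  ∃ v w, inS A v ∧ outS a A w ∧ Relation.ReflTransGen (rnz a A) v w

variable {A : Finset (Fin (n + 1) × Fin (n + 1))}

lemma step00 (hA : A ⊆ uigEdges (n + 1) a) : ¬ orientRel (n + 1) a A 0 0 := by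
  rintro (h | ⟨h, -⟩)
  · exact absurd (mem_uigEdges.1 (hA h)).1 (lt_irrefl _)
  · exact absurd (mem_uigEdges.1 h).1 (lt_irrefl _)

lemma step0y {y : Fin (n + 1)} (h : orientRel (n + 1) a A 0 y) : inS A y := by
  rcases h with h | ⟨h, -⟩
  · exact h
  · exact absurd (mem_uigEdges.1 h).1 (by simp [Fin.lt_def])

lemma stepx0 {x : Fin (n + 1)} (hA : A ⊆ uigEdges (n + 1) a)
    (h : orientRel (n + 1) a A x 0) : outS a A x := by
  rcases h with h | ⟨h1, h2⟩
  · exact absurd (mem_uigEdges.1 (hA h)).1 (by simp [Fin.lt_def])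
  · exact ⟨h1, h2⟩

lemma structure_lemma (hA : A ⊆ uigEdges (n + 1) a) :
    ∀ x y : Fin (n + 1), Relation.TransGen (orientRel (n + 1) a A) x y →
      bad a A ∨
      (x = 0 ∧ y ≠ 0 ∧ ∃ v, inS A v ∧ Relation.ReflTransGen (rnz a A) v y) ∨
      (x ≠ 0 ∧ y = 0 ∧ ∃ w, outS a A w ∧ Relation.ReflTransGen (rnz a A) x w) ∨
      (x ≠ 0 ∧ y ≠ 0 ∧ (Relation.TransGen (rnz a A) x y ∨
        ((∃ w, outS a A w ∧ Relation.ReflTransGen (rnz a A) x w) ∧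
         (∃ v, inS A v ∧ Relation.ReflTransGen (rnz a A) v y)))) := by
  intro x y h
  induction h with
  | single h' =>
    rename_i y'
    by_cases hx : x = 0 <;> by_cases hy : y' = 0
    · subst hx; subst hy; exact absurd h' (step00 a hA)
    · subst hx
      exact Or.inr (Or.inl ⟨rfl, hy, _, step0y a h', Relation.ReflTransGen.refl⟩)
    · subst hy
      exact Or.inr (Or.inr (Or.inl ⟨hx, rfl, _, stepx0 a hA h', Relation.ReflTransGen.refl⟩))
    · exact Or.inr (Or.inr (Or.inr ⟨hx, hy,
        Or.inl (Relation.TransGen.single ⟨h', hx, hy⟩)⟩))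
  | tail hxy hyz ih =>
    rename_i y' z'
    rcases ih with hbad | ⟨hx0, hy, v, hv, hrv⟩ | ⟨hx, hy0, w, hw, hrw⟩ |
        ⟨hx, hy, htg | ⟨⟨w, hw, hrw⟩, v, hv, hrv⟩⟩
    · exact Or.inl hbad
    · -- x = 0, y' ≠ 0
      by_cases hz : z' = 0
      · subst hz
        exact Or.inl ⟨v, y', hv, stepx0 a hA hyz, hrv⟩
      · exact Or.inr (Or.inl ⟨hx0, hz, v, hv, hrv.tail ⟨hyz, hy, hz⟩⟩)
    · -- x ≠ 0, y' = 0
      subst hy0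
      by_cases hz : z' = 0
      · subst hz; exact absurd hyz (step00 a hA)
      · exact Or.inr (Or.inr (Or.inr ⟨hx, hz, Or.inr
          ⟨⟨w, hw, hrw⟩, z', step0y a hyz, Relation.ReflTransGen.refl⟩⟩))
    · -- x ≠ 0, y' ≠ 0, TransGen rnz x y'
      by_cases hz : z' = 0
      · subst hz
        exact Or.inr (Or.inr (Or.inl ⟨hx, rfl, y', stepx0 a hA hyz,
          htg.to_reflTransGen⟩))
      · exact Or.inr (Or.inr (Or.inr ⟨hx, hz, Or.inl (htg.tail ⟨hyz, hy, hz⟩)⟩))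
    · -- x ≠ 0, y' ≠ 0, pair case
      by_cases hz : z' = 0
      · subst hz
        exact Or.inl ⟨v, y', hv, stepx0 a hA hyz, hrv⟩
      · exact Or.inr (Or.inr (Or.inr ⟨hx, hz, Or.inr
          ⟨⟨w, hw, hrw⟩, v, hv, hrv.tail ⟨hyz, hy, hz⟩⟩⟩))


lemma clique_edge (harea₂ : ∀ i j : Fin (n + 1), (i : ℕ) + 1 = (j : ℕ) → a i ≤ a j + 1)
    {v w : Fin (n + 1)} (hlt : (v : ℕ) < (w : ℕ)) (hw : (w : ℕ) ≤ a 0) :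
    (v, w) ∈ uigEdges (n + 1) a := by
  have h0 : ((0 : Fin (n + 1)) : ℕ) + a 0 ≤ (v : ℕ) + a v := by
    have := add_a_mono harea₂ (v : ℕ) 0 v (by simp)
    simpa using this
  refine mem_uigEdges.2 ⟨Fin.lt_def.mpr hlt, ?_⟩
  · show (w : ℕ) ≤ (v : ℕ) + a v
    simp at h0; omega

lemma bad_refute (hA : A ⊆ uigEdges (n + 1) a)
    (harea₂ : ∀ i j : Fin (n + 1), (i : ℕ) + 1 = (j : ℕ) → a i ≤ a j + 1)
    (hnz : ∀ z, ¬ Relation.TransGen (rnz a A) z z)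
    (hS : ∀ v w, inS A v → outS a A w → ¬ orientRel (n + 1) a A v w) :
    ¬ bad a A := by
  rintro ⟨v, w, hv, hw, hrt⟩
  have hvE := mem_uigEdges.1 (hA hv)
  have hwE := mem_uigEdges.1 hw.1
  simp only [Fin.lt_def] at hvE hwE
  have hv0 : v ≠ 0 := by
    intro h; subst h; simp at hvE
  have hw0 : w ≠ 0 := by
    intro h; subst h; simp at hwE
  rcases Relation.reflTransGen_iff_eq_or_transGen.mp hrt with heq | htg
  · subst heq; exact hw.2 hv
  · have hvw : v ≠ w := by
      intro h; subst h; exact hnz v htg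
    by_cases hlt : (v : ℕ) < (w : ℕ)
    · have he : (v, w) ∈ uigEdges (n + 1) a := clique_edge a harea₂ hlt (by
        have := hwE.2; simpa using this)
      by_cases hm : (v, w) ∈ A
      · exact hS v w hv hw (Or.inl hm)
      · exact hnz w ((Relation.TransGen.single ⟨Or.inr ⟨he, hm⟩, hw0, hv0⟩).trans htg)
    · have hlt' : (w : ℕ) < (v : ℕ) := by
        have : (v : ℕ) ≠ (w : ℕ) := fun h => hvw (Fin.ext h)
        omega
      have he : (w, v) ∈ uigEdges (n + 1) a := clique_edge a harea₂ hlt' (by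
        have := hvE.2; simpa using this)
      by_cases hm : (w, v) ∈ A
      · exact hnz v (htg.tail ⟨Or.inl hm, hw0, hv0⟩)
      · exact hS v w hv hw (Or.inr ⟨he, hm⟩)

lemma acyclic_of_parts (hA : A ⊆ uigEdges (n + 1) a)
    (harea₂ : ∀ i j : Fin (n + 1), (i : ℕ) + 1 = (j : ℕ) → a i ≤ a j + 1)
    (hB : ∀ z, ¬ Relation.TransGen (orientRel n (aTail a) (res A)) z z)
    (hS : ∀ v w, inS A v → outS a A w → ¬ orientRel (n + 1) a A v w) :
    ∀ x, ¬ Relation.TransGen (orientRel (n + 1) a A) x x := by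
  have hnz := rnz_acyclic a hB
  have hnb := bad_refute a hA harea₂ hnz hS
  intro x hx
  rcases structure_lemma a hA x x hx with hbad | ⟨h1, h2, -⟩ | ⟨h1, h2, -⟩ |
      ⟨hx0, -, htg | ⟨⟨w, hw, hrw⟩, v, hv, hrv⟩⟩
  · exact hnb hbad
  · exact h2 h1
  · exact h1 h2
  · exact hnz x htg
  · exact hnb ⟨v, w, hv, hw, hrv.trans hrw⟩

lemma upclosed_of_acyclic
    (hacy : ∀ x, ¬ Relation.TransGen (orientRel (n + 1) a A) x x) :
    ∀ v w, inS A v → outS a A w → ¬ orientRel (n + 1) a A v w := by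
  intro v w hv hw hvw
  have s1 : orientRel (n + 1) a A 0 v := Or.inl hv
  have s3 : orientRel (n + 1) a A w 0 := Or.inr ⟨hw.1, hw.2⟩
  exact hacy 0 (((Relation.TransGen.single s1).tail hvw).tail s3)


variable (B : Finset (Fin n × Fin n))

def A0 : Finset (Fin (n + 1) × Fin (n + 1)) := B.image (er)

def NN : Finset (Fin (n + 1)) :=
  Finset.univ.filter (fun j => ((0 : Fin (n + 1)), j) ∈ uigEdges (n + 1) a)

def SA (A : Finset (Fin (n + 1) × Fin (n + 1))) : Finset (Fin (n + 1)) :=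
  Finset.univ.filter (fun j => ((0 : Fin (n + 1)), j) ∈ A)

lemma mem_NN {j : Fin (n + 1)} :
    j ∈ NN a ↔ 0 < (j : ℕ) ∧ (j : ℕ) ≤ a 0 := by
  simp only [NN, Finset.mem_filter, Finset.mem_univ, true_and, mem_uigEdges]
  constructor
  · rintro ⟨h1, h2⟩
    exact ⟨by simpa using Fin.lt_def.mp h1, by simpa using h2⟩
  · rintro ⟨h1, h2⟩
    exact ⟨Fin.lt_def.mpr (by simpa using h1), by simpa using h2⟩

lemma mem_SA {A : Finset (Fin (n + 1) × Fin (n + 1))} {j : Fin (n + 1)} :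
    j ∈ SA A ↔ ((0 : Fin (n + 1)), j) ∈ A := by simp [SA]

lemma A0_sub (hB : B ⊆ uigEdges n (aTail a)) : A0 B ⊆ uigEdges (n + 1) a := by
  intro p hp
  rcases Finset.mem_image.1 hp with ⟨q, hq, rfl⟩
  exact (er_mem_uig a).2 (hB hq)

lemma res_A0 : res (A0 B) = B := by
  ext p
  simp only [mem_res, A0, Finset.mem_image]
  constructor
  · rintro ⟨q, hq, hqe⟩
    rwa [er_inj hqe] at hq
  · intro hp; exact ⟨p, hp, rfl⟩

lemma A0_fst_ne_zero {p : Fin (n + 1) × Fin (n + 1)} (hp : p ∈ A0 B) : p.1 ≠ 0 := by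
  rcases Finset.mem_image.1 hp with ⟨q, hq, rfl⟩
  exact Fin.succ_ne_zero _

lemma mem_iff_mem_A0 {A : Finset (Fin (n + 1) × Fin (n + 1))}
    (hA : A ⊆ uigEdges (n + 1) a) (hres : res A = B)
    {p : Fin (n + 1) × Fin (n + 1)} (hp : p.1 ≠ 0) : p ∈ A ↔ p ∈ A0 B := by
  constructor
  · intro h
    have he := mem_uigEdges.1 (hA h)
    have hp2 : p.2 ≠ 0 := by
      intro h2
      rw [h2] at he
      exact absurd he.1 (by simp [Fin.lt_def])
    have : p = er ((p.1.pred hp), (p.2.pred hp2)) := by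
      simp [er]
    rw [this] at h ⊢
    rw [A0, Finset.mem_image]
    exact ⟨_, by rw [← hres, mem_res]; exact h, rfl⟩
  · intro h
    rcases Finset.mem_image.1 h with ⟨q, hq, rfl⟩
    rw [← hres, mem_res] at hq
    exact hq

lemma orientRel_iff_A0 {A : Finset (Fin (n + 1) × Fin (n + 1))}
    (hA : A ⊆ uigEdges (n + 1) a) (hres : res A = B)
    {x y : Fin (n + 1)} (hx : x ≠ 0) (hy : y ≠ 0) :
    orientRel (n + 1) a A x y ↔ orientRel (n + 1) a (A0 B) x y := by
  unfold orientRel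
  rw [mem_iff_mem_A0 a B hA hres (p := (x, y)) hx,
    mem_iff_mem_A0 a B hA hres (p := (y, x)) hy]

lemma rnz_iff_A0 {A : Finset (Fin (n + 1) × Fin (n + 1))}
    (hA : A ⊆ uigEdges (n + 1) a) (hres : res A = B) {x y : Fin (n + 1)} :
    rnz a A x y ↔ rnz a (A0 B) x y := by
  unfold rnz
  constructor
  · rintro ⟨h, hx, hy⟩
    exact ⟨(orientRel_iff_A0 a B hA hres hx hy).1 h, hx, hy⟩
  · rintro ⟨h, hx, hy⟩
    exact ⟨(orientRel_iff_A0 a B hA hres hx hy).2 h, hx, hy⟩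

lemma stp_acyclic (hBa : ∀ z, ¬ Relation.TransGen (orientRel n (aTail a) B) z z) :
    ∀ z, ¬ Relation.TransGen (rnz a (A0 B)) z z := by
  apply rnz_acyclic
  rw [res_A0]
  exact hBa


section Order

lemma NN_ne_zero {j : Fin (n + 1)} (hj : j ∈ NN a) : j ≠ 0 := by
  intro h
  rw [h] at hj
  simpa using (mem_NN a).1 hj

lemma stp_total (harea₂ : ∀ i j : Fin (n + 1), (i : ℕ) + 1 = (j : ℕ) → a i ≤ a j + 1)
    {v w : Fin (n + 1)} (hv : v ∈ NN a) (hw : w ∈ NN a) (hvw : v ≠ w) :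
    rnz a (A0 B) v w ∨ rnz a (A0 B) w v := by
  have hv' := (mem_NN a).1 hv
  have hw' := (mem_NN a).1 hw
  have hv0 := NN_ne_zero a hv
  have hw0 := NN_ne_zero a hw
  by_cases hlt : (v : ℕ) < (w : ℕ)
  · have he := clique_edge a harea₂ hlt hw'.2
    by_cases hm : (v, w) ∈ A0 B
    · exact Or.inl ⟨Or.inl hm, hv0, hw0⟩
    · exact Or.inr ⟨Or.inr ⟨he, hm⟩, hw0, hv0⟩
  · have hlt' : (w : ℕ) < (v : ℕ) := by
      have : (v : ℕ) ≠ (w : ℕ) := fun h => hvw (Fin.ext h)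
      omega
    have he := clique_edge a harea₂ hlt' hv'.2
    by_cases hm : (w, v) ∈ A0 B
    · exact Or.inr ⟨Or.inl hm, hw0, hv0⟩
    · exact Or.inl ⟨Or.inr ⟨he, hm⟩, hv0, hw0⟩

lemma stp_trans (harea₂ : ∀ i j : Fin (n + 1), (i : ℕ) + 1 = (j : ℕ) → a i ≤ a j + 1)
    (hBa : ∀ z, ¬ Relation.TransGen (orientRel n (aTail a) B) z z)
    {v w u : Fin (n + 1)} (hv : v ∈ NN a) (hu : u ∈ NN a)
    (h1 : rnz a (A0 B) v w) (h2 : rnz a (A0 B) w u) : rnz a (A0 B) v u := by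
  have hstp := stp_acyclic a B hBa
  have hvu : v ≠ u := by
    rintro rfl
    exact hstp v ((Relation.TransGen.single h1).tail h2)
  rcases stp_total a B harea₂ hv hu hvu with h | h
  · exact h
  · exact absurd (((Relation.TransGen.single h1).tail h2).tail h) (hstp v)

noncomputable def gdeg (v : Fin (n + 1)) : ℕ := ((NN a).filter (fun u => rnz a (A0 B) v u)).card

lemma gdeg_lt (harea₂ : ∀ i j : Fin (n + 1), (i : ℕ) + 1 = (j : ℕ) → a i ≤ a j + 1)
    (hBa : ∀ z, ¬ Relation.TransGen (orientRel n (aTail a) B) z z)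
    {v u : Fin (n + 1)} (hv : v ∈ NN a) (hu : u ∈ NN a)
    (h : rnz a (A0 B) v u) : gdeg a B u < gdeg a B v := by
  have hstp := stp_acyclic a B hBa
  apply Finset.card_lt_card
  rw [Finset.ssubset_iff_of_subset]
  · exact ⟨u, Finset.mem_filter.2 ⟨hu, h⟩, fun hc =>
      hstp u (Relation.TransGen.single (Finset.mem_filter.1 hc).2)⟩
  · intro x hx
    rcases Finset.mem_filter.1 hx with ⟨hxN, hux⟩
    exact Finset.mem_filter.2 ⟨hxN, stp_trans a B harea₂ hBa hv hxN h hux⟩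

def Valid (S : Finset (Fin (n + 1))) : Prop :=
  S ⊆ NN a ∧ ∀ v ∈ S, ∀ w ∈ NN a, w ∉ S → ¬ rnz a (A0 B) v w

lemma card_NN (ha1 : a 0 ≤ n) : (NN a).card = a 0 := by
  have : (NN a).card = (Finset.Icc 1 (a 0)).card := by
    refine Finset.card_bij (fun (j : Fin (n + 1)) _ => (j : ℕ)) ?_ ?_ ?_
    · intro j hj
      rcases (mem_NN a).1 hj with ⟨h1, h2⟩
      exact Finset.mem_Icc.2 ⟨h1, h2⟩
    · intro j₁ h₁ j₂ h₂ h
      exact Fin.ext h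
    · intro m hm
      rcases Finset.mem_Icc.1 hm with ⟨h1, h2⟩
      refine ⟨⟨m, by omega⟩, (mem_NN a).2 ⟨by show 0 < m; omega, by simpa using h2⟩, rfl⟩
  rw [this, Nat.card_Icc]
  omega

lemma exists_valid (harea₂ : ∀ i j : Fin (n + 1), (i : ℕ) + 1 = (j : ℕ) → a i ≤ a j + 1)
    (hBa : ∀ z, ¬ Relation.TransGen (orientRel n (aTail a) B) z z)
    (ha1 : a 0 ≤ n) :
    ∀ k, k ≤ a 0 → ∃ S, Valid a B S ∧ S.card = k := by
  intro k
  induction k with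
  | zero =>
    intro _
    exact ⟨∅, ⟨Finset.empty_subset _, by simp⟩, Finset.card_empty⟩
  | succ k ih =>
    intro hk
    rcases ih (by omega) with ⟨S, hS, hcard⟩
    have hne : (NN a \ S).Nonempty := by
      rw [Finset.sdiff_nonempty]
      intro hsub
      have := Finset.card_le_card hsub
      rw [card_NN a ha1] at this
      omega
    obtain ⟨w, hw, hmin⟩ := Finset.exists_min_image (NN a \ S) (gdeg a B) hne
    rcases Finset.mem_sdiff.1 hw with ⟨hwN, hwS⟩
    refine ⟨insert w S, ⟨Finset.insert_subset hwN hS.1, ?_⟩, ?_⟩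
    · intro v hv u hu hu'
      have huS : u ∉ S := fun hc => hu' (Finset.mem_insert_of_mem hc)
      rcases Finset.mem_insert.1 hv with rfl | hvS
      · intro hc
        have := gdeg_lt a B harea₂ hBa hwN hu hc
        have := hmin u (Finset.mem_sdiff.2 ⟨hu, huS⟩)
        omega
      · exact hS.2 v hvS u hu huS
    · rw [Finset.card_insert_of_notMem hwS, hcard]

lemma valid_card_inj (harea₂ : ∀ i j : Fin (n + 1), (i : ℕ) + 1 = (j : ℕ) → a i ≤ a j + 1)
    {S T : Finset (Fin (n + 1))} (hS : Valid a B S)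
    (hT : Valid a B T) (h : S.card = T.card) : S = T := by
  have hsub : S ⊆ T ∨ T ⊆ S := by
    by_contra hc
    push_neg at hc
    rcases Finset.not_subset.1 hc.1 with ⟨v, hvS, hvT⟩
    rcases Finset.not_subset.1 hc.2 with ⟨w, hwT, hwS⟩
    have hvw : v ≠ w := fun hc => hwS (hc ▸ hvS)
    rcases stp_total a B harea₂ (hS.1 hvS) (hT.1 hwT) hvw with hst | hst
    · exact hS.2 v hvS w (hT.1 hwT) hwS hst
    · exact hT.2 w hwT v (hS.1 hvS) hvT hst
  rcases hsub with hsub | hsub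
  · exact Finset.eq_of_subset_of_card_le hsub (by omega)
  · exact (Finset.eq_of_subset_of_card_le hsub (by omega)).symm

end Order

section Fiber

def extA (S : Finset (Fin (n + 1))) : Finset (Fin (n + 1) × Fin (n + 1)) :=
  A0 B ∪ S.image (fun j => ((0 : Fin (n + 1)), j))

lemma mem_NN_edge {j : Fin (n + 1)} :
    j ∈ NN a ↔ ((0 : Fin (n + 1)), j) ∈ uigEdges (n + 1) a := by simp [NN]

lemma Ext_sub (hBsub : B ⊆ uigEdges n (aTail a)) {S : Finset (Fin (n + 1))}
    (hSN : S ⊆ NN a) : extA B S ⊆ uigEdges (n + 1) a := by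
  intro p hp
  rcases Finset.mem_union.1 hp with hp | hp
  · exact A0_sub a B hBsub hp
  · rcases Finset.mem_image.1 hp with ⟨j, hj, rfl⟩
    exact (mem_NN_edge a).1 (hSN hj)

lemma res_Ext {S : Finset (Fin (n + 1))} : res (extA B S) = B := by
  ext p
  simp only [mem_res, extA, Finset.mem_union, Finset.mem_image]
  constructor
  · rintro (hp | ⟨j, hj, hje⟩)
    · rcases Finset.mem_image.1 hp with ⟨q, hq, hqe⟩
      rwa [← er_inj hqe]
    · exact absurd (congrArg Prod.fst hje) (by simp [er, (Fin.succ_ne_zero p.1).symm])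
  · intro hp
    exact Or.inl (Finset.mem_image.2 ⟨p, hp, rfl⟩)

lemma SA_Ext {S : Finset (Fin (n + 1))} : SA (extA B S) = S := by
  ext j
  simp only [mem_SA, extA, Finset.mem_union, Finset.mem_image]
  constructor
  · rintro (hp | ⟨j', hj', hje⟩)
    · exact absurd rfl (A0_fst_ne_zero B hp)
    · have h2 := congrArg Prod.snd hje
      simp only at h2
      rwa [← h2]
  · intro hj
    exact Or.inr ⟨j, hj, rfl⟩

lemma card_Ext {S : Finset (Fin (n + 1))} :
    (extA B S).card = B.card + S.card := by
  have hdisj : Disjoint (A0 B) (S.image (fun j => ((0 : Fin (n + 1)), j))) := by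
    rw [Finset.disjoint_left]
    intro p hp hp'
    rcases Finset.mem_image.1 hp' with ⟨j, hj, rfl⟩
    exact A0_fst_ne_zero B hp rfl
  rw [extA, Finset.card_union_of_disjoint hdisj, A0,
    Finset.card_image_of_injective _ (er_inj),
    Finset.card_image_of_injective _ (fun x y h => (Prod.ext_iff.1 h).2)]

lemma Ext_acyclic (harea₂ : ∀ i j : Fin (n + 1), (i : ℕ) + 1 = (j : ℕ) → a i ≤ a j + 1)
    (hBsub : B ⊆ uigEdges n (aTail a))
    (hBa : ∀ z, ¬ Relation.TransGen (orientRel n (aTail a) B) z z)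
    {S : Finset (Fin (n + 1))} (hV : Valid a B S) :
    ∀ x, ¬ Relation.TransGen (orientRel (n + 1) a (extA B S)) x x := by
  have hsub := Ext_sub a B hBsub hV.1
  apply acyclic_of_parts a hsub harea₂
  · rw [res_Ext]; exact hBa
  · intro v w hv hw hvw
    have hvS : v ∈ S := by
      have h' := (mem_SA (A := extA B S)).2 hv
      rwa [SA_Ext] at h'
    have hwN : w ∈ NN a := (mem_NN_edge a).2 hw.1
    have hwS : w ∉ S := by
      intro hc
      have h' : w ∈ SA (extA B S) := by rw [SA_Ext]; exact hc
      exact hw.2 ((mem_SA).1 h')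
    have hv0 : v ≠ 0 := NN_ne_zero a (hV.1 hvS)
    have hw0 : w ≠ 0 := NN_ne_zero a hwN
    have : orientRel (n + 1) a (A0 B) v w :=
      (orientRel_iff_A0 a B hsub (res_Ext B) hv0 hw0).1 hvw
    exact hV.2 v hvS w hwN hwS ⟨this, hv0, hw0⟩

lemma decomp_valid {A : Finset (Fin (n + 1) × Fin (n + 1))}
    (hA : A ⊆ uigEdges (n + 1) a) (hres : res A = B)
    (hacy : ∀ x, ¬ Relation.TransGen (orientRel (n + 1) a A) x x) :
    Valid a B (SA A) := by
  constructor
  · intro j hj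
    exact (mem_NN_edge a).2 (hA ((mem_SA).1 hj))
  · intro v hv w hwN hwS hstp
    have hv0 : v ≠ 0 := by
      intro h
      have := mem_uigEdges.1 (hA ((mem_SA).1 hv))
      rw [h] at this
      exact absurd this.1 (by simp [Fin.lt_def])
    have hw0 : w ≠ 0 := NN_ne_zero a hwN
    have hor : orientRel (n + 1) a A v w :=
      (orientRel_iff_A0 a B hA hres hv0 hw0).2 hstp.1
    exact upclosed_of_acyclic a hacy v w ((mem_SA).1 hv)
      ⟨(mem_NN_edge a).1 hwN, fun hc => hwS ((mem_SA).2 hc)⟩ hor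

lemma decomp_eq {A : Finset (Fin (n + 1) × Fin (n + 1))}
    (hA : A ⊆ uigEdges (n + 1) a) (hres : res A = B) :
    A = extA B (SA A) := by
  ext p
  constructor
  · intro hp
    by_cases hp1 : p.1 = 0
    · have : p = ((0 : Fin (n + 1)), p.2) := by
        rw [← hp1]
      rw [this] at hp ⊢
      exact Finset.mem_union_right _ (Finset.mem_image.2 ⟨p.2, (mem_SA).2 hp, rfl⟩)
    · exact Finset.mem_union_left _ ((mem_iff_mem_A0 a B hA hres hp1).1 hp)
  · intro hp
    rcases Finset.mem_union.1 hp with hp | hp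
    · exact (mem_iff_mem_A0 a B hA hres (A0_fst_ne_zero B hp)).2 hp
    · rcases Finset.mem_image.1 hp with ⟨j, hj, rfl⟩
      exact (mem_SA).1 hj


lemma fiber_sum (harea₂ : ∀ i j : Fin (n + 1), (i : ℕ) + 1 = (j : ℕ) → a i ≤ a j + 1)
    (ha1 : a 0 ≤ n) (hBsub : B ⊆ uigEdges n (aTail a))
    (hBa : ∀ z, ¬ Relation.TransGen (orientRel n (aTail a) B) z z) :
    ∑ A ∈ ((uigEdges (n + 1) a).powerset.filter
        (fun A => ∀ x, ¬ Relation.TransGen (orientRel (n + 1) a A) x x)).filter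
        (fun A => res A = B),
      (Polynomial.X : Polynomial ℚ) ^ A.card
    = ∑ k ∈ Finset.range (a 0 + 1), (Polynomial.X : Polynomial ℚ) ^ (B.card + k) := by
  have hmem : ∀ A, A ∈ ((uigEdges (n + 1) a).powerset.filter
      (fun A => ∀ x, ¬ Relation.TransGen (orientRel (n + 1) a A) x x)).filter
      (fun A => res A = B) ↔ A ⊆ uigEdges (n + 1) a ∧
      (∀ x, ¬ Relation.TransGen (orientRel (n + 1) a A) x x) ∧ res A = B := by
    intro A
    simp only [Finset.mem_filter, Finset.mem_powerset]
    tauto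
  refine Finset.sum_bij (fun A _ => (SA A).card) ?_ ?_ ?_ ?_
  · intro A hA
    rcases (hmem A).1 hA with ⟨h1, h2, h3⟩
    have hV := decomp_valid a B h1 h3 h2
    have := Finset.card_le_card hV.1
    rw [card_NN a ha1] at this
    show (SA A).card ∈ Finset.range (a 0 + 1)
    exact Finset.mem_range.2 (by omega)
  · intro A₁ h₁ A₂ h₂ h
    rcases (hmem A₁).1 h₁ with ⟨h11, h12, h13⟩
    rcases (hmem A₂).1 h₂ with ⟨h21, h22, h23⟩
    have hV₁ := decomp_valid a B h11 h13 h12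
    have hV₂ := decomp_valid a B h21 h23 h22
    have hSS := valid_card_inj a B harea₂ hV₁ hV₂ h
    rw [decomp_eq a B h11 h13, decomp_eq a B h21 h23, hSS]
  · intro k hk
    rcases exists_valid a B harea₂ hBa ha1 k (by
      have := Finset.mem_range.1 hk; omega) with ⟨S, hV, hcard⟩
    refine ⟨extA B S, (hmem _).2 ⟨Ext_sub a B hBsub hV.1,
      Ext_acyclic a B harea₂ hBsub hBa hV, res_Ext B⟩, ?_⟩
    show (SA (extA B S)).card = k
    rw [SA_Ext, hcard]
  · intro A hA
    rcases (hmem A).1 hA with ⟨h1, h2, h3⟩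
    have : A.card = B.card + (SA A).card := by
      conv_lhs => rw [decomp_eq a B h1 h3]
      exact card_Ext B
    rw [this]

end Fiber
end Step

lemma gen_thm : ∀ (n : ℕ) (a : Fin n → ℕ),
    (∀ i : Fin n, (i : ℕ) + a i < n) →
    (∀ i j : Fin n, (i : ℕ) + 1 = (j : ℕ) → a i ≤ a j + 1) →
    ∑ A ∈ (uigEdges n a).powerset.filter
        (fun A => ∀ x : Fin n, ¬ Relation.TransGen (orientRel n a A) x x),
        (Polynomial.X : Polynomial ℚ) ^ A.card
      = ∏ i : Fin n, ∑ k ∈ Finset.range (a i + 1), (Polynomial.X : Polynomial ℚ) ^ k := by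
  intro n
  induction n with
  | zero =>
    intro a h1 h2
    have he : uigEdges 0 a = ∅ := by
      rw [uigEdges, Finset.univ_eq_empty, Finset.filter_empty]
    rw [he]
    simp only [Finset.powerset_empty, Finset.univ_eq_empty, Finset.prod_empty]
    rw [Finset.filter_singleton]
    simp only [if_pos (fun x : Fin 0 => x.elim0)]
    simp
  | succ n ih =>
    intro a h1 h2
    have h1' : ∀ i : Fin n, (i : ℕ) + aTail a i < n := by
      intro i
      have := h1 i.succ
      simp only [aTail, Fin.val_succ] at this ⊢
      omega
    have h2' : ∀ i j : Fin n, (i : ℕ) + 1 = (j : ℕ) → aTail a i ≤ aTail a j + 1 := by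
      intro i j h
      exact h2 i.succ j.succ (by simp only [Fin.val_succ]; omega)
    have ha1 : a 0 ≤ n := by
      have := h1 0
      simp at this
      omega
    have hmap : ∀ A ∈ (uigEdges (n + 1) a).powerset.filter
        (fun A => ∀ x, ¬ Relation.TransGen (orientRel (n + 1) a A) x x),
        res A ∈ (uigEdges n (aTail a)).powerset.filter
          (fun A => ∀ x, ¬ Relation.TransGen (orientRel n (aTail a) A) x x) := by
      intro A hA
      simp only [Finset.mem_filter, Finset.mem_powerset] at hA ⊢
      refine ⟨?_, ?_⟩
      · intro p hp
        exact (er_mem_uig a).1 (hA.1 ((mem_res).1 hp))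
      · intro z hz
        exact hA.2 z.succ (Relation.TransGen.lift Fin.succ
          (fun u w h => (orientRel_res a).1 h) z z hz)
    calc
      ∑ A ∈ (uigEdges (n + 1) a).powerset.filter
          (fun A => ∀ x, ¬ Relation.TransGen (orientRel (n + 1) a A) x x),
          (Polynomial.X : Polynomial ℚ) ^ A.card
        = ∑ B ∈ (uigEdges n (aTail a)).powerset.filter
            (fun A => ∀ x, ¬ Relation.TransGen (orientRel n (aTail a) A) x x),
            ∑ A ∈ ((uigEdges (n + 1) a).powerset.filter
              (fun A => ∀ x, ¬ Relation.TransGen (orientRel (n + 1) a A) x x)).filter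
              (fun A => res A = B),
              (Polynomial.X : Polynomial ℚ) ^ A.card :=
        (Finset.sum_fiberwise_of_maps_to hmap _).symm
      _ = ∑ B ∈ (uigEdges n (aTail a)).powerset.filter
            (fun A => ∀ x, ¬ Relation.TransGen (orientRel n (aTail a) A) x x),
            ∑ k ∈ Finset.range (a 0 + 1), (Polynomial.X : Polynomial ℚ) ^ (B.card + k) := by
        refine Finset.sum_congr rfl (fun B hB => ?_)
        simp only [Finset.mem_filter, Finset.mem_powerset] at hB
        exact fiber_sum a B h2 ha1 hB.1 hB.2
      _ = ∑ B ∈ (uigEdges n (aTail a)).powerset.filter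
            (fun A => ∀ x, ¬ Relation.TransGen (orientRel n (aTail a) A) x x),
            (Polynomial.X : Polynomial ℚ) ^ B.card *
              ∑ k ∈ Finset.range (a 0 + 1), (Polynomial.X : Polynomial ℚ) ^ k := by
        refine Finset.sum_congr rfl (fun B _ => ?_)
        rw [Finset.mul_sum]
        exact Finset.sum_congr rfl (fun k _ => (pow_add _ _ _))
      _ = (∑ B ∈ (uigEdges n (aTail a)).powerset.filter
            (fun A => ∀ x, ¬ Relation.TransGen (orientRel n (aTail a) A) x x),
            (Polynomial.X : Polynomial ℚ) ^ B.card) *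
              ∑ k ∈ Finset.range (a 0 + 1), (Polynomial.X : Polynomial ℚ) ^ k := by
        rw [Finset.sum_mul]
      _ = (∏ i : Fin n, ∑ k ∈ Finset.range (aTail a i + 1),
            (Polynomial.X : Polynomial ℚ) ^ k) *
              ∑ k ∈ Finset.range (a 0 + 1), (Polynomial.X : Polynomial ℚ) ^ k := by
        rw [ih (aTail a) h1' h2']
      _ = ∏ i : Fin (n + 1), ∑ k ∈ Finset.range (a i + 1),
            (Polynomial.X : Polynomial ℚ) ^ k := by
        rw [Fin.prod_univ_succ]
        rw [mul_comm]
        rfl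

/-- the generating function of acyclic orientations (orientations are
encoded by their sets `A` of ascending edges, and `asc θ = |A|`) satisfies
`Σ_θ q^{asc θ} = Π_i [a i + 1]_q`. -/
theorem acyclic_orientation_generating_function (n : ℕ) (a : Fin n → ℕ)
    (harea₁ : ∀ i : Fin n, (i : ℕ) + a i < n)
    (harea₂ : ∀ i j : Fin n, (i : ℕ) + 1 = (j : ℕ) → a i ≤ a j + 1)
    (ha_last : ∀ i : Fin n, (i : ℕ) + 1 = n → a i = 0) :
    ∑ A ∈ (uigEdges n a).powerset.filter
        (fun A => ∀ x : Fin n, ¬ Relation.TransGen (orientRel n a A) x x),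
        (Polynomial.X : Polynomial ℚ) ^ A.card
      = ∏ i : Fin n, ∑ k ∈ Finset.range (a i + 1), (Polynomial.X : Polynomial ℚ) ^ k := by
  exact gen_thm n a harea₁ harea₂
end

section
/- For a connected unit interval graph Γ_a on n vertices, the sum of q^{asc(θ)} over all acyclic orientations θ of Γ_a whose unique sink is vertex 1 equals the product over i from 1 to n-1 of the q-integer [a_i]_q (equivalently, the product of [b_i]_q over the column area sequence b). -/
open Finset Polynomial

open scoped Classical

noncomputable def qint (k : ℕ) : Polynomial ℚ := ∑ r ∈ Finset.range k, (Polynomial.X : Polynomial ℚ) ^ r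

def EN (n : ℕ) (a : ℕ → ℕ) : Finset (ℕ × ℕ) :=
  ((Finset.range n) ×ˢ (Finset.range n)).filter (fun p => p.1 < p.2 ∧ p.2 ≤ p.1 + a p.1)

lemma mem_EN {n : ℕ} {a : ℕ → ℕ} {i j : ℕ} :
    (i, j) ∈ EN n a ↔ i < j ∧ j < n ∧ j ≤ i + a i := by
  simp only [EN, Finset.mem_filter, Finset.mem_product, Finset.mem_range]
  omega

def RN (n : ℕ) (a : ℕ → ℕ) (A : Finset (ℕ × ℕ)) (u w : ℕ) : Prop :=
  (u, w) ∈ A ∨ ((w, u) ∈ EN n a ∧ (w, u) ∉ A)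

noncomputable def validN (n : ℕ) (a : ℕ → ℕ) : Finset (Finset (ℕ × ℕ)) :=
  (EN n a).powerset.filter (fun A =>
    (∀ x : ℕ, ¬ Relation.TransGen (RN n a A) x x) ∧
    (∀ v : ℕ, v < n → ((∀ u : ℕ, ¬ RN n a A v u) ↔ v = 0)))

lemma mem_validN {n : ℕ} {a : ℕ → ℕ} {A : Finset (ℕ × ℕ)} :
    A ∈ validN n a ↔ A ⊆ EN n a ∧
      (∀ x : ℕ, ¬ Relation.TransGen (RN n a A) x x) ∧
      (∀ v : ℕ, v < n → ((∀ u : ℕ, ¬ RN n a A v u) ↔ v = 0)) := by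
  simp only [validN, Finset.mem_filter, Finset.mem_powerset]

def lowN (n : ℕ) (a : ℕ → ℕ) : Finset ℕ := (Finset.range n).filter (fun i => n ≤ i + a i)

lemma mem_lowN {n : ℕ} {a : ℕ → ℕ} {i : ℕ} : i ∈ lowN n a ↔ i < n ∧ n ≤ i + a i := by
  simp only [lowN, Finset.mem_filter, Finset.mem_range]

noncomputable def rankN (n : ℕ) (a : ℕ → ℕ) (B : Finset (ℕ × ℕ)) (v : ℕ) : ℕ :=
  ((lowN n a).filter (fun w => RN n a B v w)).card

noncomputable def topN (n : ℕ) (a : ℕ → ℕ) (B : Finset (ℕ × ℕ)) (c : ℕ) : Finset ℕ :=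
  (lowN n a).filter (fun v => (lowN n a).card - c ≤ rankN n a B v)

lemma RN_lt {n : ℕ} {a : ℕ → ℕ} {A : Finset (ℕ × ℕ)} (hA : A ⊆ EN n a) {u w : ℕ}
    (h : RN n a A u w) : u < n ∧ w < n ∧ u ≠ w := by
  rcases h with h | ⟨h, -⟩
  · have := mem_EN.mp (hA h); omega
  · have := mem_EN.mp h; omega

lemma two_cycle {n : ℕ} {a : ℕ → ℕ} {A : Finset (ℕ × ℕ)}
    (hac : ∀ x : ℕ, ¬ Relation.TransGen (RN n a A) x x) {u w : ℕ}
    (h1 : RN n a A u w) (h2 : RN n a A w u) : False :=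
  hac u (Relation.TransGen.head h1 (Relation.TransGen.single h2))

lemma three_cycle {n : ℕ} {a : ℕ → ℕ} {A : Finset (ℕ × ℕ)}
    (hac : ∀ x : ℕ, ¬ Relation.TransGen (RN n a A) x x) {u w x : ℕ}
    (h1 : RN n a A u w) (h2 : RN n a A w x) (h3 : RN n a A x u) : False :=
  hac u (Relation.TransGen.head h1 (Relation.TransGen.head h2 (Relation.TransGen.single h3)))

lemma RN_self {n : ℕ} {a : ℕ → ℕ} {A : Finset (ℕ × ℕ)}
    (hac : ∀ x : ℕ, ¬ Relation.TransGen (RN n a A) x x) {v : ℕ} (h : RN n a A v v) : False :=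
  hac v (Relation.TransGen.single h)

lemma tournament {n : ℕ} {a : ℕ → ℕ} {B : Finset (ℕ × ℕ)} {v w : ℕ}
    (hv : v ∈ lowN n a) (hw : w ∈ lowN n a) (hvw : v ≠ w) :
    RN n a B v w ∨ RN n a B w v := by
  rw [mem_lowN] at hv hw
  rcases lt_or_gt_of_ne hvw with h | h
  · have he : (v, w) ∈ EN n a := mem_EN.mpr ⟨h, hw.1, by omega⟩
    by_cases hb : (v, w) ∈ B
    · exact Or.inl (Or.inl hb)
    · exact Or.inr (Or.inr ⟨he, hb⟩)
  · have he : (w, v) ∈ EN n a := mem_EN.mpr ⟨h, hv.1, by omega⟩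
    by_cases hb : (w, v) ∈ B
    · exact Or.inr (Or.inl hb)
    · exact Or.inl (Or.inr ⟨he, hb⟩)

lemma rank_lt_rank {n : ℕ} {a : ℕ → ℕ} {B : Finset (ℕ × ℕ)}
    (hac : ∀ x : ℕ, ¬ Relation.TransGen (RN n a B) x x) {v w : ℕ}
    (hv : v ∈ lowN n a) (hw : w ∈ lowN n a) (h : RN n a B v w) :
    rankN n a B w < rankN n a B v := by
  apply Finset.card_lt_card
  constructor
  · intro x hx
    simp only [Finset.mem_filter] at hx ⊢
    refine ⟨hx.1, ?_⟩
    have hxw : x ≠ w := fun hxw => RN_self hac (hxw ▸ hx.2)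
    have hxv : x ≠ v := by
      rintro rfl
      exact two_cycle hac h hx.2
    rcases tournament (B := B) hv hx.1 (Ne.symm hxv) with h' | h'
    · exact h'
    · exact (three_cycle hac h hx.2 h').elim
  · intro hsub
    have hwmem : w ∈ (lowN n a).filter (fun x => RN n a B v x) := by
      simp only [Finset.mem_filter]; exact ⟨hw, h⟩
    have := hsub hwmem
    simp only [Finset.mem_filter] at this
    exact RN_self hac this.2

lemma rank_lt_card {n : ℕ} {a : ℕ → ℕ} {B : Finset (ℕ × ℕ)}
    (hac : ∀ x : ℕ, ¬ Relation.TransGen (RN n a B) x x) {v : ℕ} (hv : v ∈ lowN n a) :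
    rankN n a B v < (lowN n a).card := by
  apply Finset.card_lt_card
  constructor
  · exact Finset.filter_subset _ _
  · intro hsub
    have := hsub hv
    simp only [Finset.mem_filter] at this
    exact RN_self hac this.2

lemma card_topN {n : ℕ} {a : ℕ → ℕ} {B : Finset (ℕ × ℕ)}
    (hac : ∀ x : ℕ, ¬ Relation.TransGen (RN n a B) x x) {c : ℕ}
    (hc : c ≤ (lowN n a).card) : (topN n a B c).card = c := by
  set m := (lowN n a).card with hm
  have hinj : Set.InjOn (rankN n a B) (lowN n a : Set ℕ) := by
    intro v hv w hw hvw
    by_contra hne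
    rcases tournament (B := B) (by exact_mod_cast hv) (by exact_mod_cast hw) hne with h | h
    · have := rank_lt_rank hac (by exact_mod_cast hv) (by exact_mod_cast hw) h
      omega
    · have := rank_lt_rank hac (by exact_mod_cast hw) (by exact_mod_cast hv) h
      omega
  have himgsub : (lowN n a).image (rankN n a B) ⊆ Finset.range m := by
    intro x hx
    simp only [Finset.mem_image] at hx
    obtain ⟨v, hv, rfl⟩ := hx
    simp only [Finset.mem_range]
    exact rank_lt_card hac hv
  have himg : (lowN n a).image (rankN n a B) = Finset.range m := by
    apply Finset.eq_of_subset_of_card_le himgsub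
    rw [Finset.card_image_of_injOn hinj, Finset.card_range]
  have himg2 : (topN n a B c).image (rankN n a B) = (Finset.range m).filter (fun k => m - c ≤ k) := by
    ext x
    simp only [Finset.mem_image, Finset.mem_filter, topN, Finset.mem_filter]
    constructor
    · rintro ⟨v, ⟨hv, hrkv⟩, rfl⟩
      refine ⟨?_, hrkv⟩
      have : rankN n a B v ∈ (lowN n a).image (rankN n a B) := Finset.mem_image_of_mem _ hv
      rw [himg] at this
      exact this
    · rintro ⟨hx, hcx⟩
      rw [← himg] at hx
      simp only [Finset.mem_image] at hx
      obtain ⟨v, hv, rfl⟩ := hx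
      exact ⟨v, ⟨hv, hcx⟩, rfl⟩
  have hcard1 : (topN n a B c).card = ((Finset.range m).filter (fun k => m - c ≤ k)).card := by
    rw [← himg2, Finset.card_image_of_injOn (Set.InjOn.mono ?_ hinj)]
    intro x hx
    simp only [Finset.mem_coe, topN, Finset.mem_filter] at hx ⊢
    exact hx.1
  rw [hcard1]
  have : (Finset.range m).filter (fun k => m - c ≤ k) = Finset.Ico (m - c) m := by
    ext x
    simp only [Finset.mem_filter, Finset.mem_range, Finset.mem_Ico]
    omega
  rw [this, Nat.card_Ico]
  omega

lemma mem_EN_of_ne {n : ℕ} {a : ℕ → ℕ} {i j : ℕ} (hj : j ≠ n) :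
    (i, j) ∈ EN (n + 1) a ↔ (i, j) ∈ EN n a := by
  rw [mem_EN, mem_EN]
  omega

lemma filt_subset {n : ℕ} {a : ℕ → ℕ} {A : Finset (ℕ × ℕ)} (hA : A ⊆ EN (n + 1) a) :
    A.filter (fun p => p.2 ≠ n) ⊆ EN n a := by
  intro p hp
  simp only [Finset.mem_filter] at hp
  obtain ⟨i, j⟩ := p
  exact (mem_EN_of_ne hp.2).mp (hA hp.1)

lemma RN_transfer {n : ℕ} {a : ℕ → ℕ} {A : Finset (ℕ × ℕ)} (hA : A ⊆ EN (n + 1) a)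
    {u w : ℕ} (hu : u ≠ n) (hw : w ≠ n) :
    RN n a (A.filter (fun p => p.2 ≠ n)) u w ↔ RN (n + 1) a A u w := by
  unfold RN
  simp only [Finset.mem_filter]
  rw [mem_EN_of_ne hu]
  tauto

lemma acyc_filter {n : ℕ} {a : ℕ → ℕ} {A : Finset (ℕ × ℕ)} (hA : A ⊆ EN (n + 1) a)
    (hac : ∀ x : ℕ, ¬ Relation.TransGen (RN (n + 1) a A) x x) :
    ∀ x : ℕ, ¬ Relation.TransGen (RN n a (A.filter (fun p => p.2 ≠ n))) x x := by
  intro x hx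
  apply hac x
  refine Relation.TransGen.mono ?_ x x hx
  intro u w h
  have hlt := RN_lt (filt_subset hA) h
  exact (RN_transfer hA (by omega) (by omega)).mp h

theorem mainN (n : ℕ) (hn : 1 ≤ n) (a : ℕ → ℕ)
    (hcol : ∀ j : ℕ, 0 < j → j < n → ∃ i, (i, j) ∈ EN n a) :
    ∑ A ∈ validN n a, (Polynomial.X : Polynomial ℚ) ^ A.card
      = ∏ j ∈ Finset.Ico 1 n, qint (((Finset.range j).filter (fun i => j ≤ i + a i)).card) := by
  induction n, hn using Nat.le_induction with
  | base =>
    have hE : EN 1 a = ∅ := by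
      ext ⟨i, j⟩
      simp only [mem_EN, Finset.notMem_empty, iff_false]
      omega
    have hrel : ∀ u w : ℕ, ¬ RN 1 a ∅ u w := by
      rintro u w (h | ⟨h, -⟩)
      · exact Finset.notMem_empty _ h
      · rw [hE] at h; exact Finset.notMem_empty _ h
    have hval : validN 1 a = {∅} := by
      ext A
      rw [mem_validN, hE]
      simp only [Finset.subset_empty, Finset.mem_singleton]
      constructor
      · rintro ⟨h, -⟩; exact h
      · rintro rfl
        refine ⟨rfl, ?_, ?_⟩
        · intro x hx
          cases hx with
          | single h => exact hrel _ _ h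
          | tail _ h => exact hrel _ _ h
        · intro v hv
          constructor
          · intro _; omega
          · intro _ u h; exact hrel _ _ h
    rw [hval]
    simp
  | succ n hn IH =>
    classical
    set m := (lowN n a).card with hm
    have hm1 : 1 ≤ m := by
      obtain ⟨i, hi⟩ := hcol n (by omega) (by omega)
      rw [mem_EN] at hi
      exact Finset.card_pos.mpr ⟨i, mem_lowN.mpr ⟨by omega, by omega⟩⟩
    have hcol' : ∀ j, 0 < j → j < n → ∃ i, (i, j) ∈ EN n a := by
      intro j hj hjn
      obtain ⟨i, hi⟩ := hcol j hj (by omega)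
      rw [mem_EN] at hi
      exact ⟨i, mem_EN.mpr ⟨hi.1, by omega, hi.2.2⟩⟩
    set fwd : Finset (ℕ × ℕ) → Finset (ℕ × ℕ) × ℕ :=
      fun A => (A.filter (fun p => p.2 ≠ n), ((lowN n a).filter (fun v => (v, n) ∈ A)).card)
      with hfwd
    set bwd : Finset (ℕ × ℕ) × ℕ → Finset (ℕ × ℕ) :=
      fun p => p.1 ∪ (topN n a p.1 p.2).image (fun v => (v, n)) with hbwd
    -- ===== forward facts =====
    have fwdFacts : ∀ A ∈ validN (n+1) a,
        (A.filter (fun p => p.2 ≠ n) ∈ validN n a) ∧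
        ((lowN n a).filter (fun v => (v, n) ∈ A)).card < m ∧
        A.card = (A.filter (fun p => p.2 ≠ n)).card + ((lowN n a).filter (fun v => (v, n) ∈ A)).card ∧
        topN n a (A.filter (fun p => p.2 ≠ n)) (((lowN n a).filter (fun v => (v, n) ∈ A)).card)
          = (lowN n a).filter (fun v => (v, n) ∈ A) := by
      intro A hA
      rw [mem_validN] at hA
      obtain ⟨hAsub, hacA, hsinkA⟩ := hA
      set A' := A.filter (fun p => p.2 ≠ n) with hA'
      set T := (lowN n a).filter (fun v => (v, n) ∈ A) with hT
      have hA'sub : A' ⊆ EN n a := filt_subset hAsub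
      have hacA' : ∀ x, ¬ Relation.TransGen (RN n a A') x x := acyc_filter hAsub hacA
      have hzout : ∃ w, w ∈ lowN n a ∧ (w, n) ∉ A := by
        have hns : ¬ (∀ u, ¬ RN (n+1) a A n u) := by
          intro h
          have := (hsinkA n (by omega)).mp h
          omega
        push_neg at hns
        obtain ⟨u, hu⟩ := hns
        rcases hu with h | ⟨h, hnA⟩
        · have := mem_EN.mp (hAsub h); omega
        · have hmem := mem_EN.mp h
          exact ⟨u, mem_lowN.mpr ⟨by omega, by omega⟩, hnA⟩
      obtain ⟨w₁, hw₁low, hw₁A⟩ := hzout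
      have hTsub : T ⊆ lowN n a := Finset.filter_subset _ _
      have hTcard : T.card < m := by
        apply Finset.card_lt_card
        rw [Finset.ssubset_iff_of_subset hTsub]
        refine ⟨w₁, hw₁low, ?_⟩
        rw [hT, Finset.mem_filter]
        tauto
      have hTiff : ∀ i, (i, n) ∈ A ↔ i ∈ T := by
        intro i
        rw [hT, Finset.mem_filter]
        constructor
        · intro h
          have := mem_EN.mp (hAsub h)
          exact ⟨mem_lowN.mpr ⟨by omega, by omega⟩, h⟩
        · tauto
      have hsinkA' : ∀ v, v < n → ((∀ u, ¬ RN n a A' v u) ↔ v = 0) := by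
        intro v hv
        constructor
        · intro hnoout
          by_contra hv0
          have hns : ¬ (∀ u, ¬ RN (n+1) a A v u) := by
            intro h
            exact hv0 ((hsinkA v (by omega)).mp h)
          push_neg at hns
          obtain ⟨u₀, hu₀⟩ := hns
          by_cases hu0n : u₀ = n
          · rw [hu0n] at hu₀
            have hvT : (v, n) ∈ A := by
              rcases hu₀ with h | ⟨h, -⟩
              · exact h
              · rw [mem_EN] at h; omega
            have hvlow : v ∈ lowN n a := by
              have := mem_EN.mp (hAsub hvT)
              exact mem_lowN.mpr ⟨by omega, by omega⟩
            have hvw : v ≠ w₁ := by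
              rintro rfl; exact hw₁A hvT
            rcases tournament (B := A') hvlow hw₁low hvw with h | h
            · exact hnoout w₁ h
            · refine three_cycle hacA (u := v) (w := n) (x := w₁) (Or.inl hvT) ?_ ?_
              · refine Or.inr ⟨mem_EN.mpr ?_, hw₁A⟩
                have := mem_lowN.mp hw₁low
                omega
              · have hwlt := mem_lowN.mp hw₁low
                exact (RN_transfer hAsub (by omega) (by omega)).mp h
          · exact hnoout u₀ ((RN_transfer hAsub (by omega) hu0n).mpr hu₀)
        · rintro rfl u h
          have hlt := RN_lt hA'sub h
          exact (hsinkA 0 (by omega)).mpr rfl u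
            ((RN_transfer hAsub (by omega) (by omega)).mp h)
      have hA'valid : A' ∈ validN n a := mem_validN.mpr ⟨hA'sub, hacA', hsinkA'⟩
      have hTimg : A.filter (fun p => ¬ p.2 ≠ n) = T.image (fun v => (v, n)) := by
        ext ⟨i, j⟩
        simp only [Finset.mem_filter, Finset.mem_image, not_not]
        constructor
        · rintro ⟨hij, hj⟩
          rw [hj] at hij
          exact ⟨i, (hTiff i).mp hij, by rw [hj]⟩
        · rintro ⟨v, hv, heq⟩
          have h5 : v = i := congrArg Prod.fst heq
          have h6 : n = j := congrArg Prod.snd heq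
          refine ⟨?_, h6.symm⟩
          rw [← h6]
          exact h5 ▸ ((hTiff v).mpr hv)
      have hcardA : A.card = A'.card + T.card := by
        have hsplit : A.filter (fun p => p.2 ≠ n) ∪ A.filter (fun p => ¬ p.2 ≠ n) = A :=
          Finset.filter_union_filter_not_eq _ A
        have hdisj : Disjoint (A.filter (fun p => p.2 ≠ n)) (A.filter (fun p => ¬ p.2 ≠ n)) :=
          Finset.disjoint_filter_filter_not A A _
        have hinj : Function.Injective (fun v : ℕ => (v, n)) := by
          intro x y hxy
          exact congrArg Prod.fst hxy
        calc A.card = (A.filter (fun p => p.2 ≠ n) ∪ A.filter (fun p => ¬ p.2 ≠ n)).card := by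
              rw [hsplit]
          _ = A'.card + (A.filter (fun p => ¬ p.2 ≠ n)).card := Finset.card_union_of_disjoint hdisj
          _ = A'.card + T.card := by rw [hTimg, Finset.card_image_of_injective _ hinj]
      have hup : ∀ u ∈ T, ∀ w ∈ lowN n a \ T, RN n a A' u w := by
        intro u hu w hw
        obtain ⟨hwl, hwnt⟩ := Finset.mem_sdiff.mp hw
        have hune : u ≠ w := by rintro rfl; exact hwnt hu
        rcases tournament (B := A') (hTsub hu) hwl hune with h | h
        · exact h
        · exfalso
          have hwA : (w, n) ∉ A := fun hc => hwnt ((hTiff w).mp hc)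
          refine three_cycle hacA (u := u) (w := n) (x := w) (Or.inl ((hTiff u).mpr hu)) ?_ ?_
          · refine Or.inr ⟨mem_EN.mpr ?_, hwA⟩
            have := mem_lowN.mp hwl
            omega
          · have h1 := mem_lowN.mp hwl
            have h2 := mem_lowN.mp (hTsub hu)
            exact (RN_transfer hAsub (by omega) (by omega)).mp h
      have htopT : topN n a A' T.card = T := by
        have hrk_hi : ∀ u ∈ T, m - T.card ≤ rankN n a A' u := by
          intro u hu
          have hsub : lowN n a \ T ⊆ (lowN n a).filter (fun w => RN n a A' u w) := by
            intro w hw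
            rw [Finset.mem_filter]
            exact ⟨(Finset.mem_sdiff.mp hw).1, hup u hu w hw⟩
          have := Finset.card_le_card hsub
          rw [Finset.card_sdiff_of_subset hTsub] at this
          exact this
        have hrk_lo : ∀ w ∈ lowN n a \ T, rankN n a A' w < m - T.card := by
          intro w hw
          have hsub : (lowN n a).filter (fun x => RN n a A' w x) ⊆ (lowN n a \ T).erase w := by
            intro x hx
            rw [Finset.mem_filter] at hx
            rw [Finset.mem_erase, Finset.mem_sdiff]
            refine ⟨?_, hx.1, ?_⟩
            · rintro rfl; exact RN_self hacA' hx.2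
            · intro hxT
              exact two_cycle hacA' hx.2 (hup x hxT w hw)
          have h1 := Finset.card_le_card hsub
          have h2 : ((lowN n a \ T).erase w).card = (lowN n a \ T).card - 1 :=
            Finset.card_erase_of_mem hw
          have h3 : (lowN n a \ T).card = m - T.card := by
            rw [Finset.card_sdiff_of_subset hTsub]
          rw [h2, h3] at h1
          unfold rankN
          omega
        ext v
        rw [topN, Finset.mem_filter]
        constructor
        · rintro ⟨hvl, hvr⟩
          by_contra hvT
          have := hrk_lo v (Finset.mem_sdiff.mpr ⟨hvl, hvT⟩)
          omega
        · intro hv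
          exact ⟨hTsub hv, hrk_hi v hv⟩
      exact ⟨hA'valid, hTcard, hcardA, htopT⟩
    -- ===== backward facts =====
    have bwdFacts : ∀ B ∈ validN n a, ∀ c < m,
        (B ∪ (topN n a B c).image (fun v => (v, n)) ∈ validN (n+1) a) := by
      intro B hB c hc
      rw [mem_validN] at hB
      obtain ⟨hBsub, hacB, hsinkB⟩ := hB
      set Tc := topN n a B c with hTc
      have hTcsub : Tc ⊆ lowN n a := Finset.filter_subset _ _
      have htopc : Tc.card = c := card_topN hacB (le_of_lt hc)
      set A := B ∪ Tc.image (fun v => (v, n)) with hA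
      have hBn : ∀ p ∈ B, (p : ℕ × ℕ).2 ≠ n := by
        intro p hp
        have := mem_EN.mp (show (p.1, p.2) ∈ EN n a from hBsub hp)
        omega
      have hAmem : ∀ i j, (i, j) ∈ A ↔ ((i, j) ∈ B ∨ (j = n ∧ i ∈ Tc)) := by
        intro i j
        rw [hA, Finset.mem_union, Finset.mem_image]
        constructor
        · rintro (h | ⟨v, hv, heq⟩)
          · exact Or.inl h
          · have h5 : v = i := congrArg Prod.fst heq
            have h6 : n = j := congrArg Prod.snd heq
            exact Or.inr ⟨h6.symm, h5 ▸ hv⟩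
        · rintro (h | ⟨hj, h⟩)
          · exact Or.inl h
          · exact Or.inr ⟨i, h, by rw [hj]⟩
      have hAsub : A ⊆ EN (n+1) a := by
        intro p hp
        obtain ⟨i, j⟩ := p
        rcases (hAmem i j).mp hp with h | ⟨hj, h⟩
        · have := mem_EN.mp (hBsub h)
          rw [mem_EN]
          omega
        · have := mem_lowN.mp (hTcsub h)
          rw [mem_EN]
          omega
      have hcomp : (lowN n a \ Tc).Nonempty := by
        rw [← Finset.card_pos, Finset.card_sdiff_of_subset hTcsub]
        omega
      have hpo : IsPartialOrder ℕ (fun x y => x = y ∨ Relation.TransGen (RN n a B) x y) :=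
        { refl := fun x => Or.inl rfl
          trans := by
            rintro x y z (rfl | hxy) (rfl | hyz)
            · exact Or.inl rfl
            · exact Or.inr hyz
            · exact Or.inr hxy
            · exact Or.inr (hxy.trans hyz)
          antisymm := by
            rintro x y (rfl | hxy) (h | hyx)
            · rfl
            · rfl
            · exact h.symm
            · exact (hacB x (hxy.trans hyx)).elim }
      obtain ⟨ℓ, hlin, hext⟩ := @extend_partialOrder ℕ _ hpo
      haveI := hlin
      set preds : ℕ → ℕ := fun v => ((Finset.range n).filter (fun x => ℓ x v ∧ x ≠ v)).card
        with hpreds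
      have hmono : ∀ u v, u < n → v < n → ℓ u v → u ≠ v → preds u < preds v := by
        intro u v hu hv hluv hne
        apply Finset.card_lt_card
        constructor
        · intro x hx
          rw [Finset.mem_filter] at hx ⊢
          refine ⟨hx.1, _root_.trans_of ℓ hx.2.1 hluv, ?_⟩
          rintro rfl
          exact hne (_root_.antisymm hluv hx.2.1)
        · intro hsub
          have hmem : u ∈ (Finset.range n).filter (fun x => ℓ x v ∧ x ≠ v) := by
            rw [Finset.mem_filter, Finset.mem_range]
            exact ⟨hu, hluv, hne⟩
          have := hsub hmem
          rw [Finset.mem_filter] at this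
          exact this.2.2 rfl
      have hRBφ : ∀ u w, RN n a B u w → preds u < preds w := by
        intro u w h
        have hlt := RN_lt hBsub h
        have hluw : ℓ u w := hext u w (Or.inr (Relation.TransGen.single h))
        exact hmono u w hlt.1 hlt.2.1 hluw hlt.2.2
      obtain ⟨w₀, hw₀mem, hw₀min⟩ := Finset.exists_min_image (lowN n a \ Tc) preds hcomp
      have hTout : ∀ u ∈ Tc, ∀ w ∈ lowN n a \ Tc, RN n a B u w := by
        intro u hu w hw
        obtain ⟨hwl, hwnt⟩ := Finset.mem_sdiff.mp hw
        have hne : u ≠ w := by rintro rfl; exact hwnt hu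
        rcases tournament (B := B) (hTcsub hu) hwl hne with h | h
        · exact h
        · exfalso
          have h1 := rank_lt_rank hacB hwl (hTcsub hu) h
          have hu' : m - c ≤ rankN n a B u := (Finset.mem_filter.mp hu).2
          have hw' : ¬ (m - c ≤ rankN n a B w) := by
            intro hcon
            exact hwnt (Finset.mem_filter.mpr ⟨hwl, hcon⟩)
          omega
      set φ : ℕ → ℕ := fun v => if v = n then 2 * preds w₀ + 1 else 2 * preds v + 2 with hφ
      have hstep : ∀ u w, RN (n+1) a A u w → φ u < φ w := by
        intro u w h
        rcases h with h | ⟨hE, hnA⟩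
        · rcases (hAmem u w).mp h with hB' | ⟨hwn, hTu⟩
          · have hlt := RN_lt hBsub (Or.inl hB')
            have := hRBφ u w (Or.inl hB')
            simp only [hφ]
            rw [if_neg (by omega), if_neg (by omega)]
            omega
          · have hulow := hTcsub hTu
            have hul := mem_lowN.mp hulow
            have := hRBφ u w₀ (hTout u hTu w₀ hw₀mem)
            simp only [hφ]
            rw [if_neg (by omega), if_pos hwn]
            omega
        · have hEmem := mem_EN.mp hE
          by_cases hun : u = n
          · have hwlow : w ∈ lowN n a := mem_lowN.mpr ⟨by omega, by omega⟩
            have hwnt : w ∉ Tc := by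
              intro hc
              apply hnA
              rw [hun]
              exact (hAmem w n).mpr (Or.inr ⟨rfl, hc⟩)
            have := hw₀min w (Finset.mem_sdiff.mpr ⟨hwlow, hwnt⟩)
            have hwlt := mem_lowN.mp hwlow
            simp only [hφ]
            rw [if_pos hun, if_neg (by omega)]
            omega
          · have hwn : w < n := by omega
            have hun' : u < n := by omega
            have hB' : (w, u) ∉ B := fun hc => hnA ((hAmem w u).mpr (Or.inl hc))
            have hRN : RN n a B u w := Or.inr ⟨mem_EN.mpr ⟨by omega, by omega, by omega⟩, hB'⟩
            have := hRBφ u w hRN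
            simp only [hφ]
            rw [if_neg (by omega), if_neg (by omega)]
            omega
      have hacA : ∀ x, ¬ Relation.TransGen (RN (n+1) a A) x x := by
        intro x hx
        have hmain : ∀ x y, Relation.TransGen (RN (n+1) a A) x y → φ x < φ y := by
          intro x y h
          induction h with
          | single h => exact hstep _ _ h
          | tail _ h ih => exact ih.trans (hstep _ _ h)
        exact lt_irrefl _ (hmain x x hx)
      have hsinkA : ∀ v, v < n + 1 → ((∀ u, ¬ RN (n+1) a A v u) ↔ v = 0) := by
        intro v hv
        constructor
        · intro hnoout
          by_contra hv0
          by_cases hvn : v = n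
          · obtain ⟨hwl, hwnt⟩ := Finset.mem_sdiff.mp hw₀mem
            apply hnoout w₀
            rw [hvn]
            refine Or.inr ⟨mem_EN.mpr ?_, ?_⟩
            · have := mem_lowN.mp hwl
              omega
            · intro hc
              rcases (hAmem w₀ n).mp hc with h | ⟨-, h⟩
              · exact hBn _ h rfl
              · exact hwnt h
          · have hvn' : v < n := by omega
            have hns : ¬ (∀ u, ¬ RN n a B v u) := by
              intro h
              exact hv0 ((hsinkB v hvn').mp h)
            push_neg at hns
            obtain ⟨u, hu⟩ := hns
            apply hnoout u
            rcases hu with h | ⟨hE, hB'⟩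
            · exact Or.inl ((hAmem v u).mpr (Or.inl h))
            · have hEmem := mem_EN.mp hE
              refine Or.inr ⟨mem_EN.mpr ⟨by omega, by omega, by omega⟩, ?_⟩
              intro hc
              rcases (hAmem u v).mp hc with h | ⟨hn', -⟩
              · exact hB' h
              · omega
        · rintro rfl u h
          rcases h with h | ⟨hE, -⟩
          · rcases (hAmem 0 u).mp h with h | ⟨hj, h⟩
            · exact (hsinkB 0 (by omega)).mpr rfl u (Or.inl h)
            · have hr : m - c ≤ rankN n a B 0 := (Finset.mem_filter.mp h).2
              have hpos : 0 < rankN n a B 0 := by omega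
              rw [rankN, Finset.card_pos] at hpos
              obtain ⟨x, hx⟩ := hpos
              rw [Finset.mem_filter] at hx
              exact (hsinkB 0 (by omega)).mpr rfl x hx.2
          · rw [mem_EN] at hE
            omega
      exact mem_validN.mpr ⟨hAsub, hacA, hsinkA⟩
    -- ===== assembling the bijection =====
    have key : ∑ A ∈ validN (n+1) a, (Polynomial.X : Polynomial ℚ) ^ A.card
        = ∑ p ∈ (validN n a) ×ˢ (Finset.range m), (Polynomial.X : Polynomial ℚ) ^ (p.1.card + p.2) := by
      apply Finset.sum_nbij' fwd bwd
      · intro A hA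
        obtain ⟨h1, h2, h3, h4⟩ := fwdFacts A hA
        rw [Finset.mem_product]
        exact ⟨h1, Finset.mem_range.mpr h2⟩
      · intro p hp
        rw [Finset.mem_product] at hp
        exact bwdFacts p.1 hp.1 p.2 (Finset.mem_range.mp hp.2)
      · intro A hA
        obtain ⟨h1, h2, h3, h4⟩ := fwdFacts A hA
        rw [mem_validN] at hA
        obtain ⟨hAsub, -, -⟩ := hA
        show (A.filter (fun p => p.2 ≠ n)) ∪ _ = A
        rw [hfwd]
        simp only
        rw [h4]
        ext ⟨i, j⟩
        simp only [Finset.mem_union, Finset.mem_filter, Finset.mem_image]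
        constructor
        · rintro (⟨h, -⟩ | ⟨v, ⟨hv1, hv2⟩, heq⟩)
          · exact h
          · have h5 : v = i := congrArg Prod.fst heq
            have h6 : n = j := congrArg Prod.snd heq
            rw [← h6]
            exact h5 ▸ hv2
        · intro h
          by_cases hj : j = n
          · have h' : (i, n) ∈ A := by rw [hj] at h; exact h
            have := mem_EN.mp (hAsub h')
            exact Or.inr ⟨i, ⟨mem_lowN.mpr ⟨by omega, by omega⟩, h'⟩, by rw [hj]⟩
          · exact Or.inl ⟨h, hj⟩
      · intro p hp
        rw [Finset.mem_product] at hp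
        obtain ⟨hB, hc⟩ := hp
        have hcm := Finset.mem_range.mp hc
        rw [mem_validN] at hB
        obtain ⟨hBsub, hacB, -⟩ := hB
        have hBn : ∀ q ∈ p.1, (q : ℕ × ℕ).2 ≠ n := by
          intro q hq
          have := mem_EN.mp (show (q.1, q.2) ∈ EN n a from hBsub hq)
          omega
        have htopc : (topN n a p.1 p.2).card = p.2 := card_topN hacB (le_of_lt hcm)
        have hfilter : (bwd p).filter (fun q => q.2 ≠ n) = p.1 := by
          ext ⟨i, j⟩
          simp only [hbwd, Finset.mem_filter, Finset.mem_union, Finset.mem_image]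
          constructor
          · rintro ⟨h | ⟨v, hv, heq⟩, hj⟩
            · exact h
            · exact ((hj (congrArg Prod.snd heq).symm).elim)
          · intro h
            exact ⟨Or.inl h, hBn _ h⟩
        have hsnd : ((lowN n a).filter (fun v => (v, n) ∈ bwd p)).card = p.2 := by
          have heq2 : (lowN n a).filter (fun v => (v, n) ∈ bwd p) = topN n a p.1 p.2 := by
            ext v
            simp only [hbwd, Finset.mem_filter, Finset.mem_union, Finset.mem_image]
            constructor
            · rintro ⟨hvl, h | ⟨x, hx, heq⟩⟩
              · exact absurd rfl (hBn _ h)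
              · rwa [show x = v from congrArg Prod.fst heq] at hx
            · intro hv
              exact ⟨Finset.filter_subset _ _ hv, Or.inr ⟨v, hv, rfl⟩⟩
          rw [heq2, htopc]
        rw [hfwd]
        exact Prod.ext (by simpa using hfilter) (by simpa using hsnd)
      · intro A hA
        obtain ⟨h1, h2, h3, h4⟩ := fwdFacts A hA
        rw [h3]
    rw [key, Finset.sum_product]
    have hinner : ∀ B ∈ validN n a,
        ∑ c ∈ Finset.range m, (Polynomial.X : Polynomial ℚ) ^ (B.card + c)
        = (Polynomial.X : Polynomial ℚ) ^ B.card * qint m := by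
      intro B _
      rw [qint, Finset.mul_sum]
      exact Finset.sum_congr rfl (fun c _ => pow_add _ _ _)
    rw [Finset.sum_congr rfl hinner, ← Finset.sum_mul, IH hcol']
    rw [Finset.prod_Ico_succ_top (a := 1) (b := n) (by omega)
      (f := fun j => qint ((Finset.range j).filter (fun i => j ≤ i + a i)).card)]
    rfl

theorem prodB (n : ℕ) (a : ℕ → ℕ)
    (h₁ : ∀ i, i < n → i + a i < n)
    (h₂ : ∀ i, i + 1 < n → i + a i ≤ i + 1 + a (i + 1))
    (h₃ : ∀ i, i + 1 < n → 1 ≤ a i) :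
    ∏ j ∈ Finset.Ico 1 n, qint (((Finset.range j).filter (fun i => j ≤ i + a i)).card)
      = ∏ i ∈ Finset.range (n - 1), qint (a i) := by
  induction n using Nat.strong_induction_on generalizing a with
  | _ n IH =>
  match n, h₁, h₂, h₃ with
  | 0, h₁, h₂, h₃ => simp
  | 1, h₁, h₂, h₃ => simp
  | (m+2), h₁, h₂, h₃ =>
    have hmono : ∀ i j, i ≤ j → j < m + 2 → i + a i ≤ j + a j := by
      intro i j hij hj
      induction j with
      | zero =>
        obtain rfl : i = 0 := by omega
        exact le_rfl
      | succ k IHk =>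
        rcases Nat.lt_or_ge i (k+1) with h | h
        · have h2 := h₂ k (by omega)
          have h3 := IHk (by omega) (by omega)
          omega
        · obtain rfl : i = k + 1 := by omega
          exact le_rfl
    set Nf : Finset ℕ := (Finset.range (m+1)).filter (fun i => m + 1 ≤ i + a i) with hNf
    have hlast : m + a m = m + 1 := by
      have := h₃ m (by omega)
      have := h₁ m (by omega)
      omega
    have hne : Nf.Nonempty := ⟨m, by simp only [hNf, Finset.mem_filter, Finset.mem_range]; omega⟩
    set l : ℕ := Nf.min' hne with hl
    have hlmem : l ∈ Nf := Finset.min'_mem _ _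
    have hlm : l < m + 1 ∧ m + 1 ≤ l + a l := by
      have := hlmem; simp only [hNf, Finset.mem_filter, Finset.mem_range] at this; omega
    have hNfI : Nf = Finset.Ico l (m+1) := by
      apply Finset.Subset.antisymm
      · intro i hi
        have hi' := hi
        simp only [hNf, Finset.mem_filter, Finset.mem_range] at hi'
        simp only [Finset.mem_Ico]
        exact ⟨Finset.min'_le _ _ hi, hi'.1⟩
      · intro i hi
        simp only [Finset.mem_Ico] at hi
        have := hmono l i hi.1 (by omega)
        simp only [hNf, Finset.mem_filter, Finset.mem_range]
        omega
    have hNfval : ∀ i ∈ Nf, i + a i = m + 1 := by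
      intro i hi
      simp only [hNf, Finset.mem_filter, Finset.mem_range] at hi
      have := h₁ i (by omega)
      omega
    set a' : ℕ → ℕ := fun i => min (a i) (m - i) with ha'
    have IH' := IH (m+1) (by omega) a'
      (by intro i hi; simp only [ha']; omega)
      (by intro i hi
          have := h₂ i (by omega); simp only [ha']; omega)
      (by intro i hi
          have := h₃ i (by omega); simp only [ha']; omega)
    have hbeta : ∀ j ∈ Finset.Ico 1 (m+1),
        qint ((Finset.filter (fun i => j ≤ i + a' i) (Finset.range j)).card)
        = qint ((Finset.filter (fun i => j ≤ i + a i) (Finset.range j)).card) := by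
      intro j hj
      simp only [Finset.mem_Ico] at hj
      congr 1
      congr 1
      ext i
      simp only [Finset.mem_filter, Finset.mem_range, ha']
      omega
    have hprod1 : ∏ j ∈ Finset.Ico 1 (m+1),
        qint ((Finset.filter (fun i => j ≤ i + a' i) (Finset.range j)).card)
        = ∏ j ∈ Finset.Ico 1 (m+1),
        qint ((Finset.filter (fun i => j ≤ i + a i) (Finset.range j)).card) :=
      Finset.prod_congr rfl hbeta
    have hsplit : ∏ j ∈ Finset.Ico 1 (m + 2),
        qint ((Finset.filter (fun i => j ≤ i + a i) (Finset.range j)).card)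
        = (∏ j ∈ Finset.Ico 1 (m+1),
            qint ((Finset.filter (fun i => j ≤ i + a i) (Finset.range j)).card)) * qint Nf.card := by
      rw [show m + 2 = (m+1) + 1 from rfl, Finset.prod_Ico_succ_top (by omega)]
    rw [hsplit, ← hprod1, IH']
    -- now: (∏ i ∈ range ((m+1)-1), qint (a' i)) * qint Nf.card = ∏ i ∈ range (m+1), qint (a i)
    have hcard : Nf.card = m + 1 - l := by rw [hNfI, Nat.card_Ico]
    have hsub1 : Finset.Ico l (m+1) ⊆ Finset.range (m+1) := by
      intro x hx; simp only [Finset.mem_Ico] at hx; simp only [Finset.mem_range]; omega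
    have hsub2 : Finset.Ico l m ⊆ Finset.range m := by
      intro x hx; simp only [Finset.mem_Ico] at hx; simp only [Finset.mem_range]; omega
    have e1 : ∏ i ∈ Finset.range (m+1), qint (a i)
        = (∏ i ∈ Finset.range (m+1) \ Finset.Ico l (m+1), qint (a i)) * ∏ i ∈ Finset.Ico l (m+1), qint (a i) :=
      (Finset.prod_sdiff hsub1).symm
    have e2 : ∏ i ∈ Finset.range m, qint (a' i)
        = (∏ i ∈ Finset.range m \ Finset.Ico l m, qint (a' i))
          * ∏ i ∈ Finset.Ico l m, qint (a' i) :=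
      (Finset.prod_sdiff hsub2).symm
    have hdiffeq : Finset.range (m+1) \ Finset.Ico l (m+1) = Finset.range m \ Finset.Ico l m := by
      ext x
      simp only [Finset.mem_sdiff, Finset.mem_range, Finset.mem_Ico]
      omega
    have hdiffval : ∏ i ∈ Finset.range m \ Finset.Ico l m, qint (a' i)
        = ∏ i ∈ Finset.range m \ Finset.Ico l m, qint (a i) := by
      apply Finset.prod_congr rfl
      intro i hi
      simp only [Finset.mem_sdiff, Finset.mem_range, Finset.mem_Ico] at hi
      have hnotin : i ∉ Nf := by rw [hNfI]; simp only [Finset.mem_Ico]; omega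
      simp only [hNf, Finset.mem_filter, Finset.mem_range] at hnotin
      have : ¬ (m + 1 ≤ i + a i) := by tauto
      congr 1
      simp only [ha']
      omega
    have hvala : ∏ i ∈ Finset.Ico l (m+1), qint (a i) = ∏ i ∈ Finset.Ico l (m+1), qint (m + 1 - i) := by
      apply Finset.prod_congr rfl
      intro i hi
      have := hNfval i (by rw [hNfI]; exact hi)
      simp only [Finset.mem_Ico] at hi
      congr 1
      omega
    have hvala' : ∏ i ∈ Finset.Ico l m, qint (a' i) = ∏ i ∈ Finset.Ico l m, qint (m - i) := by
      apply Finset.prod_congr rfl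
      intro i hi
      simp only [Finset.mem_Ico] at hi
      have h5 := hNfval i (by rw [hNfI]; simp only [Finset.mem_Ico]; omega)
      congr 1
      simp only [ha']
      omega
    have reflect : ∀ M, l ≤ M → ∏ i ∈ Finset.Ico l M, qint (M - i)
        = ∏ k ∈ Finset.range (M - l), qint (k + 1) := by
      intro M hlM
      apply Finset.prod_nbij' (fun i => M - 1 - i) (fun k => M - 1 - k)
      · intro i hi; simp only [Finset.mem_Ico] at hi; simp only [Finset.mem_range]; omega
      · intro k hk; simp only [Finset.mem_range] at hk; simp only [Finset.mem_Ico]; omega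
      · intro i hi; simp only [Finset.mem_Ico] at hi; omega
      · intro k hk; simp only [Finset.mem_range] at hk; omega
      · intro i hi; simp only [Finset.mem_Ico] at hi; congr 1; omega
    have key : (∏ i ∈ Finset.Ico l m, qint (m - i)) * qint (m + 1 - l)
        = ∏ i ∈ Finset.Ico l (m+1), qint (m + 1 - i) := by
      rw [reflect (m+1) (by omega), reflect m (by omega),
        show m + 1 - l = (m - l) + 1 by omega, Finset.prod_range_succ]
    calc (∏ i ∈ Finset.range ((m+1) - 1), qint (a' i)) * qint Nf.card
        = ((∏ i ∈ Finset.range m \ Finset.Ico l m, qint (a i))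
            * ∏ i ∈ Finset.Ico l m, qint (m - i)) * qint (m + 1 - l) := by
          simp only [Nat.add_sub_cancel]
          rw [e2, hdiffval, hvala', hcard]
      _ = (∏ i ∈ Finset.range (m+1) \ Finset.Ico l (m+1), qint (a i))
            * ((∏ i ∈ Finset.Ico l m, qint (m - i)) * qint (m + 1 - l)) := by
          rw [hdiffeq]; ring
      _ = (∏ i ∈ Finset.range (m+1) \ Finset.Ico l (m+1), qint (a i)) * ∏ i ∈ Finset.Ico l (m+1), qint (a i) := by
          rw [key, hvala]
      _ = ∏ i ∈ Finset.range (m+2-1), qint (a i) := e1.symm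

/-- for a connected unit interval graph `Γ_a`, the sum of `q^{asc θ}` over
acyclic orientations `θ` whose unique sink is the first vertex equals
`Π_{i=1}^{n-1} [a_i]_q` (0-indexed: the product over the first `n-1` rows). -/
theorem acyclic_orientation_unique_sink_generating_function (n : ℕ) (hn : 0 < n)
    (a : Fin n → ℕ)
    (harea₁ : ∀ i : Fin n, (i : ℕ) + a i < n)
    (harea₂ : ∀ i j : Fin n, (i : ℕ) + 1 = (j : ℕ) → a i ≤ a j + 1)
    (hconn : ∀ i : Fin n, (i : ℕ) + 1 < n → 1 ≤ a i) :
    ∑ A ∈ (uigEdges n a).powerset.filter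
        (fun A => (∀ x : Fin n, ¬ Relation.TransGen (orientRel n a A) x x) ∧
          (∀ v : Fin n, (∀ u : Fin n, ¬ orientRel n a A v u) ↔ v = ⟨0, hn⟩)),
        (Polynomial.X : Polynomial ℚ) ^ A.card
      = ∏ i ∈ Finset.univ.filter (fun i : Fin n => (i : ℕ) + 1 < n),
          ∑ k ∈ Finset.range (a i), (Polynomial.X : Polynomial ℚ) ^ k := by
  classical
  set aN : ℕ → ℕ := fun i => if h : i < n then a ⟨i, h⟩ else 0 with haN
  have haNval : ∀ i : Fin n, aN (i : ℕ) = a i := by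
    intro i
    simp only [haN, dif_pos i.isLt, Fin.eta]
  have hedge : ∀ u w : Fin n, ((u : ℕ), (w : ℕ)) ∈ EN n aN ↔ (u, w) ∈ uigEdges n a := by
    intro u w
    rw [mem_EN]
    simp only [uigEdges, Finset.mem_filter, Finset.mem_univ, true_and, Fin.lt_def]
    rw [haNval u]
    constructor
    · rintro ⟨h1, h2, h3⟩; exact ⟨h1, h3⟩
    · rintro ⟨h1, h2⟩; exact ⟨h1, w.isLt, h2⟩
  set fn : ℕ → Fin n := fun x => ⟨x % n, Nat.mod_lt x hn⟩ with hfn'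
  have hfn : ∀ x : ℕ, x < n → ((fn x : Fin n) : ℕ) = x := by
    intro x hx
    simp only [hfn']
    exact Nat.mod_eq_of_lt hx
  set Ψ : Finset (Fin n × Fin n) → Finset (ℕ × ℕ) :=
    fun A => A.image (fun p => ((p.1 : ℕ), (p.2 : ℕ))) with hΨ'
  set Φ : Finset (ℕ × ℕ) → Finset (Fin n × Fin n) :=
    fun B => B.image (fun p => (fn p.1, fn p.2)) with hΦ'
  have hΨmem : ∀ (A : Finset (Fin n × Fin n)) (u w : Fin n),
      ((u : ℕ), (w : ℕ)) ∈ Ψ A ↔ (u, w) ∈ A := by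
    intro A u w
    simp only [hΨ', Finset.mem_image]
    constructor
    · rintro ⟨⟨x, y⟩, hxy, heq⟩
      have h1 : (x : ℕ) = (u : ℕ) := congrArg Prod.fst heq
      have h2 : (y : ℕ) = (w : ℕ) := congrArg Prod.snd heq
      have h1' : x = u := Fin.ext h1
      have h2' : y = w := Fin.ext h2
      rwa [h1', h2'] at hxy
    · intro h
      exact ⟨(u, w), h, rfl⟩
  have hΨsub : ∀ A : Finset (Fin n × Fin n), A ⊆ uigEdges n a → Ψ A ⊆ EN n aN := by
    intro A hA p hp
    simp only [hΨ', Finset.mem_image] at hp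
    obtain ⟨⟨x, y⟩, hxy, rfl⟩ := hp
    exact (hedge x y).mpr (hA hxy)
  have hΦmem : ∀ (B : Finset (ℕ × ℕ)), B ⊆ EN n aN → ∀ u w : Fin n,
      ((u, w) ∈ Φ B ↔ ((u : ℕ), (w : ℕ)) ∈ B) := by
    intro B hB u w
    simp only [hΦ', Finset.mem_image]
    constructor
    · rintro ⟨⟨x, y⟩, hxy, heq⟩
      have hm := mem_EN.mp (hB hxy)
      have h1 : fn x = u := congrArg Prod.fst heq
      have h2 : fn y = w := congrArg Prod.snd heq
      have h1' : (u : ℕ) = x := by rw [← h1]; exact hfn x (by omega)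
      have h2' : (w : ℕ) = y := by rw [← h2]; exact hfn y (by omega)
      rw [h1', h2']
      exact hxy
    · intro h
      refine ⟨((u : ℕ), (w : ℕ)), h, ?_⟩
      have h1 : fn (u : ℕ) = u := Fin.ext (hfn _ u.isLt)
      have h2 : fn (w : ℕ) = w := Fin.ext (hfn _ w.isLt)
      rw [h1, h2]
  have hcorr : ∀ (A : Finset (Fin n × Fin n)), A ⊆ uigEdges n a → ∀ u w : Fin n,
      (RN n aN (Ψ A) (u : ℕ) (w : ℕ) ↔ orientRel n a A u w) := by
    intro A hA u w
    unfold RN orientRel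
    rw [hΨmem A u w, hΨmem A w u, hedge w u]
  have hcorr2 : ∀ (B : Finset (ℕ × ℕ)), B ⊆ EN n aN → ∀ u w : Fin n,
      (orientRel n a (Φ B) u w ↔ RN n aN B (u : ℕ) (w : ℕ)) := by
    intro B hB u w
    unfold RN orientRel
    rw [hΦmem B hB u w, hΦmem B hB w u, hedge w u]
  have hΦΨ : ∀ A : Finset (Fin n × Fin n), A ⊆ uigEdges n a → Φ (Ψ A) = A := by
    intro A hA
    simp only [hΨ', hΦ', Finset.image_image]
    rw [show A.image ((fun p : ℕ × ℕ => (fn p.1, fn p.2)) ∘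
        (fun p : Fin n × Fin n => ((p.1 : ℕ), (p.2 : ℕ)))) = A.image id from
      Finset.image_congr (fun p _ => by
        simp only [Function.comp_apply, id_eq]
        exact Prod.ext (Fin.ext (hfn _ p.1.isLt)) (Fin.ext (hfn _ p.2.isLt)))]
    exact Finset.image_id
  have hΨΦ : ∀ B : Finset (ℕ × ℕ), B ⊆ EN n aN → Ψ (Φ B) = B := by
    intro B hB
    simp only [hΨ', hΦ', Finset.image_image]
    rw [show B.image ((fun p : Fin n × Fin n => ((p.1 : ℕ), (p.2 : ℕ))) ∘
        (fun p : ℕ × ℕ => (fn p.1, fn p.2))) = B.image id from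
      Finset.image_congr (fun p hp => by
        have := mem_EN.mp (hB (show (p.1, p.2) ∈ B from hp))
        simp only [Function.comp_apply, id_eq]
        exact Prod.ext (hfn _ (by omega)) (hfn _ (by omega)))]
    exact Finset.image_id
  have hsum : ∑ A ∈ (uigEdges n a).powerset.filter
        (fun A => (∀ x : Fin n, ¬ Relation.TransGen (orientRel n a A) x x) ∧
          (∀ v : Fin n, (∀ u : Fin n, ¬ orientRel n a A v u) ↔ v = ⟨0, hn⟩)),
        (Polynomial.X : Polynomial ℚ) ^ A.card
      = ∑ B ∈ validN n aN, (Polynomial.X : Polynomial ℚ) ^ B.card := by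
    apply Finset.sum_nbij' Ψ Φ
    · intro A hA
      rw [Finset.mem_filter, Finset.mem_powerset] at hA
      obtain ⟨hAsub, hacF, hsinkF⟩ := hA
      have hΨs := hΨsub A hAsub
      rw [mem_validN]
      refine ⟨hΨs, ?_, ?_⟩
      · intro x hx
        apply hacF (fn x)
        refine Relation.TransGen.lift fn ?_ x x hx
        intro u w h
        have hlt := RN_lt hΨs h
        apply (hcorr A hAsub (fn u) (fn w)).mp
        rwa [hfn u hlt.1, hfn w hlt.2.1]
      · intro v hv
        have hiff := hsinkF ⟨v, hv⟩
        constructor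
        · intro h
          have : (⟨v, hv⟩ : Fin n) = ⟨0, hn⟩ := by
            apply hiff.mp
            intro u hor
            exact h (u : ℕ) ((hcorr A hAsub ⟨v, hv⟩ u).mpr hor)
          simpa using this
        · intro hv0
          intro u hru
          have hlt := RN_lt hΨs hru
          have : orientRel n a A ⟨v, hv⟩ ⟨u, hlt.2.1⟩ :=
            (hcorr A hAsub ⟨v, hv⟩ ⟨u, hlt.2.1⟩).mp hru
          exact (hiff.mpr (by simp [hv0])) ⟨u, hlt.2.1⟩ this
    · intro B hB
      rw [mem_validN] at hB
      obtain ⟨hBsub, hacB, hsinkB⟩ := hB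
      rw [Finset.mem_filter, Finset.mem_powerset]
      have hΦs : Φ B ⊆ uigEdges n a := by
        intro p hp
        obtain ⟨u, w⟩ := p
        have := (hΦmem B hBsub u w).mp hp
        rw [← hedge u w]
        exact hBsub this
      refine ⟨hΦs, ?_, ?_⟩
      · intro x hx
        apply hacB (x : ℕ)
        refine Relation.TransGen.lift (fun y : Fin n => (y : ℕ)) ?_ x x hx
        intro u w h
        exact (hcorr2 B hBsub u w).mp h
      · intro v
        have hiff := hsinkB (v : ℕ) v.isLt
        constructor
        · intro h
          have hv0 : (v : ℕ) = 0 := by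
            apply hiff.mp
            intro u hru
            have hlt := RN_lt hBsub hru
            exact h ⟨u, hlt.2.1⟩ ((hcorr2 B hBsub v ⟨u, hlt.2.1⟩).mpr hru)
          exact Fin.ext hv0
        · intro hv0 u hor
          have hru := (hcorr2 B hBsub v u).mp hor
          have : (v : ℕ) = 0 := by rw [hv0]
          exact (hiff.mpr this) (u : ℕ) hru
    · intro A hA
      rw [Finset.mem_filter, Finset.mem_powerset] at hA
      exact hΦΨ A hA.1
    · intro B hB
      rw [mem_validN] at hB
      exact hΨΦ B hB.1
    · intro A hA
      rw [Finset.mem_filter, Finset.mem_powerset] at hA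
      congr 1
      rw [hΨ', Finset.card_image_of_injective]
      intro p q hpq
      have h1 : (p.1 : ℕ) = (q.1 : ℕ) := congrArg Prod.fst hpq
      have h2 : (p.2 : ℕ) = (q.2 : ℕ) := congrArg Prod.snd hpq
      exact Prod.ext (Fin.ext h1) (Fin.ext h2)
  rw [hsum]
  have hcolN : ∀ j : ℕ, 0 < j → j < n → ∃ i, (i, j) ∈ EN n aN := by
    intro j hj hjn
    refine ⟨j - 1, mem_EN.mpr ⟨by omega, hjn, ?_⟩⟩
    have h1 : aN (j - 1) = a ⟨j - 1, by omega⟩ := by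
      simp only [haN, dif_pos (show j - 1 < n by omega)]
    have h2 := hconn ⟨j - 1, by omega⟩ (by simpa using (by omega : j - 1 + 1 < n))
    rw [h1]
    omega
  rw [mainN n hn aN hcolN]
  rw [prodB n aN]
  · -- final reindexing
    apply Finset.prod_nbij' (fun i : ℕ => fn i) (fun i : Fin n => (i : ℕ))
    · intro i hi
      rw [Finset.mem_range] at hi
      rw [Finset.mem_filter]
      refine ⟨Finset.mem_univ _, ?_⟩
      rw [hfn i (by omega)]
      omega
    · intro i hi
      rw [Finset.mem_filter] at hi
      rw [Finset.mem_range]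
      omega
    · intro i hi
      rw [Finset.mem_range] at hi
      exact hfn i (by omega)
    · intro i hi
      exact Fin.ext (hfn (i : ℕ) i.isLt)
    · intro i hi
      rw [Finset.mem_range] at hi
      rw [qint]
      congr 1
      rw [show aN i = a (fn i) from by rw [← haNval (fn i), hfn i (by omega)]]
  · intro i hi
    have := harea₁ ⟨i, hi⟩
    simp only [Fin.val_mk] at this
    rw [show aN i = a ⟨i, hi⟩ from by simp only [haN, dif_pos hi]]
    omega
  · intro i hi
    have := harea₂ ⟨i, by omega⟩ ⟨i + 1, hi⟩ rfl
    rw [show aN i = a ⟨i, by omega⟩ from by simp only [haN, dif_pos (show i < n by omega)],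
      show aN (i + 1) = a ⟨i + 1, hi⟩ from by simp only [haN, dif_pos hi]]
    omega
  · intro i hi
    have := hconn ⟨i, by omega⟩ (by simpa using hi)
    rw [show aN i = a ⟨i, by omega⟩ from by simp only [haN, dif_pos (show i < n by omega)]]
    omega
end
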